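/- arXiv:1302.6150 — 10 statements merged into one kernel-verified Lean document; each statement's English description precedes it below -/
import Mathlib

section
/- Let s_k denote the number of involutions of Fin k (permutations σ with σ² = 1). Then, as formal power series over ℚ, the exponential generating function identity exp(X²/2 + X) = Σ_{k≥0} s_k · X^k/k! holds, where exp denotes the formal exponential (substitution of the power series X²/2 + X, which has zero constant term, into the formal exponential series Σ_n X^n/n!). -/
open Finset PowerSeries

/-- The formal substitution of a power series `g` (intended to have zero constant
term) into the formal exponential series `Σ_n Xⁿ/n!` : the `n`-th coefficient is
`Σ_{m=0}^{n} (coeff n of gᵐ)/m!`, which is the full substitution since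
`coeff n (gᵐ) = 0` for `m > n` when `g` has zero constant term. -/
noncomputable def expComp (g : PowerSeries ℚ) : PowerSeries ℚ :=
  PowerSeries.mk fun n =>
    ∑ m ∈ Finset.range (n + 1), (PowerSeries.coeff n (g ^ m)) / (m.factorial : ℚ)

open Equiv Equiv.Perm


private def invCount (k : ℕ) : ℕ :=
  (Finset.univ.filter fun σ : Equiv.Perm (Fin k) => σ ^ 2 = 1).card

private lemma sq_eq_one_iff' {α : Type*} (σ : Perm α) : σ ^ 2 = 1 ↔ ∀ x, σ (σ x) = x := by
  simp [Equiv.ext_iff, sq, Perm.mul_apply]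

private lemma IC_eq {α : Type*} [DecidableEq α] [Fintype α] :
    Fintype.card {σ : Perm α // σ ^ 2 = 1} = invCount (Fintype.card α) := by
  rw [invCount, ← Fintype.card_subtype]
  apply Fintype.card_congr
  refine (Fintype.equivFin α).permCongr.subtypeEquiv fun σ => ?_
  simp only [sq_eq_one_iff', Equiv.permCongr_apply]
  set e := Fintype.equivFin α
  constructor
  · intro h x
    simp [h (e.symm x)]
  · intro h x
    have := h (e x)
    simp only [Equiv.symm_apply_apply] at this
    exact e.injective this

private lemma swap_comm_of_invol {α : Type*} [DecidableEq α] {σ : Perm α} {x y : α}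
    (h : σ ^ 2 = 1) (hx : σ x = y) : Equiv.swap x y * σ = σ * Equiv.swap x y := by
  have hy : σ y = x := by rw [← hx]; exact (sq_eq_one_iff' σ).1 h x
  have key : σ * Equiv.swap x y * σ⁻¹ = Equiv.swap x y := by
    have h1 := (Equiv.swap_apply_apply σ x y).symm
    rw [hx, hy] at h1
    exact h1.trans (Equiv.swap_comm y x)
  calc Equiv.swap x y * σ = σ * Equiv.swap x y * σ⁻¹ * σ := by rw [key]
    _ = σ * Equiv.swap x y := by group

private lemma card_fiber_swap {α : Type*} [DecidableEq α] [Fintype α] (x y : α) :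
    Fintype.card {σ : Perm α // σ ^ 2 = 1 ∧ σ x = y} =
    Fintype.card {σ : Perm α // σ ^ 2 = 1 ∧ σ x = x ∧ σ y = y} := by
  apply Fintype.card_congr
  refine ⟨fun σ => ⟨Equiv.swap x y * σ.1, ?_⟩, fun τ => ⟨Equiv.swap x y * τ.1, ?_⟩, ?_, ?_⟩
  · obtain ⟨σ, h, hx⟩ := σ
    have hy : σ y = x := by rw [← hx]; exact (sq_eq_one_iff' σ).1 h x
    have hc := swap_comm_of_invol h hx
    refine ⟨?_, ?_, ?_⟩
    · calc (Equiv.swap x y * σ) ^ 2 = Equiv.swap x y * (σ * Equiv.swap x y) * σ := by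
            simp [sq, mul_assoc]
        _ = Equiv.swap x y * Equiv.swap x y * σ * σ := by rw [← hc]; group
        _ = 1 := by rw [Equiv.swap_mul_self]; simpa [sq] using h
    · simp [Perm.mul_apply, hx]
    · simp [Perm.mul_apply, hy]
  · obtain ⟨τ, h, hx, hy⟩ := τ
    have hc : Equiv.swap x y * τ = τ * Equiv.swap x y := by
      have := (Equiv.swap_apply_apply τ x y).symm
      rw [hx, hy] at this
      calc Equiv.swap x y * τ = τ * Equiv.swap x y * τ⁻¹ * τ := by rw [this]
        _ = τ * Equiv.swap x y := by group
    refine ⟨?_, ?_⟩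
    · calc (Equiv.swap x y * τ) ^ 2 = Equiv.swap x y * (τ * Equiv.swap x y) * τ := by
            simp [sq, mul_assoc]
        _ = Equiv.swap x y * Equiv.swap x y * τ * τ := by rw [← hc]; group
        _ = 1 := by rw [Equiv.swap_mul_self]; simpa [sq] using h
    · simp [Perm.mul_apply, hx, Equiv.swap_apply_left]
  · intro σ
    ext z
    simp [← mul_assoc, Perm.mul_apply]
  · intro τ
    ext z
    simp [← mul_assoc, Perm.mul_apply]

private lemma card_invol_fix {α : Type*} [DecidableEq α] [Fintype α] (x : α)
    (Q : Perm α → Prop) [DecidablePred Q] :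
    Fintype.card {σ : Perm α // σ ^ 2 = 1 ∧ σ x = x ∧ Q σ}
      = Fintype.card {f : Perm {b : α // b ≠ x} // f ^ 2 = 1 ∧ Q (ofSubtype f)} := by
  apply Fintype.card_congr
  have hres : ∀ (σ : Perm α), σ x = x → ∀ b : α, b ≠ x ↔ σ b ≠ x := by
    intro σ hx b
    constructor
    · intro hb hc
      exact hb (σ.injective (hc.trans hx.symm))
    · intro hb hc
      exact hb (hc ▸ hx)
  have hofsub : ∀ (σ : Perm α) (h2 : σ ^ 2 = 1) (hx : σ x = x),
      ofSubtype (σ.subtypePerm (p := fun b => b ≠ x) (fun b => (hres σ hx b).symm)) = σ := by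
    intro σ h2 hx
    refine ofSubtype_subtypePerm _ fun b hb => ?_
    intro hc; exact hb (by rw [hc, hx])
  refine ⟨fun σ => ⟨σ.1.subtypePerm (fun b => (hres σ.1 σ.2.2.1 b).symm), ?_, ?_⟩,
      fun f => ⟨ofSubtype f.1, ?_, ?_, ?_⟩, ?_, ?_⟩
  · have h2 := σ.2.1
    rw [subtypePerm_pow]
    ext b
    simp [Equiv.Perm.subtypePerm_apply, h2]
  · rw [hofsub σ.1 σ.2.1 σ.2.2.1]; exact σ.2.2.2
  · rw [← map_pow, f.2.1, map_one]
  · exact ofSubtype_apply_of_not_mem f.1 (by simp)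
  · exact f.2.2
  · intro σ
    exact Subtype.ext (hofsub σ.1 σ.2.1 σ.2.2.1)
  · intro f
    exact Subtype.ext (subtypePerm_ofSubtype f.1)

private lemma card_invol_fix' {α : Type*} [DecidableEq α] [Fintype α] (x : α) :
    Fintype.card {σ : Perm α // σ ^ 2 = 1 ∧ σ x = x} = invCount (Fintype.card α - 1) := by
  have h1 : Fintype.card {σ : Perm α // σ ^ 2 = 1 ∧ σ x = x}
      = Fintype.card {σ : Perm α // σ ^ 2 = 1 ∧ σ x = x ∧ (fun _ : Perm α => True) σ} :=
    Fintype.card_congr (Equiv.subtypeEquivRight (by simp))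
  rw [h1, card_invol_fix x (fun _ => True)]
  have h2 : Fintype.card {f : Perm {b : α // b ≠ x} // f ^ 2 = 1 ∧ True}
      = Fintype.card {f : Perm {b : α // b ≠ x} // f ^ 2 = 1} :=
    Fintype.card_congr (Equiv.subtypeEquivRight (by simp))
  rw [h2, IC_eq]
  congr 1
  rw [Fintype.card_subtype_compl, Fintype.card_subtype_eq]

private lemma card_fiber_ne {α : Type*} [DecidableEq α] [Fintype α] {x y : α} (hxy : y ≠ x) :
    Fintype.card {σ : Perm α // σ ^ 2 = 1 ∧ σ x = y} = invCount (Fintype.card α - 2) := by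
  rw [card_fiber_swap x y, card_invol_fix x (fun σ => σ y = y)]
  have h1 : Fintype.card {f : Perm {b : α // b ≠ x} // f ^ 2 = 1 ∧ ofSubtype f y = y}
      = Fintype.card {f : Perm {b : α // b ≠ x} // f ^ 2 = 1 ∧ f ⟨y, hxy⟩ = ⟨y, hxy⟩} := by
    apply Fintype.card_congr
    apply Equiv.subtypeEquivRight
    intro f
    rw [ofSubtype_apply_of_mem f hxy]
    constructor <;> intro h
    · exact And.intro h.1 (Subtype.ext h.2)
    · exact And.intro h.1 (by rw [h.2])
  rw [h1, card_invol_fix' (⟨y, hxy⟩ : {b : α // b ≠ x})]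
  congr 1
  rw [Fintype.card_subtype_compl, Fintype.card_subtype_eq]
  omega

private lemma invCount_rec (n : ℕ) :
    invCount (n + 2) = invCount (n + 1) + (n + 1) * invCount n := by
  classical
  have hfib : ∀ y : Fin (n + 2),
      ((Finset.univ.filter fun σ : Perm (Fin (n + 2)) => σ ^ 2 = 1).filter
        (fun σ => σ 0 = y)).card
      = Fintype.card {σ : Perm (Fin (n + 2)) // σ ^ 2 = 1 ∧ σ 0 = y} := by
    intro y
    rw [Finset.filter_filter, Fintype.card_subtype]
  have h0 : invCount (n + 2)
      = ∑ y : Fin (n + 2), Fintype.card {σ : Perm (Fin (n + 2)) // σ ^ 2 = 1 ∧ σ 0 = y} := by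
    rw [invCount, Finset.card_eq_sum_card_fiberwise
      (f := fun σ : Perm (Fin (n + 2)) => σ 0) (t := Finset.univ)
      (fun σ _ => Finset.mem_univ _)]
    exact Finset.sum_congr rfl fun y _ => hfib y
  rw [h0, ← Finset.sum_erase_add _ _ (Finset.mem_univ (0 : Fin (n + 2)))]
  have hfix : Fintype.card {σ : Perm (Fin (n + 2)) // σ ^ 2 = 1 ∧ σ 0 = 0}
      = invCount (n + 1) := by
    rw [card_invol_fix' (0 : Fin (n + 2))]
    congr 1
    simp
  have hne : ∀ y ∈ Finset.univ.erase (0 : Fin (n + 2)),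
      Fintype.card {σ : Perm (Fin (n + 2)) // σ ^ 2 = 1 ∧ σ 0 = y} = invCount n := by
    intro y hy
    rw [card_fiber_ne (Finset.mem_erase.1 hy).1]
    congr 1
    simp
  rw [Finset.sum_congr rfl hne, Finset.sum_const, hfix]
  simp [Finset.card_erase_of_mem, mul_comm]
  ring

open PowerSeries

private lemma invCount_zero : invCount 0 = 1 := by decide
private lemma invCount_one : invCount 1 = 1 := by decide

private noncomputable abbrev gg : PowerSeries ℚ :=
  PowerSeries.C (R := ℚ) (1 / 2) * PowerSeries.X ^ 2 + PowerSeries.X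

private lemma gg_const : constantCoeff gg = 0 := by
  simp [gg]

private lemma coeff_gg_pow_eq_zero {k m : ℕ} (h : k < m) :
    PowerSeries.coeff k (gg ^ m) = 0 := by
  have hdvd : (PowerSeries.X : ℚ⟦X⟧) ^ m ∣ gg ^ m :=
    pow_dvd_pow_of_dvd (PowerSeries.X_dvd_iff.2 gg_const) m
  exact (PowerSeries.X_pow_dvd_iff.1 hdvd) k h

private lemma deriv_gg : PowerSeries.derivative ℚ gg = 1 + PowerSeries.X := by
  rw [gg, map_add, PowerSeries.derivative_X, Derivation.leibniz]
  rw [Derivation.leibniz_pow, PowerSeries.derivative_X, PowerSeries.derivative_C]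
  ext n
  simp [smul_smul]
  rw [show ((2 : ℚ⟦X⟧) * PowerSeries.X) = (PowerSeries.C (R := ℚ) 2) * PowerSeries.X by
    rw [map_ofNat], PowerSeries.coeff_C_mul]
  ring

private lemma key_K (n m : ℕ) :
    PowerSeries.coeff (n + 2) (gg ^ (m + 1)) * ((n : ℚ) + 2)
      = ((m : ℚ) + 1) *
        (PowerSeries.coeff (n + 1) (gg ^ m) + PowerSeries.coeff n (gg ^ m)) := by
  have h := PowerSeries.coeff_derivative (gg ^ (m + 1)) (n + 1)
  have hD : PowerSeries.derivative ℚ (gg ^ (m + 1))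
      = (m + 1) • (gg ^ m • (1 + PowerSeries.X : ℚ⟦X⟧)) := by
    rw [Derivation.leibniz_pow, deriv_gg]
    norm_num
  rw [hD] at h
  rw [map_nsmul] at h
  have h2 : PowerSeries.coeff (n + 1) (gg ^ m • (1 + PowerSeries.X : ℚ⟦X⟧))
      = PowerSeries.coeff (n + 1) (gg ^ m) + PowerSeries.coeff n (gg ^ m) := by
    rw [smul_eq_mul, mul_add, mul_one, map_add, PowerSeries.coeff_succ_mul_X]
  rw [h2, nsmul_eq_mul] at h
  push_cast at h ⊢
  linarith [h]

private lemma coeff_expComp (g : PowerSeries ℚ) (n : ℕ) :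
    PowerSeries.coeff n (expComp g)
      = ∑ m ∈ Finset.range (n + 1), (PowerSeries.coeff n (g ^ m)) / (m.factorial : ℚ) := by
  rw [expComp, PowerSeries.coeff_mk]

private lemma bb_rec (n : ℕ) :
    PowerSeries.coeff (n + 2) (expComp gg) * ((n : ℚ) + 2)
      = PowerSeries.coeff (n + 1) (expComp gg) + PowerSeries.coeff n (expComp gg) := by
  rw [coeff_expComp, coeff_expComp, coeff_expComp]
  rw [Finset.sum_range_succ' (fun m => PowerSeries.coeff (n + 2) (gg ^ m) / (m.factorial : ℚ))]
  have h0 : PowerSeries.coeff (n + 2) (gg ^ 0) / ((Nat.factorial 0 : ℕ) : ℚ) = 0 := by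
    simp [PowerSeries.coeff_one]
  rw [h0, add_zero, Finset.sum_mul]
  have hterm : ∀ m : ℕ,
      PowerSeries.coeff (n + 2) (gg ^ (m + 1)) / ((m + 1).factorial : ℚ) * ((n : ℚ) + 2)
        = PowerSeries.coeff (n + 1) (gg ^ m) / (m.factorial : ℚ)
          + PowerSeries.coeff n (gg ^ m) / (m.factorial : ℚ) := by
    intro m
    have hfac : (((m + 1).factorial : ℕ) : ℚ) = ((m : ℚ) + 1) * (m.factorial : ℚ) := by
      rw [Nat.factorial_succ]; push_cast; ring
    have hK := key_K n m
    have hm0 : ((m : ℚ) + 1) ≠ 0 := by positivity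
    rw [← add_div]
    calc PowerSeries.coeff (n + 2) (gg ^ (m + 1)) / ((m + 1).factorial : ℚ) * ((n : ℚ) + 2)
        = PowerSeries.coeff (n + 2) (gg ^ (m + 1)) * ((n : ℚ) + 2)
            / ((m + 1).factorial : ℚ) := by ring
      _ = ((m : ℚ) + 1) * (PowerSeries.coeff (n + 1) (gg ^ m) + PowerSeries.coeff n (gg ^ m))
            / (((m : ℚ) + 1) * (m.factorial : ℚ)) := by rw [hK, hfac]
      _ = (PowerSeries.coeff (n + 1) (gg ^ m) + PowerSeries.coeff n (gg ^ m))
            / (m.factorial : ℚ) := mul_div_mul_left _ _ hm0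
  rw [Finset.sum_congr rfl fun m _ => hterm m]
  rw [Finset.sum_add_distrib]
  congr 1
  rw [Finset.sum_range_succ, coeff_gg_pow_eq_zero (Nat.lt_succ_self n)]
  simp

private lemma bb_zero : PowerSeries.coeff 0 (expComp gg) = 1 := by
  rw [coeff_expComp]
  simp

private lemma bb_one : PowerSeries.coeff 1 (expComp gg) = 1 := by
  rw [coeff_expComp]
  rw [Finset.sum_range_succ, Finset.sum_range_one]
  simp [gg, PowerSeries.coeff_one, PowerSeries.coeff_X_pow]

private lemma main_key : ∀ k : ℕ,
    PowerSeries.coeff k (expComp gg) = (invCount k : ℚ) / (k.factorial : ℚ) := by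
  intro k
  induction k using Nat.twoStepInduction with
  | zero => simp [bb_zero, invCount_zero]
  | one => simp [bb_one, invCount_one]
  | more n ih1 ih2 =>
    have hrec := bb_rec n
    rw [ih1, ih2] at hrec
    have hs := invCount_rec n
    have hn2 : ((n : ℚ) + 2) ≠ 0 := by positivity
    have hfn : (n.factorial : ℚ) ≠ 0 := by
      exact_mod_cast Nat.factorial_ne_zero n
    have hfn1 : ((n + 1).factorial : ℚ) ≠ 0 := by
      exact_mod_cast Nat.factorial_ne_zero (n + 1)
    apply mul_right_cancel₀ hn2
    rw [hrec, hs]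
    have e1 : (((n + 2).factorial : ℕ) : ℚ) = ((n : ℚ) + 2) * ((n + 1).factorial : ℚ) := by
      rw [Nat.factorial_succ (n + 1)]; push_cast; ring
    have e2 : (((n + 1).factorial : ℕ) : ℚ) = ((n : ℚ) + 1) * (n.factorial : ℚ) := by
      rw [Nat.factorial_succ n]; push_cast; ring
    push_cast
    rw [e1, e2]
    field_simp


/-- The exponential generating function identity
`exp(X²/2 + X) = Σ_{k≥0} s_k · X^k/k!`, where `s_k` is the number of involutions
of `Fin k`. -/
theorem involution_egf :
    PowerSeries.constantCoeff (R := ℚ)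
        (PowerSeries.C (R := ℚ) (1 / 2) * PowerSeries.X ^ 2 + PowerSeries.X) = 0 ∧
    expComp (PowerSeries.C (R := ℚ) (1 / 2) * PowerSeries.X ^ 2 + PowerSeries.X)
      = PowerSeries.mk (fun k =>
          ((Finset.univ.filter fun σ : Equiv.Perm (Fin k) => σ ^ 2 = 1).card : ℚ)
            / (k.factorial : ℚ)) := by
  constructor
  · exact gg_const
  · apply PowerSeries.ext
    intro k
    rw [PowerSeries.coeff_mk]
    have h := main_key k
    unfold invCount at h
    exact h
end

section
/- For all permutations w, x of Fin k and every involution t of Fin k (t² = 1), the Saxl sign satisfies the cocycle identity S(x·w, t) = S(x, w·t·w⁻¹) · S(w, t). -/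
open Finset

/-- The Saxl sign `S(w,t)`: `(-1)` raised to the number of pairs `i < j` with
`t i = i`, `t j = j` and `w i > w j`. -/
def saxlSign {k : ℕ} (w t : Equiv.Perm (Fin k)) : ℤ :=
  (-1) ^ (Finset.univ.filter (fun p : Fin k × Fin k =>
      p.1 < p.2 ∧ t p.1 = p.1 ∧ t p.2 = p.2 ∧ w p.2 < w p.1)).card

namespace SaxlAux

open Equiv Equiv.Perm

variable {k m : ℕ}

/-- The permutation of `Fin m` induced by `w` mapping `A` onto `B`, via the order
isomorphisms `e : Fin m ≃o A` and `f : Fin m ≃o B`. -/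
def permRes (w : Perm (Fin k)) {A B : Finset (Fin k)}
    (e : Fin m ≃o {x // x ∈ A}) (f : Fin m ≃o {x // x ∈ B})
    (h : ∀ i, i ∈ A ↔ w i ∈ B) : Perm (Fin m) where
  toFun a := f.symm ⟨w (e a), (h _).1 (e a).2⟩
  invFun b := e.symm ⟨w⁻¹ ((f b : Fin k)), (h _).2 (by simpa using (f b).2)⟩
  left_inv a := by simp
  right_inv b := by simp

lemma permRes_mul (w x : Perm (Fin k)) {A B C : Finset (Fin k)}
    (e : Fin m ≃o {x // x ∈ A}) (f : Fin m ≃o {x // x ∈ B})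
    (g : Fin m ≃o {x // x ∈ C})
    (h1 : ∀ i, i ∈ A ↔ w i ∈ B) (h2 : ∀ i, i ∈ B ↔ x i ∈ C) :
    permRes x f g h2 * permRes w e f h1
      = permRes (x * w) e g (fun i => (h1 i).trans (h2 _)) := by
  ext a
  simp [permRes, Equiv.Perm.mul_apply]

lemma signAux_eq (σ : Perm (Fin m)) :
    ((Equiv.Perm.signAux σ : ℤˣ) : ℤ)
      = (-1) ^ (univ.filter (fun p : Fin m × Fin m =>
          p.1 < p.2 ∧ σ p.2 < σ p.1)).card := by
  unfold Equiv.Perm.signAux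
  rw [Units.coe_prod]
  have : ∀ x : Σ _ : Fin m, Fin m,
      ((if σ x.1 ≤ σ x.2 then (-1 : ℤˣ) else 1 : ℤˣ) : ℤ)
        = if σ x.1 ≤ σ x.2 then (-1 : ℤ) else 1 := by
    intro x; split <;> simp
  rw [Finset.prod_congr rfl (fun x _ => this x), Finset.prod_ite, Finset.prod_const,
    Finset.prod_const, one_pow, mul_one]
  congr 1
  refine Finset.card_bij (fun x _ => ((x.2, x.1) : Fin m × Fin m)) ?_ ?_ ?_
  · rintro ⟨a, b⟩ hx
    rw [Finset.mem_filter] at hx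
    obtain ⟨hmem, hle⟩ := hx
    have hba : b < a := Equiv.Perm.mem_finPairsLT.1 hmem
    simp only [Finset.mem_filter, Finset.mem_univ, true_and]
    exact ⟨hba, lt_of_le_of_ne hle (fun hc => hba.ne (σ.injective hc).symm)⟩
  · rintro ⟨a, b⟩ _ ⟨c, d⟩ _ hEq
    simp only [Prod.mk.injEq] at hEq
    obtain ⟨h1, h2⟩ := hEq
    subst h1; subst h2; rfl
  · rintro ⟨a, b⟩ hp
    rw [Finset.mem_filter] at hp
    obtain ⟨-, hab, hσ⟩ := hp
    exact ⟨⟨b, a⟩, Finset.mem_filter.2 ⟨Equiv.Perm.mem_finPairsLT.2 hab, hσ.le⟩, rfl⟩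

lemma count_eq (w : Perm (Fin k)) {A B : Finset (Fin k)}
    (e : Fin m ≃o {x // x ∈ A}) (f : Fin m ≃o {x // x ∈ B})
    (h : ∀ i, i ∈ A ↔ w i ∈ B) :
    (univ.filter (fun p : Fin k × Fin k =>
        p.1 < p.2 ∧ p.1 ∈ A ∧ p.2 ∈ A ∧ w p.2 < w p.1)).card
      = (univ.filter (fun p : Fin m × Fin m =>
          p.1 < p.2 ∧ (permRes w e f h) p.2 < (permRes w e f h) p.1)).card := by
  symm
  refine Finset.card_bij (fun p _ => (((e p.1 : Fin k), (e p.2 : Fin k)) : Fin k × Fin k))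
    ?_ ?_ ?_
  · rintro ⟨a, b⟩ hp
    rw [Finset.mem_filter] at hp
    obtain ⟨-, hab, hinv⟩ := hp
    have h1 : (e a : Fin k) < (e b : Fin k) := Subtype.coe_lt_coe.2 (e.strictMono hab)
    have h2 : w (e b) < w (e a) := by
      simp only [permRes, Equiv.coe_fn_mk] at hinv
      rwa [f.symm.lt_iff_lt, Subtype.mk_lt_mk] at hinv
    exact Finset.mem_filter.2 ⟨Finset.mem_univ _, h1, (e a).2, (e b).2, h2⟩
  · rintro ⟨a, b⟩ _ ⟨c, d⟩ _ hEq
    simp only [Prod.mk.injEq, Subtype.coe_inj] at hEq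
    obtain ⟨h1, h2⟩ := hEq
    simp [e.injective h1, e.injective h2]
  · rintro ⟨a, b⟩ hp
    rw [Finset.mem_filter] at hp
    obtain ⟨-, hab, haA, hbA, hw⟩ := hp
    refine ⟨(e.symm ⟨a, haA⟩, e.symm ⟨b, hbA⟩), ?_, by simp⟩
    rw [Finset.mem_filter]
    refine ⟨Finset.mem_univ _, e.symm.strictMono (Subtype.mk_lt_mk.2 hab), ?_⟩
    show permRes w e f h (e.symm ⟨b, hbA⟩) < permRes w e f h (e.symm ⟨a, haA⟩)
    simp only [permRes, Equiv.coe_fn_mk, OrderIso.apply_symm_apply]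
    exact f.symm.strictMono (Subtype.mk_lt_mk.2 hw)

end SaxlAux

/-- The cocycle identity for the Saxl sign:
`S(x·w, t) = S(x, w·t·w⁻¹) · S(w, t)` for any involution `t`. -/
theorem saxlSign_cocycle {k : ℕ} (w x t : Equiv.Perm (Fin k)) (ht : t ^ 2 = 1) :
    saxlSign (x * w) t = saxlSign x (w * t * w⁻¹) * saxlSign w t := by
  classical
  set A : Finset (Fin k) := univ.filter (fun i => t i = i) with hA
  set B : Finset (Fin k) := univ.filter (fun i => (w * t * w⁻¹) i = i) with hB
  set C : Finset (Fin k) := univ.filter (fun i => ((x * w) * t * (x * w)⁻¹) i = i) with hC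
  have h1 : ∀ i, i ∈ A ↔ w i ∈ B := by
    intro i
    rw [hA, hB, Finset.mem_filter, Finset.mem_filter]
    simp [Equiv.Perm.mul_apply]
  have h2 : ∀ i, i ∈ B ↔ x i ∈ C := by
    intro i
    rw [hB, hC, Finset.mem_filter, Finset.mem_filter]
    simp [Equiv.Perm.mul_apply, mul_inv_rev]
  have h3 : ∀ i, i ∈ A ↔ (x * w) i ∈ C := fun i => (h1 i).trans (h2 _)
  have hBc : B.card = A.card := (Finset.card_equiv (w : Fin k ≃ Fin k) h1).symm
  have hCc : C.card = A.card :=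
    ((Finset.card_equiv (w : Fin k ≃ Fin k) h1).trans
      (Finset.card_equiv (x : Fin k ≃ Fin k) h2)).symm
  set e := A.orderIsoOfFin rfl with he
  set f := B.orderIsoOfFin hBc with hf
  set g := C.orderIsoOfFin hCc with hg
  have key : ((Equiv.Perm.signAux (SaxlAux.permRes (x * w) e g h3) : ℤˣ) : ℤ)
      = ((Equiv.Perm.signAux (SaxlAux.permRes x f g h2) : ℤˣ) : ℤ)
        * ((Equiv.Perm.signAux (SaxlAux.permRes w e f h1) : ℤˣ) : ℤ) := by
    rw [← Units.val_mul, ← Equiv.Perm.signAux_mul,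
      SaxlAux.permRes_mul w x e f g h1 h2]
  rw [SaxlAux.signAux_eq, SaxlAux.signAux_eq, SaxlAux.signAux_eq,
    ← SaxlAux.count_eq (x * w) e g h3, ← SaxlAux.count_eq x f g h2,
    ← SaxlAux.count_eq w e f h1] at key
  have hfa : ∀ (u v : Equiv.Perm (Fin k)) (D : Finset (Fin k)),
      D = univ.filter (fun i => v i = i) →
      saxlSign u v = (-1 : ℤ) ^ (univ.filter (fun p : Fin k × Fin k =>
        p.1 < p.2 ∧ p.1 ∈ D ∧ p.2 ∈ D ∧ u p.2 < u p.1)).card := by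
    intro u v D hD
    unfold saxlSign
    congr 1
    refine congrArg Finset.card (Finset.filter_congr ?_)
    intro p _
    subst hD
    simp
  rw [hfa (x * w) t A hA, hfa x (w * t * w⁻¹) B hB, hfa w t A hA]
  exact key
end

section
/- Fix k and f, and let I^f be the set of involutions of Fin k with exactly f fixed points. Conjugation preserves I^f, and the linear maps ρ(w) on the free ℂ-module with basis I^f (finitely supported functions I^f → ℂ) defined on basis elements by ρ(w)(t) = S(w,t) • (w·t·w⁻¹) satisfy ρ(1) = id and ρ(x·w) = ρ(x) ∘ ρ(w) for all permutations x, w of Fin k; that is, signed conjugation defines a linear representation of the symmetric group on Fin k on ℂ-span of I^f. -/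
open Finset

/-- The set `I^f` of involutions of `Fin k` with exactly `f` fixed points. -/
def invf (k f : ℕ) : Finset (Equiv.Perm (Fin k)) :=
  Finset.univ.filter fun t =>
    t ^ 2 = 1 ∧ (Finset.univ.filter fun i => t i = i).card = f

/-- Signed conjugation: the linear endomorphism of the free ℂ-module on `I^f`
sending the basis element `t` to `S(w,t) • (w·t·w⁻¹)` (and to `0` in the
vacuous case that the conjugate were to leave `I^f`, which never happens). -/
noncomputable def rho (k f : ℕ) (w : Equiv.Perm (Fin k)) :
    ((invf k f) →₀ ℂ) →ₗ[ℂ] ((invf k f) →₀ ℂ) :=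
  Finsupp.lift ((invf k f) →₀ ℂ) ℂ (invf k f) fun t =>
    if h : (w * t.1 * w⁻¹) ∈ invf k f then
      (saxlSign w t.1 : ℂ) • Finsupp.single (⟨w * t.1 * w⁻¹, h⟩ : invf k f) 1
    else 0

lemma conj_mem_invf {k f : ℕ} (w t : Equiv.Perm (Fin k)) (ht : t ∈ invf k f) :
    w * t * w⁻¹ ∈ invf k f := by
  simp only [invf, Finset.mem_filter, Finset.mem_univ, true_and] at ht ⊢
  obtain ⟨h1, h2⟩ := ht
  constructor
  · have h : (w * t * w⁻¹) ^ 2 = w * t ^ 2 * w⁻¹ := by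
      simp [sq, mul_assoc]
    rw [h, h1, mul_one, mul_inv_cancel]
  · rw [← h2]
    apply Finset.card_nbij' (fun i => w⁻¹ i) (fun i => w i)
    · intro a ha
      rw [Finset.mem_coe, Finset.mem_filter] at ha ⊢
      simp only [Finset.mem_coe, Finset.mem_filter, Finset.mem_univ, true_and,
        Equiv.Perm.mul_apply] at ha ⊢
      apply Equiv.injective w
      simpa using ha
    · intro a ha
      rw [Finset.mem_coe, Finset.mem_filter] at ha ⊢
      simp only [Finset.mem_coe, Finset.mem_filter, Finset.mem_univ, true_and,
        Equiv.Perm.mul_apply] at ha ⊢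
      simp [ha]
    · intro a _; simp
    · intro a _; simp

lemma saxl_neg_one_pow_congr (m n : ℕ) (h : (m : ZMod 2) = (n : ZMod 2)) :
    ((-1 : ℤ)) ^ m = (-1) ^ n := by
  rw [neg_one_pow_eq_pow_mod_two, neg_one_pow_eq_pow_mod_two (n := n)]
  congr 1
  exact (ZMod.natCast_eq_natCast_iff m n 2).mp h

lemma saxl_cocycle {k : ℕ} (x w t : Equiv.Perm (Fin k)) :
    saxlSign (x * w) t = saxlSign x (w * t * w⁻¹) * saxlSign w t := by
  classical
  unfold saxlSign
  rw [← pow_add]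
  set t' := w * t * w⁻¹ with ht'
  apply saxl_neg_one_pow_congr
  set S : Finset (Fin k × Fin k) :=
    Finset.univ.filter (fun p => p.1 < p.2 ∧ t p.1 = p.1 ∧ t p.2 = p.2) with hS
  set S' : Finset (Fin k × Fin k) :=
    Finset.univ.filter (fun p => p.1 < p.2 ∧ t' p.1 = p.1 ∧ t' p.2 = p.2) with hS'
  have hB : (Finset.univ.filter (fun p : Fin k × Fin k =>
      p.1 < p.2 ∧ t p.1 = p.1 ∧ t p.2 = p.2 ∧ (x*w) p.2 < (x*w) p.1))
      = S.filter (fun p => (x*w) p.2 < (x*w) p.1) := by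
    simp only [hS, Finset.filter_filter]; apply Finset.filter_congr; intros; tauto
  have hA : (Finset.univ.filter (fun p : Fin k × Fin k =>
      p.1 < p.2 ∧ t p.1 = p.1 ∧ t p.2 = p.2 ∧ w p.2 < w p.1))
      = S.filter (fun p => w p.2 < w p.1) := by
    simp only [hS, Finset.filter_filter]; apply Finset.filter_congr; intros; tauto
  have hC : (Finset.univ.filter (fun p : Fin k × Fin k =>
      p.1 < p.2 ∧ t' p.1 = p.1 ∧ t' p.2 = p.2 ∧ x p.2 < x p.1))
      = S'.filter (fun p => x p.2 < x p.1) := by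
    simp only [hS', Finset.filter_filter]; apply Finset.filter_congr; intros; tauto
  rw [Nat.cast_add, hB, hA, hC]
  set σ : Fin k × Fin k → Fin k × Fin k :=
    fun p => if w p.1 < w p.2 then (w p.1, w p.2) else (w p.2, w p.1) with hσ
  set τ : Fin k × Fin k → Fin k × Fin k :=
    fun q => if w⁻¹ q.1 < w⁻¹ q.2 then (w⁻¹ q.1, w⁻¹ q.2) else (w⁻¹ q.2, w⁻¹ q.1) with hτ
  have hfix : ∀ i, t' (w i) = w i ↔ t i = i := by
    intro i
    simp only [ht', Equiv.Perm.mul_apply, Equiv.Perm.coe_inv, Equiv.symm_apply_apply]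
    exact ⟨fun h => Equiv.injective w h, fun h => by rw [h]⟩
  have hσmem : ∀ p ∈ S, σ p ∈ S' := by
    intro p hp
    simp only [hS, Finset.mem_filter, Finset.mem_univ, true_and] at hp
    obtain ⟨hlt, h1, h2⟩ := hp
    have hne : w p.1 ≠ w p.2 := fun h => absurd (Equiv.injective w h) (ne_of_lt hlt)
    simp only [hσ, hS', Finset.mem_filter, Finset.mem_univ, true_and]
    by_cases h : w p.1 < w p.2
    · rw [if_pos h]
      exact ⟨h, (hfix p.1).mpr h1, (hfix p.2).mpr h2⟩
    · rw [if_neg h]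
      exact ⟨lt_of_le_of_ne (not_lt.mp h) (Ne.symm hne), (hfix p.2).mpr h2, (hfix p.1).mpr h1⟩
  have hfix' : ∀ i, t (w⁻¹ i) = w⁻¹ i ↔ t' i = i := by
    intro i; rw [← hfix (w⁻¹ i)]; simp
  have hτmem : ∀ q ∈ S', τ q ∈ S := by
    intro q hq
    simp only [hS', Finset.mem_filter, Finset.mem_univ, true_and] at hq
    obtain ⟨hlt, h1, h2⟩ := hq
    have hne : w⁻¹ q.1 ≠ w⁻¹ q.2 := fun h => absurd (Equiv.injective w⁻¹ h) (ne_of_lt hlt)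
    simp only [hτ, hS, Finset.mem_filter, Finset.mem_univ, true_and]
    by_cases h : w⁻¹ q.1 < w⁻¹ q.2
    · rw [if_pos h]
      exact ⟨h, (hfix' q.1).mpr h1, (hfix' q.2).mpr h2⟩
    · rw [if_neg h]
      exact ⟨lt_of_le_of_ne (not_lt.mp h) (Ne.symm hne), (hfix' q.2).mpr h2, (hfix' q.1).mpr h1⟩
  have hτσ : ∀ p ∈ S, τ (σ p) = p := by
    intro p hp
    simp only [hS, Finset.mem_filter, Finset.mem_univ, true_and] at hp
    obtain ⟨hlt, -, -⟩ := hp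
    simp only [hσ, hτ]
    by_cases h : w p.1 < w p.2 <;> simp [h, hlt, not_lt.mpr (le_of_lt hlt)]
  have hστ : ∀ q ∈ S', σ (τ q) = q := by
    intro q hq
    simp only [hS', Finset.mem_filter, Finset.mem_univ, true_and] at hq
    obtain ⟨hlt, -, -⟩ := hq
    simp only [hσ, hτ]
    by_cases h : w⁻¹ q.1 < w⁻¹ q.2 <;> simp only [Equiv.Perm.coe_inv] at h <;> simp [h, hlt, not_lt.mpr (le_of_lt hlt)]
  rw [Finset.card_filter, Finset.card_filter, Finset.card_filter]
  push_cast
  have hCsum : (∑ q ∈ S', if x q.2 < x q.1 then (1 : ZMod 2) else 0)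
      = ∑ p ∈ S, (if x (σ p).2 < x (σ p).1 then (1 : ZMod 2) else 0) := by
    apply Finset.sum_nbij' τ σ hτmem hσmem hστ hτσ
    intro q hq
    rw [hστ q hq]
  rw [hCsum, ← Finset.sum_add_distrib]
  apply Finset.sum_congr rfl
  intro p hp
  simp only [hS, Finset.mem_filter, Finset.mem_univ, true_and] at hp
  obtain ⟨hlt, -, -⟩ := hp
  have hne : w p.1 ≠ w p.2 := fun h => absurd (Equiv.injective w h) (ne_of_lt hlt)
  have hxne : x (w p.1) ≠ x (w p.2) := fun h => hne (Equiv.injective x h)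
  show ((if x (w p.2) < x (w p.1) then 1 else 0 : ℕ) : ZMod 2) = _
  rw [Nat.cast_ite, Nat.cast_one, Nat.cast_zero]
  simp only [Equiv.Perm.mul_apply, Function.comp_apply, hσ]
  by_cases h : w p.1 < w p.2
  · rw [if_pos h]
    simp [not_lt.mpr (le_of_lt h)]
  · have h' : w p.2 < w p.1 := lt_of_le_of_ne (not_lt.mp h) (Ne.symm hne)
    rw [if_neg h, if_pos h']
    by_cases hx : x (w p.2) < x (w p.1)
    · rw [if_pos hx, if_neg (not_lt.mpr (le_of_lt hx))]
      decide
    · have hx' : x (w p.1) < x (w p.2) := lt_of_le_of_ne (not_lt.mp hx) hxne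
      rw [if_neg hx, if_pos hx']
      decide

lemma saxlSign_one {k : ℕ} (t : Equiv.Perm (Fin k)) : saxlSign 1 t = 1 := by
  unfold saxlSign
  convert pow_zero (-1 : ℤ)
  rw [Finset.card_eq_zero, Finset.filter_eq_empty_iff]
  rintro p -
  simp only [Equiv.Perm.one_apply]
  rintro ⟨h1, -, -, h4⟩
  exact absurd h4 (asymm h1)

lemma rho_single {k f : ℕ} (w : Equiv.Perm (Fin k)) (t : invf k f) :
    rho k f w (Finsupp.single t 1)
      = (saxlSign w t.1 : ℂ) •
        Finsupp.single (⟨w * t.1 * w⁻¹, conj_mem_invf w t.1 t.2⟩ : invf k f) 1 := by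
  rw [rho, Finsupp.lift_apply, Finsupp.sum_single_index (by simp), one_smul,
    dif_pos (conj_mem_invf w t.1 t.2)]

/-- Conjugation preserves `I^f`, and signed conjugation defines a linear
representation of the symmetric group on `Fin k` on the ℂ-span of `I^f`. -/
theorem saxl_model_is_representation (k f : ℕ) :
    (∀ w t : Equiv.Perm (Fin k), t ∈ invf k f → w * t * w⁻¹ ∈ invf k f) ∧
    rho k f 1 = LinearMap.id ∧
    (∀ x w : Equiv.Perm (Fin k), rho k f (x * w) = (rho k f x) ∘ₗ (rho k f w)) := by
  refine ⟨fun w t ht => conj_mem_invf w t ht, ?_, ?_⟩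
  · apply Finsupp.lhom_ext
    intro a b
    have hb : (Finsupp.single a b : invf k f →₀ ℂ) = b • Finsupp.single a 1 := by
      rw [Finsupp.smul_single, smul_eq_mul, mul_one]
    rw [hb, map_smul, map_smul, LinearMap.id_apply, rho_single, saxlSign_one]
    have ha : (⟨1 * a.1 * 1⁻¹, conj_mem_invf 1 a.1 a.2⟩ : invf k f) = a :=
      Subtype.ext (by group)
    rw [ha]
    norm_num
  · intro x w
    apply Finsupp.lhom_ext
    intro a b
    have hb : (Finsupp.single a b : invf k f →₀ ℂ) = b • Finsupp.single a 1 := by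
      rw [Finsupp.smul_single, smul_eq_mul, mul_one]
    rw [hb, map_smul, map_smul]
    congr 1
    rw [LinearMap.comp_apply, rho_single, rho_single, map_smul, rho_single]
    rw [smul_smul, saxl_cocycle]
    push_cast
    rw [mul_comm ((saxlSign x (w * a.1 * w⁻¹) : ℂ)) _]
    congr 1
end

section
/- Let t be an involution of Fin k (t² = 1) and let C(t) = {c : c·t·c⁻¹ = t} be its centralizer in the symmetric group on Fin k. If a permutation w has minimal inversion number among all elements of the coset w·C(t), i.e. inv(w) ≤ inv(w·c) for every c ∈ C(t), then w preserves the relative order of the fixed points of t: for all i < j with t(i) = i and t(j) = j one has w(i) < w(j). -/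
open Finset

/-- The inversion number of a permutation of `Fin k`: the number of pairs
`i < j` with `w i > w j`. -/
def invNum {k : ℕ} (w : Equiv.Perm (Fin k)) : ℕ :=
  (Finset.univ.filter (fun p : Fin k × Fin k => p.1 < p.2 ∧ w p.2 < w p.1)).card

/-- If `w` has minimal inversion number in its coset `w·C(t)` of the centralizer
of an involution `t`, then `w` preserves the relative order of the fixed points
of `t`. -/
theorem minimal_coset_rep_preserves_fixed_point_order {k : ℕ}
    (t w : Equiv.Perm (Fin k)) (ht : t ^ 2 = 1)
    (hmin : ∀ c : Equiv.Perm (Fin k), c * t * c⁻¹ = t → invNum w ≤ invNum (w * c)) :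
    ∀ i j : Fin k, i < j → t i = i → t j = j → w i < w j := by
  intro i j hij hti htj
  by_contra hcon
  push_neg at hcon
  have hwji : w j < w i := hcon.lt_of_ne (fun h => hij.ne' (w.injective h))
  set s := Equiv.swap i j with hs
  have htt : ∀ x, t (t x) = x := by
    intro x
    have : (t ^ 2) x = x := by rw [ht]; rfl
    simpa [pow_two, Equiv.Perm.mul_apply] using this
  have hcent : s * t * s⁻¹ = t := by
    have hst : s * t = t * s := by
      ext x
      simp only [Equiv.Perm.mul_apply]
      rcases eq_or_ne x i with rfl | hxi
      · rw [hs, Equiv.swap_apply_left, hti, htj, Equiv.swap_apply_left]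
      rcases eq_or_ne x j with rfl | hxj
      · rw [hs, Equiv.swap_apply_right, htj, hti, Equiv.swap_apply_right]
      · have h1 : t x ≠ i := fun h => hxi (t.injective (h.trans hti.symm))
        have h2 : t x ≠ j := fun h => hxj (t.injective (h.trans htj.symm))
        rw [hs, Equiv.swap_apply_of_ne_of_ne hxi hxj,
          Equiv.swap_apply_of_ne_of_ne h1 h2]
    rw [hst, mul_inv_cancel_right]
  have hmem : (i, j) ∈ Finset.univ.filter
      (fun p : Fin k × Fin k => p.1 < p.2 ∧ w p.2 < w p.1) := by
    simp only [mem_filter, mem_univ, true_and]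
    exact ⟨hij, hwji⟩
  have hkey : invNum (w * s) < invNum w := by
    unfold invNum
    refine lt_of_le_of_lt (b := ((Finset.univ.filter
        (fun p : Fin k × Fin k => p.1 < p.2 ∧ w p.2 < w p.1)).erase (i, j)).card)
      ?_ (Finset.card_erase_lt_of_mem hmem)
    apply Finset.card_le_card_of_injOn
      (fun p : Fin k × Fin k => if s p.1 < s p.2 then (s p.1, s p.2) else p)
    · rintro ⟨a, b⟩ hp
      replace hp : (a, b) ∈ Finset.univ.filter (fun p : Fin k × Fin k => p.1 < p.2 ∧ (w * s) p.2 < (w * s) p.1) := hp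
      rw [Finset.mem_filter] at hp
      simp only [Finset.mem_filter, Finset.mem_univ, true_and, Equiv.Perm.mul_apply] at hp
      obtain ⟨hab, hw⟩ := hp
      rw [Finset.mem_coe, Finset.mem_erase, mem_filter]
      by_cases hsw : s a < s b
      · simp only [if_pos hsw]
        refine ⟨?_, mem_univ _, hsw, hw⟩
        intro h
        rw [Prod.mk.injEq] at h
        have ha : a = j := by
          have := congrArg s h.1
          rwa [hs, Equiv.swap_apply_self, Equiv.swap_apply_left] at this
        have hb : b = i := by
          have := congrArg s h.2
          rwa [hs, Equiv.swap_apply_self, Equiv.swap_apply_right] at this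
        rw [ha, hb] at hab
        exact absurd hij (asymm hab)
      · simp only [if_neg hsw]
        rcases eq_or_ne a i with rfl | hai
        · rcases eq_or_ne b j with rfl | hbj
          · rw [hs, Equiv.swap_apply_left, Equiv.swap_apply_right] at hw
            exact absurd hw (asymm hwji)
          · have hbi : b ≠ a := hab.ne'
            rw [hs, Equiv.swap_apply_left, Equiv.swap_apply_of_ne_of_ne hbi hbj] at hw
            refine ⟨?_, mem_univ _, hab, lt_trans hw hwji⟩
            intro h
            rw [Prod.mk.injEq] at h
            exact hbj h.2
        · rcases eq_or_ne b j with rfl | hbj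
          · have haj : a ≠ b := hab.ne
            rw [hs, Equiv.swap_apply_right, Equiv.swap_apply_of_ne_of_ne hai haj] at hw
            refine ⟨?_, mem_univ _, hab, lt_trans hwji hw⟩
            intro h
            rw [Prod.mk.injEq] at h
            exact hai h.1
          · rcases eq_or_ne a j with rfl | haj
            · have hbi : b ≠ i := (lt_trans hij hab).ne'
              rw [hs, Equiv.swap_apply_right, Equiv.swap_apply_of_ne_of_ne hbi hbj] at hsw
              exact absurd (lt_trans hij hab) hsw
            · rcases eq_or_ne b i with rfl | hbi
              · rw [hs, Equiv.swap_apply_left, Equiv.swap_apply_of_ne_of_ne hai haj] at hsw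
                exact absurd (lt_trans hab hij) hsw
              · rw [hs, Equiv.swap_apply_of_ne_of_ne hai haj,
                  Equiv.swap_apply_of_ne_of_ne hbi hbj] at hsw
                exact absurd hab hsw
    · rintro ⟨a, b⟩ hp ⟨a', b'⟩ hq heq
      replace hp : (a, b) ∈ Finset.univ.filter (fun p : Fin k × Fin k => p.1 < p.2 ∧ (w * s) p.2 < (w * s) p.1) := hp
      replace hq : (a', b') ∈ Finset.univ.filter (fun p : Fin k × Fin k => p.1 < p.2 ∧ (w * s) p.2 < (w * s) p.1) := hq
      rw [Finset.mem_filter] at hp hq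
      simp only [Finset.mem_coe, Finset.mem_filter, Finset.mem_univ, true_and, Equiv.Perm.mul_apply] at hp hq
      simp only at heq
      by_cases h1 : s a < s b <;> by_cases h2 : s a' < s b' <;>
        simp only [if_pos, if_neg, h1, h2, if_true, if_false, Prod.mk.injEq] at heq
      · exact Prod.ext (s.injective heq.1) (s.injective heq.2)
      · exfalso
        apply h2
        rw [← heq.1, ← heq.2]
        simpa [hs, Equiv.swap_apply_self] using hp.1
      · exfalso
        apply h1
        rw [heq.1, heq.2]
        simpa [hs, Equiv.swap_apply_self] using hq.1
      · exact Prod.ext heq.1 heq.2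
  exact absurd hkey (not_lt.mpr (hmin s hcent))
end

section
/- Let t be an involution of Fin k (t² = 1) and let w be a permutation of Fin k with w·t·w⁻¹ = t. Then the sign of w factors as sign(w) = S(w,t) · s(w,t). -/
open Finset

/-- The Adin–Postnikov–Roichman sign `s(w,t)`: `(-1)` raised to the number of
pairs `i < j` with `t i = j`, `t j = i` and `w i > w j`. -/
def aprSign {k : ℕ} (w t : Equiv.Perm (Fin k)) : ℤ :=
  (-1) ^ (Finset.univ.filter (fun p : Fin k × Fin k =>
      p.1 < p.2 ∧ t p.1 = p.2 ∧ t p.2 = p.1 ∧ w p.2 < w p.1)).card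


lemma even_card_of_fpf {α : Type*} [DecidableEq α] (f : α → α) :
    ∀ n (s : Finset α), s.card = n → (∀ x ∈ s, f x ∈ s) → (∀ x ∈ s, f (f x) = x) →
      (∀ x ∈ s, f x ≠ x) → Even s.card := by
  intro n
  induction n using Nat.strong_induction_on with
  | _ n ih =>
    intro s hcard hmem hinv hne
    rcases s.eq_empty_or_nonempty with rfl | ⟨x, hx⟩
    · simp
    · have hfx : f x ∈ s := hmem x hx
      have hxne : f x ≠ x := hne x hx
      have hsubset : ({x, f x} : Finset α) ⊆ s := by
        intro y hy
        simp only [Finset.mem_insert, Finset.mem_singleton] at hy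
        rcases hy with rfl | rfl <;> assumption
      have hcard2 : ({x, f x} : Finset α).card = 2 := by
        rw [Finset.card_insert_of_notMem (by simpa using hxne.symm), Finset.card_singleton]
      have hle : 2 ≤ s.card := hcard2 ▸ Finset.card_le_card hsubset
      set s' := s \ {x, f x} with hs'
      have hmem_s' : ∀ y, y ∈ s' ↔ y ∈ s ∧ y ≠ x ∧ y ≠ f x := by
        intro y; simp [hs', and_assoc]
      have hcs' : s'.card = s.card - 2 := by
        rw [hs', Finset.card_sdiff_of_subset hsubset, hcard2]
      have hmem' : ∀ y ∈ s', f y ∈ s' := by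
        intro y hy
        rw [hmem_s'] at hy ⊢
        obtain ⟨hys, hyx, hyfx⟩ := hy
        refine ⟨hmem y hys, ?_, ?_⟩
        · intro h; apply hyfx; rw [← hinv y hys, h]
        · intro h; apply hyx
          have := congrArg f h
          rw [hinv y hys, hinv x hx] at this; exact this
      have heven' : Even s'.card := by
        refine ih s'.card (by omega) s' rfl hmem' ?_ ?_
        · intro y hy; exact hinv y ((hmem_s' y).mp hy).1
        · intro y hy; exact hne y ((hmem_s' y).mp hy).1
      have : s.card = s'.card + 2 := by omega
      rw [this]
      exact heven'.add even_two

lemma parity_iff_filter {α : Type*} (s : Finset α) (p q : α → Prop)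
    [DecidablePred p] [DecidablePred q] :
    Even ((s.filter fun x => ¬(p x ↔ q x)).card + ((s.filter p).card + (s.filter q).card)) := by
  classical
  have h1 := Finset.card_filter_add_card_filter_not (s := s.filter p) q
  have h2 := Finset.card_filter_add_card_filter_not (s := s.filter q) p
  have h3 := Finset.card_filter_add_card_filter_not
    (s := s.filter fun x => ¬(p x ↔ q x)) p
  simp only [Finset.filter_filter] at h1 h2 h3
  have e1 : s.filter (fun x => ¬(p x ↔ q x) ∧ p x) = s.filter (fun x => p x ∧ ¬ q x) :=
    Finset.filter_congr (by intro x _; tauto)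
  have e2 : s.filter (fun x => ¬(p x ↔ q x) ∧ ¬ p x) = s.filter (fun x => q x ∧ ¬ p x) :=
    Finset.filter_congr (by intro x _; tauto)
  have e3 : s.filter (fun x => q x ∧ p x) = s.filter (fun x => p x ∧ q x) :=
    Finset.filter_congr (by intro x _; tauto)
  rw [e1, e2] at h3
  rw [e3] at h2
  refine ⟨(s.filter fun x => p x ∧ q x).card + (s.filter fun x => p x ∧ ¬ q x).card
    + (s.filter fun x => q x ∧ ¬ p x).card, by omega⟩

lemma half_card {α : Type*} [DecidableEq α] (s : Finset (α × α)) (C : α × α → Prop)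
    [DecidablePred C] (hs : ∀ p ∈ s, p.swap ∈ s) (hex : ∀ p ∈ s, (C p ↔ ¬ C p.swap)) :
    2 * (s.filter C).card = s.card := by
  classical
  have h0 := Finset.card_filter_add_card_filter_not (s := s) C
  have h1 : s.filter (fun p => ¬ C p) = s.filter (fun p => C p.swap) :=
    Finset.filter_congr (by intro p hp; have := hex p hp; tauto)
  have h2 : (s.filter fun p => C p.swap).card = (s.filter C).card := by
    apply Finset.card_nbij' Prod.swap Prod.swap
    · intro p hp
      simp only [Finset.mem_coe, Finset.mem_filter] at hp ⊢
      exact ⟨hs p hp.1, hp.2⟩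
    · intro p hp
      simp only [Finset.mem_coe, Finset.mem_filter] at hp ⊢
      exact ⟨hs p hp.1, by simpa using hp.2⟩
    · intro p _; exact Prod.swap_swap p
    · intro p _; exact Prod.swap_swap p
  rw [h1, h2] at h0
  omega

lemma sign_eq_neg_one_pow_inversions {k : ℕ} (w : Equiv.Perm (Fin k)) :
    (Equiv.Perm.sign w : ℤ) =
      (-1) ^ (Finset.univ.filter fun p : Fin k × Fin k => p.1 < p.2 ∧ w p.2 < w p.1).card := by
  have hsa : Equiv.Perm.sign w = Equiv.Perm.signAux w := by
    rcases le_or_gt 2 k with h | h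
    · have hsurj : Function.Surjective
          (MonoidHom.mk' Equiv.Perm.signAux Equiv.Perm.signAux_mul :
            Equiv.Perm (Fin k) →* ℤˣ) := by
        intro u
        rcases Int.units_eq_one_or u with rfl | rfl
        · exact ⟨1, Equiv.Perm.signAux_one k⟩
        · refine ⟨Equiv.swap ⟨0, by omega⟩ ⟨1, by omega⟩, Equiv.Perm.signAux_swap ?_⟩
          simp [Fin.ext_iff]
      rw [← Equiv.Perm.eq_sign_of_surjective_hom hsurj]
      rfl
    · have hw1 : w = 1 := by
        interval_cases k
        · exact Equiv.ext fun x => x.elim0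
        · exact Equiv.ext fun x => Subsingleton.elim _ _
      rw [hw1, Equiv.Perm.sign_one, Equiv.Perm.signAux_one]
  have hprod : Equiv.Perm.signAux w =
      ∏ x ∈ Equiv.Perm.finPairsLT k, if w x.1 ≤ w x.2 then (-1 : ℤˣ) else 1 := rfl
  have hcard : ((Equiv.Perm.finPairsLT k).filter fun x => w x.1 ≤ w x.2).card
      = (Finset.univ.filter fun p : Fin k × Fin k => p.1 < p.2 ∧ w p.2 < w p.1).card := by
    apply Finset.card_nbij' (fun x => (x.2, x.1)) (fun p => ⟨p.2, p.1⟩)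
    · intro x hx
      simp only [Finset.mem_coe, Finset.mem_filter] at hx ⊢
      obtain ⟨hmem, hle⟩ := hx
      have hlt : x.2 < x.1 := Equiv.Perm.mem_finPairsLT.mp hmem
      refine ⟨Finset.mem_univ _, hlt, lt_of_le_of_ne hle (w.injective.ne (ne_of_gt hlt))⟩
    · intro p hp
      simp only [Finset.mem_coe, Finset.mem_filter] at hp ⊢
      obtain ⟨-, hlt, hwlt⟩ := hp
      exact ⟨Equiv.Perm.mem_finPairsLT.mpr hlt, le_of_lt hwlt⟩
    · intro x _; rfl
    · intro p _; rfl
  rw [hsa, hprod, Finset.prod_ite, Finset.prod_const, Finset.prod_const, one_pow, mul_one,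
    hcard]
  push_cast
  ring

def muF {k : ℕ} (t : Equiv.Perm (Fin k)) (i : Fin k) : Fin k := min i (t i)

def EpF {k : ℕ} (t : Equiv.Perm (Fin k)) (p : Fin k × Fin k) : Prop :=
  t p.1 ≠ p.2 ∧ ¬(t p.1 = p.1 ∧ t p.2 = p.2)

instance {k : ℕ} (t : Equiv.Perm (Fin k)) : DecidablePred (EpF t) := fun p => by
  unfold EpF; infer_instance

lemma muF_t {k : ℕ} (t : Equiv.Perm (Fin k)) (htt : ∀ x, t (t x) = x) (i : Fin k) :
    muF t (t i) = muF t i := by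
  unfold muF; rw [htt]; exact min_comm _ _

lemma muF_eq {k : ℕ} (t : Equiv.Perm (Fin k)) (htt : ∀ x, t (t x) = x) {i j : Fin k}
    (h : muF t i = muF t j) : i = j ∨ t i = j := by
  unfold muF at h
  rcases min_cases i (t i) with ⟨h1, -⟩ | ⟨h1, -⟩ <;>
    rcases min_cases j (t j) with ⟨h2, -⟩ | ⟨h2, -⟩ <;> rw [h1, h2] at h
  · exact Or.inl h
  · right; rw [h, htt]
  · exact Or.inr h
  · left; rw [← htt i, h, htt]

lemma Equiv.Perm.apply_inv_self {α : Type*} (f : Equiv.Perm α) (x : α) : f (f⁻¹ x) = x :=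
  f.apply_symm_apply x

lemma Equiv.Perm.inv_apply_self {α : Type*} (f : Equiv.Perm α) (x : α) : f⁻¹ (f x) = x :=
  f.symm_apply_apply x

/-- If `t` is an involution and `w` centralizes `t`, then
`sign(w) = S(w,t) · s(w,t)`. -/
theorem sign_eq_saxlSign_mul_aprSign {k : ℕ} (t w : Equiv.Perm (Fin k))
    (ht : t ^ 2 = 1) (hw : w * t * w⁻¹ = t) :
    (Equiv.Perm.sign w : ℤ) = saxlSign w t * aprSign w t := by
  unfold saxlSign aprSign
  -- basic pointwise facts
  have htt : ∀ x, t (t x) = x := by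
    intro x
    have h2 : t * t = 1 := by rwa [pow_two] at ht
    have := congrArg (fun σ : Equiv.Perm (Fin k) => σ x) h2
    simpa [Equiv.Perm.mul_apply] using this
  have hcm : w * t = t * w := by
    calc w * t = (w * t * w⁻¹) * w := by group
    _ = t * w := by rw [hw]
  have hc : ∀ x, w (t x) = t (w x) := by
    intro x
    have := congrArg (fun σ : Equiv.Perm (Fin k) => σ x) hcm
    simpa [Equiv.Perm.mul_apply] using this
  have hci : ∀ x, w⁻¹ (t x) = t (w⁻¹ x) := by
    intro x
    have hcm' : w⁻¹ * t = t * w⁻¹ := (Commute.inv_left hcm : _)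
    have := congrArg (fun σ : Equiv.Perm (Fin k) => σ x) hcm'
    simpa [Equiv.Perm.mul_apply] using this
  -- E is w-compatible and swap-compatible
  have hEw : ∀ p : Fin k × Fin k, EpF t (w p.1, w p.2) ↔ EpF t p := by
    intro p
    unfold EpF
    simp only [← hc]
    constructor
    · rintro ⟨h1, h2⟩
      refine ⟨fun h => h1 (by rw [h]), fun ⟨a, b⟩ => h2 ⟨by rw [a], by rw [b]⟩⟩
    · rintro ⟨h1, h2⟩
      refine ⟨fun h => h1 (w.injective h), fun ⟨a, b⟩ => h2 ⟨w.injective a, w.injective b⟩⟩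
  have hEswap : ∀ p : Fin k × Fin k, EpF t p → EpF t p.swap := by
    rintro ⟨i, j⟩ ⟨h1, h2⟩
    simp only [Prod.swap_prod_mk, EpF] at h1 h2 ⊢
    refine ⟨fun h => h1 ?_, fun ⟨a, b⟩ => h2 ⟨b, a⟩⟩
    rw [← h, htt]
  -- names for the three relevant sets
  set A := Finset.univ.filter (fun p : Fin k × Fin k =>
      p.1 < p.2 ∧ t p.1 = p.1 ∧ t p.2 = p.2 ∧ w p.2 < w p.1) with hA
  set B := Finset.univ.filter (fun p : Fin k × Fin k =>
      p.1 < p.2 ∧ t p.1 = p.2 ∧ t p.2 = p.1 ∧ w p.2 < w p.1) with hB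
  set G := Finset.univ.filter (fun p : Fin k × Fin k =>
      EpF t p ∧ p.1 < p.2 ∧ w p.2 < w p.1) with hG
  have hNsplit : (Finset.univ.filter fun p : Fin k × Fin k =>
      p.1 < p.2 ∧ w p.2 < w p.1).card = A.card + B.card + G.card := by
    have s1 := Finset.card_filter_add_card_filter_not
      (s := Finset.univ.filter (fun p : Fin k × Fin k => p.1 < p.2 ∧ w p.2 < w p.1))
      (fun p => t p.1 = p.1 ∧ t p.2 = p.2)
    have s2 := Finset.card_filter_add_card_filter_not
      (s := Finset.univ.filter (fun p : Fin k × Fin k =>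
        (p.1 < p.2 ∧ w p.2 < w p.1) ∧ ¬(t p.1 = p.1 ∧ t p.2 = p.2)))
      (fun p => t p.1 = p.2)
    simp only [Finset.filter_filter] at s1 s2
    have eA : Finset.univ.filter (fun p : Fin k × Fin k =>
        (p.1 < p.2 ∧ w p.2 < w p.1) ∧ t p.1 = p.1 ∧ t p.2 = p.2) = A := by
      rw [hA]; exact Finset.filter_congr (by intro p _; tauto)
    have eB : Finset.univ.filter (fun p : Fin k × Fin k =>
        ((p.1 < p.2 ∧ w p.2 < w p.1) ∧ ¬(t p.1 = p.1 ∧ t p.2 = p.2)) ∧ t p.1 = p.2) = B := by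
      rw [hB]
      apply Finset.filter_congr
      intro p _
      constructor
      · rintro ⟨⟨⟨hlt, hinv⟩, -⟩, hm⟩
        exact ⟨hlt, hm, by rw [← hm, htt], hinv⟩
      · rintro ⟨hlt, hm1, hm2, hinv⟩
        exact ⟨⟨⟨hlt, hinv⟩, fun ⟨a, b⟩ => absurd (a.symm.trans hm1) hlt.ne⟩, hm1⟩
    have eG : Finset.univ.filter (fun p : Fin k × Fin k =>
        ((p.1 < p.2 ∧ w p.2 < w p.1) ∧ ¬(t p.1 = p.1 ∧ t p.2 = p.2)) ∧ ¬(t p.1 = p.2)) = G := by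
      rw [hG]
      apply Finset.filter_congr
      intro p _
      unfold EpF
      tauto
    rw [eA] at s1
    rw [eB, eG] at s2
    omega
  -- p.1 ≠ p.2 consequences
  have hmune : ∀ p : Fin k × Fin k, EpF t p → p.1 ≠ p.2 → muF t p.1 ≠ muF t p.2 := by
    intro p hE hne h
    rcases muF_eq t htt h with h' | h'
    · exact hne h'
    · exact hE.1 h'
  have hnune : ∀ p : Fin k × Fin k, EpF t p → p.1 ≠ p.2 →
      muF t (w⁻¹ p.1) ≠ muF t (w⁻¹ p.2) := by
    intro p hE hne h
    rcases muF_eq t htt h with h' | h'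
    · exact hne (w⁻¹.injective h')
    · apply hE.1
      have := congrArg w h'
      rwa [hc, Equiv.Perm.apply_inv_self, Equiv.Perm.apply_inv_self] at this
  -- the symmetric inversion set
  set Ghat := Finset.univ.filter (fun p : Fin k × Fin k =>
      EpF t p ∧ ¬(p.1 < p.2 ↔ w p.1 < w p.2)) with hGhat
  have hGhat_ne : ∀ p : Fin k × Fin k, ¬(p.1 < p.2 ↔ w p.1 < w p.2) → p.1 ≠ p.2 := by
    intro p hniff h
    exact hniff (by rw [h]; simp)
  have hGeq : G = Ghat.filter (fun p => p.1 < p.2) := by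
    rw [hG, hGhat, Finset.filter_filter]
    apply Finset.filter_congr
    intro p _
    constructor
    · rintro ⟨hE, hlt, hinv⟩
      exact ⟨⟨hE, fun hiff => absurd (hiff.mp hlt) (not_lt.mpr hinv.le)⟩, hlt⟩
    · rintro ⟨⟨hE, hniff⟩, hlt⟩
      refine ⟨hE, hlt, ?_⟩
      have hwne : w p.1 ≠ w p.2 := fun h => hlt.ne (w.injective h)
      rcases hwne.lt_or_gt with h | h
      · exact absurd ⟨fun _ => h, fun _ => hlt⟩ hniff
      · exact h
  have hGhatswap : ∀ p ∈ Ghat, p.swap ∈ Ghat := by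
    intro p hp
    rw [hGhat, Finset.mem_filter] at hp ⊢
    obtain ⟨-, hE, hniff⟩ := hp
    have hne := hGhat_ne p hniff
    have hwne : w p.1 ≠ w p.2 := fun h => hne (w.injective h)
    refine ⟨Finset.mem_univ _, hEswap p hE, ?_⟩
    simp only [Prod.fst_swap, Prod.snd_swap]
    intro hiff
    apply hniff
    constructor
    · intro hlt
      rcases hwne.lt_or_gt with h | h
      · exact h
      · exact absurd (hiff.mpr h) (asymm hlt)
    · intro hwl
      rcases hne.lt_or_gt with h | h
      · exact h
      · exact absurd (hiff.mp h) (asymm hwl)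
  have hhalf1 : 2 * (Ghat.filter fun p => p.1 < p.2).card = Ghat.card := by
    apply half_card _ _ hGhatswap
    intro p hp
    rw [hGhat, Finset.mem_filter] at hp
    have hne := hGhat_ne p hp.2.2
    simp only [Prod.fst_swap, Prod.snd_swap]
    exact ⟨fun h => asymm h, fun h => hne.lt_or_gt.resolve_right h⟩
  have hhalf2 : 2 * (Ghat.filter fun p => muF t p.1 < muF t p.2).card = Ghat.card := by
    apply half_card _ _ hGhatswap
    intro p hp
    rw [hGhat, Finset.mem_filter] at hp
    have hne := hmune p hp.2.1 (hGhat_ne p hp.2.2)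
    simp only [Prod.fst_swap, Prod.snd_swap]
    exact ⟨fun h => asymm h, fun h => hne.lt_or_gt.resolve_right h⟩
  -- the mu-oriented set
  set U := Finset.univ.filter (fun p : Fin k × Fin k =>
      EpF t p ∧ muF t p.1 < muF t p.2) with hU
  have hGm : Ghat.filter (fun p => muF t p.1 < muF t p.2)
      = U.filter (fun p => ¬(p.1 < p.2 ↔ w p.1 < w p.2)) := by
    rw [hGhat, hU, Finset.filter_filter, Finset.filter_filter]
    exact Finset.filter_congr (by intro p _; tauto)
  have hL1 := parity_iff_filter U (fun p => p.1 < p.2) (fun p => w p.1 < w p.2)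
  -- T = T' via the bijection p ↦ (w p.1, w p.2)
  set T' := Finset.univ.filter (fun p : Fin k × Fin k =>
      EpF t p ∧ (muF t (w⁻¹ p.1) < muF t (w⁻¹ p.2)) ∧ p.1 < p.2) with hT'
  have hTT' : (U.filter fun p => w p.1 < w p.2).card = T'.card := by
    apply Finset.card_nbij' (fun p => (w p.1, w p.2)) (fun q => (w⁻¹ q.1, w⁻¹ q.2))
    · intro p hp
      simp only [Finset.mem_coe, Finset.mem_filter, hU, hT'] at hp ⊢
      obtain ⟨⟨-, hE, hmu⟩, hwlt⟩ := hp
      refine ⟨Finset.mem_univ _, (hEw p).mpr hE, ?_, hwlt⟩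
      simpa only [Equiv.Perm.inv_apply_self] using hmu
    · intro q hq
      simp only [Finset.mem_coe, Finset.mem_filter, hU, hT'] at hq ⊢
      obtain ⟨-, hE, hnu, hlt⟩ := hq
      refine ⟨⟨Finset.mem_univ _, ?_, hnu⟩, ?_⟩
      · have := (hEw (w⁻¹ q.1, w⁻¹ q.2)).mp
        simp only [Equiv.Perm.apply_inv_self] at this
        exact this hE
      · simpa only [Equiv.Perm.apply_inv_self] using hlt
    · intro p _
      simp only [Equiv.Perm.inv_apply_self]
    · intro q _
      simp only [Equiv.Perm.apply_inv_self]
  -- the six auxiliary sets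
  set X := Finset.univ.filter (fun p : Fin k × Fin k =>
      EpF t p ∧ (muF t p.1 < muF t p.2) ∧ (muF t (w⁻¹ p.1) < muF t (w⁻¹ p.2)) ∧ p.1 < p.2)
    with hX
  set Y1 := Finset.univ.filter (fun p : Fin k × Fin k =>
      EpF t p ∧ (muF t p.2 < muF t p.1) ∧ (muF t (w⁻¹ p.1) < muF t (w⁻¹ p.2)) ∧ p.1 < p.2)
    with hY1
  set Y2 := Finset.univ.filter (fun p : Fin k × Fin k =>
      EpF t p ∧ (muF t p.1 < muF t p.2) ∧ (muF t (w⁻¹ p.2) < muF t (w⁻¹ p.1)) ∧ p.1 < p.2)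
    with hY2
  set Y3 := Finset.univ.filter (fun p : Fin k × Fin k =>
      EpF t p ∧ (muF t p.1 < muF t p.2) ∧ (muF t (w⁻¹ p.2) < muF t (w⁻¹ p.1)) ∧ p.2 < p.1)
    with hY3
  set V := Finset.univ.filter (fun p : Fin k × Fin k =>
      EpF t p ∧ (muF t p.1 < muF t p.2) ∧ (muF t (w⁻¹ p.2) < muF t (w⁻¹ p.1))) with hV
  have claim1 : T'.card = X.card + Y1.card := by
    have hsp := Finset.card_filter_add_card_filter_not (s := T')
      (fun p => muF t p.1 < muF t p.2)
    have e1 : T'.filter (fun p => muF t p.1 < muF t p.2) = X := by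
      rw [hT', hX, Finset.filter_filter]
      exact Finset.filter_congr (by intro p _; tauto)
    have e2 : T'.filter (fun p => ¬(muF t p.1 < muF t p.2)) = Y1 := by
      rw [hT', hY1, Finset.filter_filter]
      apply Finset.filter_congr
      intro p _
      constructor
      · rintro ⟨⟨hE, hnu, hlt⟩, hna⟩
        exact ⟨hE, (hmune p hE hlt.ne).lt_or_gt.resolve_left hna, hnu, hlt⟩
      · rintro ⟨hE, ha', hnu, hlt⟩
        exact ⟨⟨hE, hnu, hlt⟩, asymm ha'⟩
    rw [e1, e2] at hsp
    omega
  have claim2 : (U.filter fun p => p.1 < p.2).card = X.card + Y2.card := by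
    have hsp := Finset.card_filter_add_card_filter_not
      (s := U.filter fun p => p.1 < p.2) (fun p => muF t (w⁻¹ p.1) < muF t (w⁻¹ p.2))
    have e1 : (U.filter fun p => p.1 < p.2).filter
        (fun p => muF t (w⁻¹ p.1) < muF t (w⁻¹ p.2)) = X := by
      rw [hU, hX, Finset.filter_filter, Finset.filter_filter]
      exact Finset.filter_congr (by intro p _; tauto)
    have e2 : (U.filter fun p => p.1 < p.2).filter
        (fun p => ¬(muF t (w⁻¹ p.1) < muF t (w⁻¹ p.2))) = Y2 := by
      rw [hU, hY2, Finset.filter_filter, Finset.filter_filter]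
      apply Finset.filter_congr
      intro p _
      have hres : ¬(muF t (w⁻¹ p.1) < muF t (w⁻¹ p.2)) → EpF t p → p.1 < p.2 →
          muF t (w⁻¹ p.2) < muF t (w⁻¹ p.1) := fun hnb hE hlt =>
        (hnune p hE hlt.ne).lt_or_gt.resolve_left hnb
      have hasym : muF t (w⁻¹ p.2) < muF t (w⁻¹ p.1) →
          ¬(muF t (w⁻¹ p.1) < muF t (w⁻¹ p.2)) := fun h => asymm h
      tauto
    rw [e1, e2] at hsp
    omega
  have claim3 : Y1.card = Y3.card := by
    apply Finset.card_nbij' Prod.swap Prod.swap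
    · intro p hp
      simp only [Finset.mem_coe, hY1, hY3, Finset.mem_filter, Prod.fst_swap,
        Prod.snd_swap] at hp ⊢
      obtain ⟨-, hE, ha', hb, hc'⟩ := hp
      exact ⟨Finset.mem_univ _, hEswap p hE, ha', hb, hc'⟩
    · intro p hp
      simp only [Finset.mem_coe, hY1, hY3, Finset.mem_filter, Prod.fst_swap,
        Prod.snd_swap] at hp ⊢
      obtain ⟨-, hE, ha, hb', hc'⟩ := hp
      exact ⟨Finset.mem_univ _, hEswap p hE, ha, hb', hc'⟩
    · intro p _; exact Prod.swap_swap p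
    · intro p _; exact Prod.swap_swap p
  have claim4 : V.card = Y2.card + Y3.card := by
    have hsp := Finset.card_filter_add_card_filter_not (s := V)
      (fun p => p.1 < p.2)
    have e1 : V.filter (fun p => p.1 < p.2) = Y2 := by
      rw [hV, hY2, Finset.filter_filter]
      exact Finset.filter_congr (by intro p _; tauto)
    have e2 : V.filter (fun p => ¬(p.1 < p.2)) = Y3 := by
      rw [hV, hY3, Finset.filter_filter]
      apply Finset.filter_congr
      intro p _
      constructor
      · rintro ⟨⟨hE, ha, hb'⟩, hnc⟩
        have hne : p.1 ≠ p.2 := by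
          intro h
          exact absurd ha (by rw [h]; exact lt_irrefl _)
        exact ⟨hE, ha, hb', hne.lt_or_gt.resolve_left hnc⟩
      · rintro ⟨hE, ha, hb', hc'⟩
        exact ⟨⟨hE, ha, hb'⟩, asymm hc'⟩
    rw [e1, e2] at hsp
    omega
  have claim5 : Even V.card := by
    have hsp := Finset.card_filter_add_card_filter_not (s := V)
      (fun p => t p.2 = p.2)
    have hV2 : Even (V.filter fun p => t p.2 = p.2).card := by
      apply even_card_of_fpf (fun p => (t p.1, p.2)) _ _ rfl
      · intro p hp
        simp only [hV, Finset.mem_filter, Finset.filter_filter] at hp ⊢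
        obtain ⟨-, ⟨hE, ha, hb'⟩, hd⟩ := hp
        have htp1 : t p.1 ≠ p.1 := by
          intro h
          exact hE.2 ⟨h, hd⟩
        have hne : p.1 ≠ p.2 := by
          intro h
          exact absurd ha (by rw [h]; exact lt_irrefl _)
        refine ⟨Finset.mem_univ _, ⟨⟨?_, ?_⟩, ?_, ?_⟩, hd⟩
        · simpa only [htt] using hne
        · rintro ⟨h1, -⟩
          rw [htt] at h1
          exact htp1 h1.symm
        · simpa only [muF_t t htt] using ha
        · simpa only [hci, muF_t t htt] using hb'
      · intro p hp
        simp only [htt]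
      · intro p hp
        simp only [hV, Finset.mem_filter, Finset.filter_filter] at hp
        obtain ⟨-, ⟨hE, ha, hb'⟩, hd⟩ := hp
        have htp1 : t p.1 ≠ p.1 := fun h => hE.2 ⟨h, hd⟩
        intro h
        exact htp1 (by simpa using congrArg Prod.fst h)
    have hV1 : Even (V.filter fun p => ¬(t p.2 = p.2)).card := by
      apply even_card_of_fpf (fun p => (p.1, t p.2)) _ _ rfl
      · intro p hp
        simp only [hV, Finset.mem_filter, Finset.filter_filter] at hp ⊢
        obtain ⟨-, ⟨hE, ha, hb'⟩, hd⟩ := hp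
        have hne : p.1 ≠ p.2 := by
          intro h
          exact absurd ha (by rw [h]; exact lt_irrefl _)
        refine ⟨Finset.mem_univ _, ⟨⟨?_, ?_⟩, ?_, ?_⟩, ?_⟩
        · exact fun h => hne (t.injective h)
        · rintro ⟨-, h2⟩
          rw [htt] at h2
          exact hd h2.symm
        · simpa only [muF_t t htt] using ha
        · simpa only [hci, muF_t t htt] using hb'
        · rw [htt]
          exact fun h => hd h.symm
      · intro p hp
        simp only [htt]
      · intro p hp
        simp only [hV, Finset.mem_filter, Finset.filter_filter] at hp
        obtain ⟨-, -, hd⟩ := hp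
        intro h
        exact hd (by simpa using congrArg Prod.snd h)
    rw [← hsp]
    exact hV2.add hV1
  have hEvenST : Even ((U.filter fun p => p.1 < p.2).card + T'.card) := by
    have heq : (U.filter fun p => p.1 < p.2).card + T'.card = 2 * X.card + V.card := by
      omega
    rw [heq]
    exact (even_two_mul _).add claim5
  have hGcard : G.card = (U.filter (fun p => ¬(p.1 < p.2 ↔ w p.1 < w p.2))).card := by
    rw [← hGm, hGeq]
    omega
  have hEvenG : Even G.card := by
    rw [hGcard]
    have hST : Even ((U.filter fun p => p.1 < p.2).card
        + (U.filter fun p => w p.1 < w p.2).card) := by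
      rw [hTT']
      exact hEvenST
    exact (Nat.even_add.mp hL1).mpr hST
  rw [sign_eq_neg_one_pow_inversions w, hNsplit, pow_add, pow_add,
    Even.neg_one_pow hEvenG, mul_one]
end

section
/- Fix k and f, and let I^f be the set of involutions of Fin k with exactly f fixed points. For every permutation w of Fin k, the following character identity holds in ℤ: Σ_{t ∈ I^f, w·t·w⁻¹ = t} S(w,t) = sign(w) · Σ_{t ∈ I^f, w·t·w⁻¹ = t} s(w,t). (Equivalently, the Saxl model representation on ℂ-span of I^f is isomorphic to the Adin–Postnikov–Roichman model representation tensored with the sign representation.) -/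
open Finset

namespace SaxlAPR

open Equiv Equiv.Perm

/-- indicator with values in `ZMod 2` -/
def ind (P : Prop) [Decidable P] : ZMod 2 := if P then 1 else 0

lemma ind_congr {P Q : Prop} [Decidable P] [Decidable Q] (h : P ↔ Q) : ind P = ind Q := by
  simp [ind, h]

lemma ind_add_ind (P Q : Prop) [Decidable P] [Decidable Q] :
    ind P + ind Q = ind (¬ (P ↔ Q)) := by
  by_cases hP : P <;> by_cases hQ : Q <;> simp [ind, hP, hQ] <;> decide

lemma zmod_add_self (x : ZMod 2) : x + x = 0 := by revert x; decide

/-- strictly between -/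
def btw (a u v : Fin k) : Prop := (u < a ∧ a < v) ∨ (v < a ∧ a < u)

instance (a u v : Fin k) : Decidable (btw a u v) := by unfold btw; infer_instance

lemma btw_comm (a u v : Fin k) : btw a u v ↔ btw a v u := or_comm

lemma key1 {k : ℕ} (p q r a b c : Fin k) (hpq : p ≠ q) (hpr : p ≠ r) (hqr : q ≠ r)
    (hab : a ≠ b) (hac : a ≠ c) (hbc : b ≠ c) :
    ind (¬ ((p < q) ↔ (a < b))) + ind (¬ ((p < r) ↔ (a < c)))
      = ind (btw p q r) + ind (btw a b c) := by
  rw [ind_add_ind, ind_add_ind]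
  apply ind_congr
  have h1 : p.val ≠ q.val := fun h => hpq (Fin.ext h)
  have h2 : p.val ≠ r.val := fun h => hpr (Fin.ext h)
  have h3 : q.val ≠ r.val := fun h => hqr (Fin.ext h)
  have h4 : a.val ≠ b.val := fun h => hab (Fin.ext h)
  have h5 : a.val ≠ c.val := fun h => hac (Fin.ext h)
  have h6 : b.val ≠ c.val := fun h => hbc (Fin.ext h)
  simp only [btw, Fin.lt_def]
  omega

lemma cross_swap {k : ℕ} (p q r s : Fin k)
    (h1 : p ≠ q) (h2 : p ≠ r) (h3 : p ≠ s) (h4 : q ≠ r) (h5 : q ≠ s) (h6 : r ≠ s) :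
    ¬ (btw p r s ↔ btw q r s) ↔ ¬ (btw r p q ↔ btw s p q) := by
  have e1 : p.val ≠ q.val := fun h => h1 (Fin.ext h)
  have e2 : p.val ≠ r.val := fun h => h2 (Fin.ext h)
  have e3 : p.val ≠ s.val := fun h => h3 (Fin.ext h)
  have e4 : q.val ≠ r.val := fun h => h4 (Fin.ext h)
  have e5 : q.val ≠ s.val := fun h => h5 (Fin.ext h)
  have e6 : r.val ≠ s.val := fun h => h6 (Fin.ext h)
  simp only [btw, Fin.lt_def]
  omega

lemma key2 {k : ℕ} (p q r s a b c d : Fin k)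
    (h1 : p ≠ q) (h2 : p ≠ r) (h3 : p ≠ s) (h4 : q ≠ r) (h5 : q ≠ s) (h6 : r ≠ s)
    (g1 : a ≠ b) (g2 : a ≠ c) (g3 : a ≠ d) (g4 : b ≠ c) (g5 : b ≠ d) (g6 : c ≠ d) :
    ind (¬ ((p < r) ↔ (a < c))) + ind (¬ ((p < s) ↔ (a < d)))
      + ind (¬ ((q < r) ↔ (b < c))) + ind (¬ ((q < s) ↔ (b < d)))
      = ind (¬ (btw r p q ↔ btw s p q)) + ind (¬ (btw c a b ↔ btw d a b)) := by
  have k1 := key1 p r s a c d h2 h3 h6 g2 g3 g6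
  have k2 := key1 q r s b c d h4 h5 h6 g4 g5 g6
  calc ind (¬ ((p < r) ↔ (a < c))) + ind (¬ ((p < s) ↔ (a < d)))
      + ind (¬ ((q < r) ↔ (b < c))) + ind (¬ ((q < s) ↔ (b < d)))
      = (ind (¬ ((p < r) ↔ (a < c))) + ind (¬ ((p < s) ↔ (a < d))))
        + (ind (¬ ((q < r) ↔ (b < c))) + ind (¬ ((q < s) ↔ (b < d)))) := by ring
    _ = (ind (btw p r s) + ind (btw q r s)) + (ind (btw a c d) + ind (btw b c d)) := by
        rw [k1, k2]; ring
    _ = ind (¬ (btw p r s ↔ btw q r s)) + ind (¬ (btw a c d ↔ btw b c d)) := by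
        rw [ind_add_ind, ind_add_ind]
    _ = ind (¬ (btw r p q ↔ btw s p q)) + ind (¬ (btw c a b ↔ btw d a b)) := by
        rw [ind_congr (cross_swap p q r s h1 h2 h3 h4 h5 h6),
          ind_congr (cross_swap a b c d g1 g2 g3 g4 g5 g6)]

/-- number of inversions -/
def invCount {k : ℕ} (w : Perm (Fin k)) : ℕ :=
  (Finset.univ.filter (fun p : Fin k × Fin k => p.1 < p.2 ∧ w p.2 < w p.1)).card

lemma sign_eq_signAux {k : ℕ} (w : Perm (Fin k)) : Perm.sign w = Perm.signAux w := by
  refine Perm.swap_induction_on w ?_ ?_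
  · simp [Perm.signAux_one]
  · intro x y z hne ih
    rw [Perm.sign_mul, Perm.signAux_mul, Perm.sign_swap hne, Perm.signAux_swap hne, ih]

lemma sign_eq_inversions {k : ℕ} (w : Perm (Fin k)) :
    (Perm.sign w : ℤ) = (-1) ^ invCount w := by
  have h1 : Perm.sign w = (-1 : ℤˣ) ^ invCount w := by
    rw [sign_eq_signAux]
    unfold Perm.signAux
    rw [Finset.prod_ite, Finset.prod_const, Finset.prod_const_one, mul_one]
    congr 1
    apply Finset.card_bij (fun x _ => ((x.2, x.1) : Fin k × Fin k))
    · rintro ⟨x1, x2⟩ hx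
      simp only [mem_filter, Perm.mem_finPairsLT] at hx ⊢
      obtain ⟨hlt, hle⟩ := hx
      refine ⟨mem_univ _, hlt, ?_⟩
      rcases lt_or_eq_of_le hle with h | h
      · exact h
      · exact absurd (w.injective h.symm) (ne_of_lt hlt)
    · rintro ⟨x1, x2⟩ hx ⟨y1, y2⟩ hy h
      simp only [Prod.mk.injEq] at h
      obtain ⟨h1, h2⟩ := h
      cases h1; cases h2; rfl
    · rintro ⟨p1, p2⟩ hp
      simp only [mem_filter, mem_univ, true_and] at hp
      refine ⟨⟨p2, p1⟩, ?_, rfl⟩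
      simp only [mem_filter, Perm.mem_finPairsLT]
      exact ⟨hp.1, le_of_lt hp.2⟩
  rw [h1]
  push_cast
  rfl

lemma neg_one_pow_iden {N A B : ℕ} (hpar : Even (N + A + B)) :
    (-1 : ℤ) ^ A = (-1) ^ N * (-1) ^ B := by
  have hone : (-1 : ℤ) ^ (N + A + B) = 1 := Even.neg_one_pow hpar
  rw [pow_add, pow_add] at hone
  have sq : ∀ n : ℕ, (-1 : ℤ) ^ n * (-1) ^ n = 1 := fun n => by
    rw [← pow_add]; exact Even.neg_one_pow ⟨n, rfl⟩
  calc (-1 : ℤ) ^ A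
      = (-1 : ℤ) ^ A * (((-1) ^ N * (-1) ^ N) * ((-1) ^ B * (-1) ^ B)) := by
        rw [sq, sq]; ring
    _ = ((-1 : ℤ) ^ N * (-1) ^ A * (-1) ^ B) * ((-1) ^ N * (-1) ^ B) := by ring
    _ = 1 * ((-1 : ℤ) ^ N * (-1) ^ B) := by rw [hone]
    _ = (-1 : ℤ) ^ N * (-1) ^ B := one_mul _

lemma perm_inv_apply_self {k : ℕ} (f : Perm (Fin k)) (x : Fin k) : f⁻¹ (f x) = x :=
  f.symm_apply_apply x

lemma perm_apply_inv_self {k : ℕ} (f : Perm (Fin k)) (x : Fin k) : f (f⁻¹ x) = x :=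
  f.apply_symm_apply x

section Main

variable {k : ℕ} (w t : Perm (Fin k))

/-- non-fixed points -/
def Cset : Finset (Fin k) := univ.filter fun v => t v ≠ v
/-- block representatives -/
def Rset : Finset (Fin k) := univ.filter fun y => y < t y
/-- representative of the block of `z` -/
def rep (z : Fin k) : Fin k := if z < t z then z else t z
/-- inversion-status predicate -/
def chiP (u v : Fin k) : Prop := ¬ ((u < v) ↔ (w u < w v))

instance (u v : Fin k) : Decidable (chiP w u v) := by unfold chiP; infer_instance

lemma card_filter_zmod {α : Type*} (s : Finset α) (P : α → Prop) [DecidablePred P] :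
    (((s.filter P).card : ℕ) : ZMod 2) = ∑ a ∈ s, ind (P a) := by
  rw [Finset.card_filter, Nat.cast_sum]
  exact Finset.sum_congr rfl fun a _ => by by_cases h : P a <;> simp [ind, h]

lemma mem_Cset {v : Fin k} : v ∈ Cset t ↔ t v ≠ v := by simp [Cset]
lemma mem_Rset {y : Fin k} : y ∈ Rset t ↔ y < t y := by simp [Rset]

lemma chiP_gt {u v : Fin k} (h : chiP w u v) (hlt : u < v) : w v < w u := by
  unfold chiP at h
  rcases lt_trichotomy (w u) (w v) with h' | h' | h'
  · exact absurd (iff_of_true hlt h') h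
  · exact absurd (w.injective h') (ne_of_lt hlt)
  · exact h'

lemma chiP_lt {u v : Fin k} (h : chiP w u v) (hlt : v < u) : w u < w v := by
  unfold chiP at h
  rcases lt_trichotomy (w u) (w v) with h' | h' | h'
  · exact h'
  · exact absurd (w.injective h') (ne_of_lt hlt).symm
  · exact absurd (iff_of_false (asymm hlt) (asymm h')) h

lemma ind_and_sum {α : Type*} (s : Finset α) (A B : α → Prop)
    [DecidablePred A] [DecidablePred B] :
    ∑ v ∈ s, ind (A v ∧ B v) = ∑ v ∈ s.filter A, ind (B v) := by
  rw [Finset.sum_filter]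
  exact Finset.sum_congr rfl fun v _ => by by_cases h : A v <;> simp [ind, h]

lemma sum_over_pairs (S : Finset (Fin k)) (f : Fin k → Fin k → ZMod 2) :
    ∑ x ∈ S, ∑ y ∈ S.filter (fun y => x < y), f x y
      = ∑ q ∈ (S ×ˢ S).filter (fun q => q.1 < q.2), f q.1 q.2 := by
  rw [Finset.sum_filter, Finset.sum_product]
  exact Finset.sum_congr rfl fun x _ => Finset.sum_filter _ _

/-- the crossing indicator of the blocks of `x` and `y` -/
def CRind (x y : Fin k) : ZMod 2 := ind (¬ (btw y x (t x) ↔ btw (t y) x (t x)))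

variable (hti : ∀ i, t (t i) = i)

section WithHti
include hti

lemma rep_eq_self {y : Fin k} (h : y < t y) : rep t y = y := if_pos h

lemma rep_t {y : Fin k} (h : y < t y) : rep t (t y) = y := by
  unfold rep
  rw [hti y, if_neg (asymm h)]

lemma rep_mem_Rset {z : Fin k} (hz : t z ≠ z) : rep t z ∈ Rset t := by
  rcases lt_or_gt_of_ne hz.symm with h | h
  · rw [mem_Rset, rep_eq_self t hti h]; exact h
  · rw [mem_Rset]
    unfold rep
    rw [if_neg (asymm h), hti z]
    exact h

lemma rep_round (u : Perm (Fin k)) (hu : ∀ i, u (t i) = t (u i)) {y : Fin k}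
    (hy : y < t y) : rep t (u⁻¹ (rep t (u y))) = y := by
  by_cases h : u y < t (u y)
  · rw [rep_eq_self t hti h, perm_inv_apply_self, rep_eq_self t hti hy]
  · have hne : t (u y) ≠ u y := by
      rw [← hu y]; exact fun hh => (ne_of_lt hy).symm (u.injective hh)
    have h2 : t (u y) < u y := lt_of_le_of_ne (not_lt.mp h) hne
    have : rep t (u y) = t (u y) := if_neg (asymm h2)
    rw [this, ← hu y, perm_inv_apply_self, rep_t t hti hy]

lemma rep_cases (z : Fin k) : rep t z = z ∨ rep t z = t z := by
  unfold rep; split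
  · exact Or.inl rfl
  · exact Or.inr rfl

lemma rep_t_eq {z : Fin k} (hz : t z ≠ z) : rep t (t z) = rep t z := by
  rcases lt_or_gt_of_ne hz.symm with h | h
  · rw [rep_t t hti h, rep_eq_self t hti h]
  · have h1 : rep t z = t z := by unfold rep; rw [if_neg (asymm h)]
    have h2 : rep t (t z) = t z := rep_eq_self t hti (by rw [hti z]; exact h)
    rw [h1, h2]

lemma rep_ne {u v : Fin k} (hu : t u ≠ u) (hv : t v ≠ v) (huv : u ≠ v)
    (htuv : t u ≠ v) : rep t u ≠ rep t v := by
  have huvt : u ≠ t v := fun h => htuv (by rw [h, hti v])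
  rcases rep_cases t hti u with h1 | h1 <;> rcases rep_cases t hti v with h2 | h2 <;>
    rw [h1, h2]
  · exact huv
  · exact huvt
  · exact htuv
  · exact fun h => huv (t.injective h)

lemma CR_tleft (x y : Fin k) : CRind t (t x) y = CRind t x y := by
  unfold CRind
  apply ind_congr
  rw [hti x, btw_comm y (t x) x, btw_comm (t y) (t x) x]

lemma CR_tright (x y : Fin k) : CRind t x (t y) = CRind t x y := by
  unfold CRind
  apply ind_congr
  rw [hti y]
  tauto

lemma CR_rep_left (u v : Fin k) : CRind t (rep t u) v = CRind t u v := by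
  rcases rep_cases t hti u with h | h <;> rw [h]
  exact CR_tleft t hti u v

lemma CR_rep_right (u v : Fin k) : CRind t u (rep t v) = CRind t u v := by
  rcases rep_cases t hti v with h | h <;> rw [h]
  exact CR_tright t hti u v

lemma CR_swap {x y : Fin k} (h1 : x ≠ t x) (h2 : x ≠ y) (h3 : x ≠ t y)
    (h4 : t x ≠ y) (h5 : t x ≠ t y) (h6 : y ≠ t y) :
    CRind t x y = CRind t y x := by
  unfold CRind
  exact ind_congr (cross_swap x (t x) y (t y) h1 h2 h3 h4 h5 h6).symm

/-- summing over non-fixed points with a rep-constraint equals summing over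
constrained blocks -/
lemma sum_pairs (g : Fin k → ZMod 2) (Q : Fin k → Prop) [DecidablePred Q] :
    ∑ v ∈ (Cset t).filter (fun v => Q (rep t v)), g v
      = ∑ y ∈ (Rset t).filter Q, (g y + g (t y)) := by
  rw [Finset.sum_add_distrib]
  rw [← Finset.sum_filter_add_sum_filter_not
      ((Cset t).filter (fun v => Q (rep t v))) (fun v => v < t v)]
  congr 1
  · apply Finset.sum_congr _ (fun _ _ => rfl)
    ext v
    simp only [mem_filter, mem_Cset, mem_Rset]
    constructor
    · rintro ⟨⟨hv, hQ⟩, hlt⟩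
      rw [rep_eq_self t hti hlt] at hQ
      exact ⟨hlt, hQ⟩
    · rintro ⟨hlt, hQ⟩
      exact ⟨⟨fun h => (ne_of_lt hlt).symm h, by rwa [rep_eq_self t hti hlt]⟩, hlt⟩
  · apply Finset.sum_nbij' (fun v => t v) (fun y => t y)
    · intro v hv
      simp only [mem_filter, mem_Cset, mem_Rset] at hv ⊢
      obtain ⟨⟨hv1, hQ⟩, hv2⟩ := hv
      have h2 : t v < v := lt_of_le_of_ne (not_lt.mp hv2) hv1
      have hrep : rep t v = t v := if_neg hv2
      rw [hrep] at hQ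
      refine ⟨?_, hQ⟩
      rw [hti v]; exact h2
    · intro y hy
      simp only [mem_filter, mem_Cset, mem_Rset] at hy ⊢
      obtain ⟨hy1, hQ⟩ := hy
      refine ⟨⟨?_, ?_⟩, ?_⟩
      · rw [hti y]; exact ne_of_lt hy1
      · rwa [rep_t t hti hy1]
      · rw [hti y]; exact not_lt.mpr (le_of_lt hy1)
    · intro v _; exact hti v
    · intro y _; exact hti y
    · intro v _; rw [hti v]

lemma sum_pairs' (g : Fin k → ZMod 2) :
    ∑ v ∈ Cset t, g v = ∑ y ∈ Rset t, (g y + g (t y)) := by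
  have := sum_pairs t hti g (fun _ => True)
  simpa using this

variable (hc : ∀ i, w (t i) = t (w i))

section WithHc
include hc

lemma hc_inv : ∀ i, w⁻¹ (t i) = t (w⁻¹ i) := by
  intro i
  have h := hc (w⁻¹ i)
  rw [perm_apply_inv_self] at h
  calc w⁻¹ (t i) = w⁻¹ (w (t (w⁻¹ i))) := by rw [h]
    _ = t (w⁻¹ i) := perm_inv_apply_self w _

lemma partA :
    ((univ.filter (fun p : Fin k × Fin k => (p.1 < p.2 ∧ w p.2 < w p.1) ∧
        ((t p.1 = p.1 ∧ t p.2 ≠ p.2) ∨ (t p.1 ≠ p.1 ∧ t p.2 = p.2)))).card : ZMod 2) = 0 := by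
  have hcard : (univ.filter (fun p : Fin k × Fin k => (p.1 < p.2 ∧ w p.2 < w p.1) ∧
        ((t p.1 = p.1 ∧ t p.2 ≠ p.2) ∨ (t p.1 ≠ p.1 ∧ t p.2 = p.2)))).card
      = (((univ.filter fun x => t x = x) ×ˢ Cset t).filter
          (fun q => chiP w q.1 q.2)).card := by
    apply Finset.card_bij' (fun p _ => if t p.1 = p.1 then p else (p.2, p.1))
      (fun q _ => if q.1 < q.2 then q else (q.2, q.1))
    · rintro ⟨p1, p2⟩ hp
      simp only [mem_filter, mem_univ, true_and] at hp
      obtain ⟨⟨hlt, hinv⟩, hmix⟩ := hp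
      rcases hmix with ⟨h1, h2⟩ | ⟨h1, h2⟩
      · rw [if_pos h1]
        simp only [mem_filter, Finset.mem_product, mem_univ, true_and, mem_Cset]
        refine ⟨⟨by simpa using h1, h2⟩, ?_⟩
        unfold chiP
        simp only [hlt, true_iff]
        exact not_lt.mpr (le_of_lt hinv)
      · rw [if_neg h1]
        simp only [mem_filter, Finset.mem_product, mem_univ, true_and, mem_Cset]
        refine ⟨⟨by simpa using h2, h1⟩, ?_⟩
        unfold chiP
        simp only [not_lt.mpr (le_of_lt hlt), false_iff, not_not]
        exact hinv
    · rintro ⟨x, u⟩ hq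
      simp only [mem_filter, Finset.mem_product, mem_univ, true_and, mem_Cset] at hq
      obtain ⟨⟨hx, hu⟩, hchi⟩ := hq
      simp only [mem_filter, mem_univ, true_and]
      have hxu : x ≠ u := fun h => hu (h ▸ hx)
      unfold chiP at hchi
      by_cases hlt : x < u
      · rw [if_pos hlt]
        simp only [hlt, true_iff] at hchi
        have : w u < w x := by
          rcases lt_trichotomy (w x) (w u) with h | h | h
          · exact absurd h hchi
          · exact absurd (w.injective h) hxu
          · exact h
        exact ⟨⟨hlt, this⟩, Or.inl ⟨hx, hu⟩⟩
      · rw [if_neg hlt]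
        have hul : u < x := lt_of_le_of_ne (not_lt.mp hlt) (Ne.symm hxu)
        simp only [hlt, false_iff, not_not] at hchi
        exact ⟨⟨hul, hchi⟩, Or.inr ⟨hu, hx⟩⟩
    · rintro ⟨p1, p2⟩ hp
      simp only [mem_filter, mem_univ, true_and] at hp
      obtain ⟨⟨hlt, _⟩, hmix⟩ := hp
      rcases hmix with ⟨h1, _⟩ | ⟨h1, _⟩
      · rw [if_pos h1, if_pos hlt]
      · rw [if_neg h1, if_neg (asymm hlt)]
    · rintro ⟨x, u⟩ hq
      simp only [mem_filter, Finset.mem_product, mem_univ, true_and, mem_Cset] at hq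
      obtain ⟨⟨hx, hu⟩, _⟩ := hq
      by_cases hlt : x < u
      · rw [if_pos hlt, if_pos hx]
      · rw [if_neg hlt]
        have : ¬ t u = u := hu
        rw [if_neg this]
  rw [hcard, card_filter_zmod]
  rw [Finset.sum_product]
  have hinner : ∀ x ∈ (univ.filter fun x => t x = x),
      ∑ u ∈ Cset t, ind (chiP w x u)
        = (∑ y ∈ Rset t, ind (btw x y (t y)))
          + ∑ y ∈ Rset t, ind (btw (w x) (w y) (w (t y))) := by
    intro x hx
    simp only [mem_filter, mem_univ, true_and] at hx
    rw [sum_pairs' t hti, ← Finset.sum_add_distrib]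
    apply Finset.sum_congr rfl
    intro y hy
    rw [mem_Rset] at hy
    have hyt : y ≠ t y := ne_of_lt hy
    have hxy : x ≠ y := fun h => hyt (by rw [← h, hx, h])
    have hxty : x ≠ t y := by
      intro h
      have h2 := hx
      rw [h, hti y] at h2
      exact hyt h2
    exact key1 x y (t y) (w x) (w y) (w (t y)) hxy hxty hyt
      (fun h => hxy (w.injective h)) (fun h => hxty (w.injective h))
      (fun h => hyt (w.injective h))
  rw [Finset.sum_congr rfl hinner, Finset.sum_add_distrib]
  have hswap : ∑ x ∈ (univ.filter fun x => t x = x), ∑ y ∈ Rset t,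
        ind (btw (w x) (w y) (w (t y)))
      = ∑ x ∈ (univ.filter fun x => t x = x), ∑ y ∈ Rset t, ind (btw x y (t y)) := by
    rw [← Finset.sum_product', ← Finset.sum_product']
    apply Finset.sum_nbij' (fun q => ((w q.1, rep t (w q.2)) : Fin k × Fin k))
      (fun q => (w⁻¹ q.1, rep t (w⁻¹ q.2)))
    · rintro ⟨x, y⟩ hq
      simp only [Finset.mem_product, mem_filter, mem_univ, true_and, mem_Rset] at hq ⊢
      obtain ⟨hx, hy⟩ := hq
      constructor
      · rw [← hc x, hx]
      · have : t (w y) ≠ w y := by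
          rw [← hc y]; exact fun h => (ne_of_lt hy).symm (w.injective h)
        have := rep_mem_Rset t hti this
        rwa [mem_Rset] at this
    · rintro ⟨x, y⟩ hq
      simp only [Finset.mem_product, mem_filter, mem_univ, true_and, mem_Rset] at hq ⊢
      obtain ⟨hx, hy⟩ := hq
      constructor
      · rw [← hc_inv w t hti hc x, hx]
      · have : t (w⁻¹ y) ≠ w⁻¹ y := by
          rw [← hc_inv w t hti hc y]
          exact fun h => (ne_of_lt hy).symm (w⁻¹.injective h)
        have := rep_mem_Rset t hti this
        rwa [mem_Rset] at this
    · rintro ⟨x, y⟩ hq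
      simp only [Finset.mem_product, mem_filter, mem_univ, true_and, mem_Rset] at hq
      obtain ⟨_, hy⟩ := hq
      simp only [perm_inv_apply_self, Prod.mk.injEq, true_and]
      exact rep_round t hti w hc hy
    · rintro ⟨x, y⟩ hq
      simp only [Finset.mem_product, mem_filter, mem_univ, true_and, mem_Rset] at hq
      obtain ⟨_, hy⟩ := hq
      simp only [perm_apply_inv_self, Prod.mk.injEq, true_and]
      have := rep_round t hti w⁻¹ (hc_inv w t hti hc) hy
      rwa [inv_inv] at this
    · rintro ⟨x, y⟩ hq
      simp only [Finset.mem_product, mem_filter, mem_univ, true_and, mem_Rset] at hq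
      obtain ⟨_, hy⟩ := hq
      by_cases h : w y < t (w y)
      · rw [rep_eq_self t hti h]
        apply ind_congr
        rw [hc y]
      · have hne : t (w y) ≠ w y := by
          rw [← hc y]; exact fun hh => (ne_of_lt hy).symm (w.injective hh)
        have h2 : t (w y) < w y := lt_of_le_of_ne (not_lt.mp h) hne
        have hrep : rep t (w y) = t (w y) := if_neg (asymm h2)
        rw [hrep]
        apply ind_congr
        rw [hti (w y), hc y]
        exact btw_comm _ _ _
  rw [hswap]
  exact zmod_add_self _

lemma partB :
    ((univ.filter (fun p : Fin k × Fin k => (p.1 < p.2 ∧ w p.2 < w p.1) ∧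
        (t p.1 ≠ p.1 ∧ t p.2 ≠ p.2 ∧ t p.1 ≠ p.2))).card : ZMod 2) = 0 := by
  have hcard : (univ.filter (fun p : Fin k × Fin k => (p.1 < p.2 ∧ w p.2 < w p.1) ∧
        (t p.1 ≠ p.1 ∧ t p.2 ≠ p.2 ∧ t p.1 ≠ p.2))).card
      = ((Cset t ×ˢ Cset t).filter
          (fun q => rep t q.1 < rep t q.2 ∧ chiP w q.1 q.2)).card := by
    apply Finset.card_bij'
      (fun p _ => if rep t p.1 < rep t p.2 then p else (p.2, p.1))
      (fun q _ => if q.1 < q.2 then q else (q.2, q.1))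
    · rintro ⟨p1, p2⟩ hp
      simp only [mem_filter, mem_univ, true_and] at hp
      obtain ⟨⟨hlt, hinv⟩, h1, h2, h3⟩ := hp
      have hne : rep t p1 ≠ rep t p2 := rep_ne t hti h1 h2 (ne_of_lt hlt) h3
      simp only [mem_filter, Finset.mem_product, mem_Cset]
      by_cases hrep : rep t p1 < rep t p2
      · rw [if_pos hrep]
        refine ⟨⟨h1, h2⟩, hrep, ?_⟩
        unfold chiP
        simp only [hlt, true_iff]
        exact not_lt.mpr (le_of_lt hinv)
      · rw [if_neg hrep]
        refine ⟨⟨h2, h1⟩, lt_of_le_of_ne (not_lt.mp hrep) hne.symm, ?_⟩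
        unfold chiP
        simp only [not_lt.mpr (le_of_lt hlt), false_iff, not_not]
        exact hinv
    · rintro ⟨u, v⟩ hq
      simp only [mem_filter, Finset.mem_product, mem_Cset] at hq
      obtain ⟨⟨hu, hv⟩, hrep, hchi⟩ := hq
      have huv : u ≠ v := by
        intro h; rw [h] at hrep; exact lt_irrefl _ hrep
      have htuv : t u ≠ v := by
        intro h
        rw [← h, rep_t_eq t hti hu] at hrep
        exact lt_irrefl _ hrep
      simp only [mem_filter, mem_univ, true_and]
      by_cases hlt : u < v
      · rw [if_pos hlt]
        exact ⟨⟨hlt, chiP_gt w hchi hlt⟩, hu, hv, htuv⟩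
      · rw [if_neg hlt]
        have hvu : v < u := lt_of_le_of_ne (not_lt.mp hlt) huv.symm
        refine ⟨⟨hvu, chiP_lt w hchi hvu⟩, hv, hu, ?_⟩
        intro h
        have h' : t v = u := h
        exact htuv (by rw [← h', hti v])
    · rintro ⟨p1, p2⟩ hp
      simp only [mem_filter, mem_univ, true_and] at hp
      obtain ⟨⟨hlt, _⟩, _⟩ := hp
      by_cases hrep : rep t p1 < rep t p2
      · rw [if_pos hrep, if_pos hlt]
      · rw [if_neg hrep, if_neg (asymm hlt)]
    · rintro ⟨u, v⟩ hq
      simp only [mem_filter, Finset.mem_product, mem_Cset] at hq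
      obtain ⟨⟨hu, hv⟩, hrep, _⟩ := hq
      by_cases hlt : u < v
      · rw [if_pos hlt, if_pos hrep]
      · rw [if_neg hlt, if_neg (asymm hrep)]
  rw [hcard, card_filter_zmod, Finset.sum_product]
  have hstep : ∀ u ∈ Cset t,
      ∑ v ∈ Cset t, ind (rep t u < rep t v ∧ chiP w u v)
        = ∑ y ∈ (Rset t).filter (fun y => rep t u < y),
            (ind (chiP w u y) + ind (chiP w u (t y))) := by
    intro u _
    rw [ind_and_sum]
    exact sum_pairs t hti _ _
  rw [Finset.sum_congr rfl hstep]
  rw [sum_pairs' t hti]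
  have hxform : ∀ x ∈ Rset t,
      ((∑ y ∈ (Rset t).filter (fun y => rep t x < y),
          (ind (chiP w x y) + ind (chiP w x (t y))))
        + ∑ y ∈ (Rset t).filter (fun y => rep t (t x) < y),
          (ind (chiP w (t x) y) + ind (chiP w (t x) (t y))))
      = ∑ y ∈ (Rset t).filter (fun y => x < y),
          (CRind t x y + CRind t (w x) (w y)) := by
    intro x hx
    rw [mem_Rset] at hx
    rw [rep_eq_self t hti hx, rep_t t hti hx, ← Finset.sum_add_distrib]
    apply Finset.sum_congr rfl
    intro y hy
    simp only [mem_filter, mem_Rset] at hy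
    obtain ⟨hy, hxy⟩ := hy
    -- distinctness
    have d1 : x ≠ t x := ne_of_lt hx
    have d6 : y ≠ t y := ne_of_lt hy
    have d2 : x ≠ y := ne_of_lt hxy
    have d3 : x ≠ t y := fun h => absurd (h ▸ hy) (not_lt.mpr (le_of_lt hxy))
    have d4 : t x ≠ y := fun h => d3 (by rw [← h, hti x])
    have d5 : t x ≠ t y := fun h => d2 (t.injective h)
    have e1 : w x ≠ w (t x) := fun h => d1 (w.injective h)
    have e2 : w x ≠ w y := fun h => d2 (w.injective h)
    have e3 : w x ≠ w (t y) := fun h => d3 (w.injective h)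
    have e4 : w (t x) ≠ w y := fun h => d4 (w.injective h)
    have e5 : w (t x) ≠ w (t y) := fun h => d5 (w.injective h)
    have e6 : w y ≠ w (t y) := fun h => d6 (w.injective h)
    have hk := key2 x (t x) y (t y) (w x) (w (t x)) (w y) (w (t y))
      d1 d2 d3 d4 d5 d6 e1 e2 e3 e4 e5 e6
    calc (ind (chiP w x y) + ind (chiP w x (t y)))
        + (ind (chiP w (t x) y) + ind (chiP w (t x) (t y)))
        = ind (¬ ((x < y) ↔ (w x < w y))) + ind (¬ ((x < t y) ↔ (w x < w (t y))))
          + ind (¬ ((t x < y) ↔ (w (t x) < w y)))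
          + ind (¬ ((t x < t y) ↔ (w (t x) < w (t y)))) := by
            unfold chiP; ring
      _ = ind (¬ (btw y x (t x) ↔ btw (t y) x (t x)))
          + ind (¬ (btw (w y) (w x) (w (t x)) ↔ btw (w (t y)) (w x) (w (t x)))) := hk
      _ = CRind t x y + CRind t (w x) (w y) := by
            unfold CRind
            rw [hc x, hc y]
  rw [Finset.sum_congr rfl hxform]
  have hsplit : ∀ x ∈ Rset t,
      ∑ y ∈ (Rset t).filter (fun y => x < y), (CRind t x y + CRind t (w x) (w y))
        = (∑ y ∈ (Rset t).filter (fun y => x < y), CRind t x y)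
          + ∑ y ∈ (Rset t).filter (fun y => x < y), CRind t (w x) (w y) :=
    fun _ _ => Finset.sum_add_distrib
  rw [Finset.sum_congr rfl hsplit, Finset.sum_add_distrib]
  have hswap : ∑ x ∈ Rset t, ∑ y ∈ (Rset t).filter (fun y => x < y),
        CRind t (w x) (w y)
      = ∑ x ∈ Rset t, ∑ y ∈ (Rset t).filter (fun y => x < y), CRind t x y := by
    rw [sum_over_pairs, sum_over_pairs]
    have hc' := hc_inv w t hti hc
    apply Finset.sum_nbij'
      (fun q => if rep t (w q.1) < rep t (w q.2)
        then ((rep t (w q.1), rep t (w q.2)) : Fin k × Fin k)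
        else (rep t (w q.2), rep t (w q.1)))
      (fun q => if rep t (w⁻¹ q.1) < rep t (w⁻¹ q.2)
        then ((rep t (w⁻¹ q.1), rep t (w⁻¹ q.2)) : Fin k × Fin k)
        else (rep t (w⁻¹ q.2), rep t (w⁻¹ q.1)))
    · rintro ⟨x, y⟩ hq
      simp only [mem_filter, Finset.mem_product, mem_Rset] at hq
      obtain ⟨⟨hx, hy⟩, hxy⟩ := hq
      have htx : t (w x) ≠ w x := by
        rw [← hc x]; exact fun h => (ne_of_lt hx).symm (w.injective h)
      have hty : t (w y) ≠ w y := by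
        rw [← hc y]; exact fun h => (ne_of_lt hy).symm (w.injective h)
      have hA := rep_mem_Rset t hti htx
      have hB := rep_mem_Rset t hti hty
      have d3 : x ≠ t y := fun h => absurd (h ▸ hy) (not_lt.mpr (le_of_lt hxy))
      have d4 : t x ≠ y := fun h => d3 (by rw [← h, hti x])
      have hAB : rep t (w x) ≠ rep t (w y) := by
        apply rep_ne t hti htx hty (fun h => (ne_of_lt hxy) (w.injective h))
        rw [← hc x]
        exact fun h => d4 (w.injective h)
      by_cases h : rep t (w x) < rep t (w y)
      · rw [if_pos h]
        simp only [mem_filter, Finset.mem_product, mem_Rset]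
        exact ⟨⟨(mem_Rset t).mp hA, (mem_Rset t).mp hB⟩, h⟩
      · rw [if_neg h]
        simp only [mem_filter, Finset.mem_product, mem_Rset]
        exact ⟨⟨(mem_Rset t).mp hB, (mem_Rset t).mp hA⟩,
          lt_of_le_of_ne (not_lt.mp h) hAB.symm⟩
    · rintro ⟨u, v⟩ hq
      simp only [mem_filter, Finset.mem_product, mem_Rset] at hq
      obtain ⟨⟨hu, hv⟩, huv⟩ := hq
      have htu : t (w⁻¹ u) ≠ w⁻¹ u := by
        rw [← hc' u]; exact fun h => (ne_of_lt hu).symm (w⁻¹.injective h)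
      have htv : t (w⁻¹ v) ≠ w⁻¹ v := by
        rw [← hc' v]; exact fun h => (ne_of_lt hv).symm (w⁻¹.injective h)
      have hA := rep_mem_Rset t hti htu
      have hB := rep_mem_Rset t hti htv
      have d3 : u ≠ t v := fun h => absurd (h ▸ hv) (not_lt.mpr (le_of_lt huv))
      have d4 : t u ≠ v := fun h => d3 (by rw [← h, hti u])
      have hAB : rep t (w⁻¹ u) ≠ rep t (w⁻¹ v) := by
        apply rep_ne t hti htu htv (fun h => (ne_of_lt huv) (w⁻¹.injective h))
        rw [← hc' u]
        exact fun h => d4 (w⁻¹.injective h)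
      by_cases h : rep t (w⁻¹ u) < rep t (w⁻¹ v)
      · rw [if_pos h]
        simp only [mem_filter, Finset.mem_product, mem_Rset]
        exact ⟨⟨(mem_Rset t).mp hA, (mem_Rset t).mp hB⟩, h⟩
      · rw [if_neg h]
        simp only [mem_filter, Finset.mem_product, mem_Rset]
        exact ⟨⟨(mem_Rset t).mp hB, (mem_Rset t).mp hA⟩,
          lt_of_le_of_ne (not_lt.mp h) hAB.symm⟩
    · rintro ⟨x, y⟩ hq
      simp only [mem_filter, Finset.mem_product, mem_Rset] at hq
      obtain ⟨⟨hx, hy⟩, hxy⟩ := hq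
      have hA := rep_round t hti w hc hx
      have hB := rep_round t hti w hc hy
      by_cases h : rep t (w x) < rep t (w y)
      · rw [if_pos h]
        dsimp only
        rw [hA, hB, if_pos hxy]
      · rw [if_neg h]
        dsimp only
        rw [hA, hB, if_neg (asymm hxy)]
    · rintro ⟨u, v⟩ hq
      simp only [mem_filter, Finset.mem_product, mem_Rset] at hq
      obtain ⟨⟨hu, hv⟩, huv⟩ := hq
      have hA := rep_round t hti w⁻¹ hc' hu
      have hB := rep_round t hti w⁻¹ hc' hv
      rw [inv_inv] at hA hB
      by_cases h : rep t (w⁻¹ u) < rep t (w⁻¹ v)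
      · rw [if_pos h]
        dsimp only
        rw [hA, hB, if_pos huv]
      · rw [if_neg h]
        dsimp only
        rw [hA, hB, if_neg (asymm huv)]
    · rintro ⟨x, y⟩ hq
      simp only [mem_filter, Finset.mem_product, mem_Rset] at hq
      obtain ⟨⟨hx, hy⟩, hxy⟩ := hq
      have h1 : CRind t (rep t (w x)) (rep t (w y)) = CRind t (w x) (w y) := by
        rw [CR_rep_left t hti, CR_rep_right t hti]
      by_cases h : rep t (w x) < rep t (w y)
      · rw [if_pos h]
        exact h1.symm
      · rw [if_neg h]
        dsimp only
        have htx : t (w x) ≠ w x := by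
          rw [← hc x]; exact fun hh => (ne_of_lt hx).symm (w.injective hh)
        have hty : t (w y) ≠ w y := by
          rw [← hc y]; exact fun hh => (ne_of_lt hy).symm (w.injective hh)
        have hA := rep_mem_Rset t hti htx
        have hB := rep_mem_Rset t hti hty
        rw [mem_Rset] at hA hB
        have d3 : x ≠ t y := fun hh => absurd (hh ▸ hy) (not_lt.mpr (le_of_lt hxy))
        have d4 : t x ≠ y := fun hh => d3 (by rw [← hh, hti x])
        have hAB : rep t (w x) ≠ rep t (w y) := by
          apply rep_ne t hti htx hty (fun hh => (ne_of_lt hxy) (w.injective hh))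
          rw [← hc x]
          exact fun hh => d4 (w.injective hh)
        have hAtB : rep t (w x) ≠ t (rep t (w y)) := by
          intro hh
          apply hAB
          have h2 : rep t (rep t (w x)) = rep t (t (rep t (w y))) := by rw [hh]
          rwa [rep_eq_self t hti hA, rep_t_eq t hti (ne_of_lt hB).symm,
            rep_eq_self t hti hB] at h2
        have htAB : t (rep t (w x)) ≠ rep t (w y) := by
          intro hh
          apply hAB
          have h2 : rep t (t (rep t (w x))) = rep t (rep t (w y)) := by rw [hh]
          rwa [rep_t_eq t hti (ne_of_lt hA).symm, rep_eq_self t hti hA,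
            rep_eq_self t hti hB] at h2
        exact h1.symm.trans (CR_swap t hti (ne_of_lt hA) hAB hAtB htAB
          (fun hh => hAB (t.injective hh)) (ne_of_lt hB))
  rw [hswap]
  exact zmod_add_self _


lemma pointwise (p : Fin k × Fin k) :
    ind (p.1 < p.2 ∧ w p.2 < w p.1)
      + ind (p.1 < p.2 ∧ t p.1 = p.1 ∧ t p.2 = p.2 ∧ w p.2 < w p.1)
      + ind (p.1 < p.2 ∧ t p.1 = p.2 ∧ t p.2 = p.1 ∧ w p.2 < w p.1)
    = ind ((p.1 < p.2 ∧ w p.2 < w p.1) ∧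
        ((t p.1 = p.1 ∧ t p.2 ≠ p.2) ∨ (t p.1 ≠ p.1 ∧ t p.2 = p.2)))
      + ind ((p.1 < p.2 ∧ w p.2 < w p.1) ∧
        (t p.1 ≠ p.1 ∧ t p.2 ≠ p.2 ∧ t p.1 ≠ p.2)) := by
  by_cases h1 : p.1 < p.2
  · by_cases h2 : w p.2 < w p.1
    · have hne : p.1 ≠ p.2 := ne_of_lt h1
      have h6 : t p.2 = p.1 ↔ t p.1 = p.2 :=
        ⟨fun h => by rw [← h, hti], fun h => by rw [← h, hti]⟩
      by_cases h3 : t p.1 = p.1 <;> by_cases h4 : t p.2 = p.2 <;>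
        by_cases h5 : t p.1 = p.2
      · exact absurd (h3.symm.trans h5) hne
      · simp [ind, h1, h2, h3, h4, h5, hne, hne.symm]; decide
      · exact absurd (h3.symm.trans h5) hne
      · simp [ind, h1, h2, h3, h4, h5, hne, hne.symm]
      · exact absurd (t.injective (h5.trans h4.symm)) hne
      · simp [ind, h1, h2, h3, h4, h5, hne, hne.symm]
      · simp [ind, h1, h2, h3, h4, h5, h6, hne, hne.symm]; decide
      · simp [ind, h1, h2, h3, h4, h5, hne, hne.symm]
    · simp [ind, h2]
  · simp [ind, h1]

lemma parity :
    ((((univ.filter fun p : Fin k × Fin k => p.1 < p.2 ∧ w p.2 < w p.1).card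
      + (univ.filter fun p : Fin k × Fin k =>
          p.1 < p.2 ∧ t p.1 = p.1 ∧ t p.2 = p.2 ∧ w p.2 < w p.1).card
      + (univ.filter fun p : Fin k × Fin k =>
          p.1 < p.2 ∧ t p.1 = p.2 ∧ t p.2 = p.1 ∧ w p.2 < w p.1).card : ℕ)) : ZMod 2)
      = 0 := by
  push_cast
  rw [card_filter_zmod, card_filter_zmod, card_filter_zmod,
    ← Finset.sum_add_distrib, ← Finset.sum_add_distrib]
  rw [Finset.sum_congr rfl (fun p _ => pointwise w t hti hc p), Finset.sum_add_distrib,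
    ← card_filter_zmod, ← card_filter_zmod, partA w t hti hc, partB w t hti hc]
  norm_num

lemma termwise : saxlSign w t = (Perm.sign w : ℤ) * aprSign w t := by
  unfold saxlSign aprSign
  rw [sign_eq_inversions]
  apply neg_one_pow_iden
  have h0 := parity w t hti hc
  rw [ZMod.natCast_eq_zero_iff] at h0
  exact even_iff_two_dvd.2 h0

end WithHc

end WithHti

end Main

end SaxlAPR

/-- The character of the Saxl model on `I^f` equals the sign of `w` times the
character of the Adin–Postnikov–Roichman model on `I^f`. -/
theorem saxl_character_eq_sign_mul_apr_character (k f : ℕ)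
    (w : Equiv.Perm (Fin k)) :
    ∑ t ∈ (invf k f).filter (fun t => w * t * w⁻¹ = t), saxlSign w t
      = (Equiv.Perm.sign w : ℤ) *
        ∑ t ∈ (invf k f).filter (fun t => w * t * w⁻¹ = t), aprSign w t := by
  rw [Finset.mul_sum]
  apply Finset.sum_congr rfl
  intro t ht
  simp only [invf, Finset.mem_filter, Finset.mem_univ, true_and] at ht
  obtain ⟨⟨ht2, _⟩, hconj⟩ := ht
  have hti : ∀ i, t (t i) = i := by
    intro i
    have h := Equiv.Perm.ext_iff.mp ht2 i
    simpa [sq, Equiv.Perm.mul_apply] using h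
  have hc : ∀ i, w (t i) = t (w i) := by
    have hwt : w * t = t * w := by
      calc w * t = (w * t * w⁻¹) * w := by group
        _ = t * w := by rw [hconj]
    intro i
    have h := Equiv.Perm.ext_iff.mp hwt i
    simpa [Equiv.Perm.mul_apply] using h
  exact SaxlAPR.termwise w t hti hc
end

section
/- Let s_i denote the number of involutions of Fin i (permutations σ with σ² = 1), and let r_k = Σ_{i=0}^{k} C(k, i)·s_i (the number of self-inverse partial permutations of k points, i.e. of vertically symmetric rook monoid diagrams on k vertices). Then, as formal power series over ℚ, exp(X²/2 + 2X) = Σ_{k≥0} r_k · X^k/k!, where exp denotes the formal exponential (substitution of the power series X²/2 + 2X, which has zero constant term, into the formal exponential series Σ_n X^n/n!). -/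
open Finset PowerSeries

/-- `s_i`, the number of involutions of `Fin i`. -/
def involutionCount (i : ℕ) : ℕ :=
  (Finset.univ.filter fun σ : Equiv.Perm (Fin i) => σ ^ 2 = 1).card

/-- `r_k = Σ_{i=0}^{k} C(k,i)·s_i`, the number of self-inverse partial
permutations of `k` points. -/
def rookModelDim (k : ℕ) : ℕ :=
  ∑ i ∈ Finset.range (k + 1), Nat.choose k i * involutionCount i

section Combinatorics

open Equiv Equiv.Perm

private def fixCount (n : ℕ) (q : Fin n) : ℕ :=
  (Finset.univ.filter fun e : Equiv.Perm (Fin n) => e ^ 2 = 1 ∧ e q = q).card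

private theorem decomp_zero_sq {n : ℕ} (e : Perm (Fin n)) :
    (Equiv.Perm.decomposeFin.symm (0, e)) ^ 2 = 1 ↔ e ^ 2 = 1 := by
  constructor
  · intro h
    ext x
    have := DFunLike.congr_fun h x.succ
    simp [sq, Perm.mul_apply] at this ⊢
    exact congrArg Fin.val this
  · intro h
    ext x
    induction x using Fin.cases with
    | zero => simp [sq, Perm.mul_apply]
    | succ y =>
      have := DFunLike.congr_fun h y
      simp [sq, Perm.mul_apply] at this ⊢
      simp [this]

private theorem decomp_succ_sq {n : ℕ} (q : Fin n) (e : Perm (Fin n)) :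
    (Equiv.Perm.decomposeFin.symm (q.succ, e)) ^ 2 = 1 ↔ (e ^ 2 = 1 ∧ e q = q) := by
  set σ := Equiv.Perm.decomposeFin.symm (q.succ, e) with hσ
  have hzero : σ 0 = q.succ := Equiv.Perm.decomposeFin_symm_apply_zero q.succ e
  have hsucc : ∀ x : Fin n, σ x.succ = Equiv.swap 0 q.succ (e x).succ :=
    fun x => Equiv.Perm.decomposeFin_symm_apply_succ e q.succ x
  constructor
  · intro h
    have heq : e q = q := by
      have h0 := DFunLike.congr_fun h 0
      rw [sq, Perm.mul_apply, hzero, hsucc, Perm.one_apply] at h0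
      by_contra hne
      have h1 : (e q).succ ≠ 0 := Fin.succ_ne_zero _
      have h2 : (e q).succ ≠ q.succ := fun hc => hne (Fin.succ_injective _ hc)
      rw [Equiv.swap_apply_of_ne_of_ne h1 h2] at h0
      exact h1 h0
    refine ⟨?_, heq⟩
    ext x
    simp only [sq, Perm.mul_apply, Perm.one_apply]
    by_cases hx : x = q
    · rw [hx, heq, heq]
    · have hex : e x ≠ q := fun hc => hx (e.injective (hc.trans heq.symm))
      have hxs := DFunLike.congr_fun h x.succ
      rw [sq, Perm.mul_apply, hsucc, Perm.one_apply] at hxs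
      rw [Equiv.swap_apply_of_ne_of_ne (Fin.succ_ne_zero _)
        (fun hc => hex (Fin.succ_injective _ hc)), hsucc] at hxs
      by_cases hee : e (e x) = q
      · exfalso
        rw [hee] at hxs
        rw [Equiv.swap_apply_right] at hxs
        exact Fin.succ_ne_zero x hxs.symm
      · rw [Equiv.swap_apply_of_ne_of_ne (Fin.succ_ne_zero _)
          (fun hc => hee (Fin.succ_injective _ hc))] at hxs
        exact congrArg Fin.val (Fin.succ_injective _ hxs)
  · rintro ⟨h, heq⟩
    ext x
    induction x using Fin.cases with
    | zero =>
      rw [sq, Perm.mul_apply, Perm.one_apply, hzero, hsucc, heq, Equiv.swap_apply_right]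
    | succ y =>
      rw [sq, Perm.mul_apply, Perm.one_apply, hsucc]
      by_cases hy : y = q
      · rw [hy, heq, Equiv.swap_apply_right, hzero]
      · have hey : e y ≠ q := fun hc => hy (e.injective (hc.trans heq.symm))
        rw [Equiv.swap_apply_of_ne_of_ne (Fin.succ_ne_zero _)
          (fun hc => hey (Fin.succ_injective _ hc)), hsucc]
        have hee : e (e y) = y := by
          have := DFunLike.congr_fun h y
          simpa [sq, Perm.mul_apply] using this
        rw [hee] at *
        rw [Equiv.swap_apply_of_ne_of_ne (Fin.succ_ne_zero _)
          (fun hc => hy (Fin.succ_injective _ hc))]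

private theorem stepB (n : ℕ) :
    involutionCount (n + 1) = involutionCount n + ∑ q : Fin n, fixCount n q := by
  rw [involutionCount, Finset.univ_perm_fin_succ, Finset.filter_map, Finset.card_map,
    Finset.card_filter, ← Finset.univ_product_univ, Finset.sum_product, Fin.sum_univ_succ]
  congr 1
  · rw [involutionCount, Finset.card_filter]
    refine Finset.sum_congr rfl fun e _ => ?_
    simp [decomp_zero_sq]
  · refine Finset.sum_congr rfl fun q _ => ?_
    rw [fixCount, Finset.card_filter]
    refine Finset.sum_congr rfl fun e _ => ?_
    simp [decomp_succ_sq]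

private lemma conj_conj {α : Type*} (c e : Perm α) (hc : c * c = 1) :
    c * (c * e * c) * c = e := by
  calc c * (c * e * c) * c = (c * c) * (e * (c * c)) := by simp [mul_assoc]
  _ = e := by rw [hc]; simp

private lemma conj_sq {α : Type*} (c e : Perm α) (hc : c * c = 1) (h1 : e ^ 2 = 1) :
    (c * e * c) ^ 2 = 1 := by
  rw [sq]
  calc (c * e * c) * (c * e * c) = c * (e * ((c * c) * (e * c))) := by simp [mul_assoc]
  _ = c * ((e * e) * c) := by rw [hc]; simp [mul_assoc]
  _ = 1 := by rw [← sq, h1, one_mul, hc]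

private theorem stepC (n : ℕ) (q : Fin (n + 1)) : fixCount (n + 1) q = fixCount (n + 1) 0 := by
  classical
  have hc : Equiv.swap (0 : Fin (n + 1)) q * Equiv.swap 0 q = 1 := Equiv.swap_mul_self _ _
  refine Finset.card_bij' (fun e _ => Equiv.swap 0 q * e * Equiv.swap 0 q)
    (fun e _ => Equiv.swap 0 q * e * Equiv.swap 0 q) ?_ ?_ ?_ ?_
  · intro e he
    simp only [Finset.mem_filter, Finset.mem_univ, true_and] at he ⊢
    obtain ⟨h1, h2⟩ := he
    refine ⟨conj_sq _ _ hc h1, ?_⟩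
    simp only [Perm.mul_apply, Equiv.swap_apply_left, h2, Equiv.swap_apply_right]
  · intro e he
    simp only [Finset.mem_filter, Finset.mem_univ, true_and] at he ⊢
    obtain ⟨h1, h2⟩ := he
    refine ⟨conj_sq _ _ hc h1, ?_⟩
    simp only [Perm.mul_apply, Equiv.swap_apply_right, h2, Equiv.swap_apply_left]
  · intro e _; exact conj_conj _ _ hc
  · intro e _; exact conj_conj _ _ hc

private theorem stepD (n : ℕ) : fixCount (n + 1) 0 = involutionCount n := by
  rw [fixCount, Finset.univ_perm_fin_succ, Finset.filter_map, Finset.card_map,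
    Finset.card_filter, ← Finset.univ_product_univ, Finset.sum_product, Fin.sum_univ_succ]
  have h2 : ∀ q : Fin n, ∀ e : Perm (Fin n),
      ¬ ((Equiv.Perm.decomposeFin.symm (q.succ, e)) ^ 2 = 1 ∧
        (Equiv.Perm.decomposeFin.symm (q.succ, e)) 0 = 0) := by
    intro q e h
    have := h.2
    rw [Equiv.Perm.decomposeFin_symm_apply_zero] at this
    exact Fin.succ_ne_zero q this
  rw [involutionCount, Finset.card_filter]
  have hz : ∀ e : Perm (Fin n),
      (if (Equiv.Perm.decomposeFin.symm ((0 : Fin (n+1)), e)) ^ 2 = 1 ∧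
        (Equiv.Perm.decomposeFin.symm ((0 : Fin (n+1)), e)) 0 = 0 then 1 else 0)
      = (if e ^ 2 = 1 then 1 else 0) := by
    intro e
    simp [decomp_zero_sq]
  simp only [Function.comp, Equiv.coe_toEmbedding]
  rw [Finset.sum_congr rfl (fun e _ => hz e)]
  have : ∀ q : Fin n, (∑ e : Perm (Fin n),
      if (Equiv.Perm.decomposeFin.symm (q.succ, e)) ^ 2 = 1 ∧
        (Equiv.Perm.decomposeFin.symm (q.succ, e)) 0 = 0 then 1 else 0) = 0 := by
    intro q
    refine Finset.sum_eq_zero fun e _ => ?_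
    rw [if_neg (h2 q e)]
  rw [Finset.sum_congr rfl (fun q _ => this q), Finset.sum_const, smul_zero, add_zero]

theorem involutionCount_rec (n : ℕ) :
    involutionCount (n + 2) = involutionCount (n + 1) + (n + 1) * involutionCount n := by
  rw [stepB (n + 1)]
  congr 1
  rw [Finset.sum_congr rfl (fun q _ => (stepC n q).trans (stepD n)), Finset.sum_const,
    Finset.card_univ, Fintype.card_fin, smul_eq_mul]

theorem involutionCount_zero : involutionCount 0 = 1 := by
  rw [involutionCount]
  have : ∀ σ : Perm (Fin 0), σ ^ 2 = 1 := fun σ => Subsingleton.elim _ _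
  rw [Finset.filter_true_of_mem fun σ _ => this σ, Finset.card_univ, Fintype.card_perm]
  simp

theorem involutionCount_one : involutionCount 1 = 1 := by
  rw [involutionCount]
  have : ∀ σ : Perm (Fin 1), σ ^ 2 = 1 := fun σ => Subsingleton.elim _ _
  rw [Finset.filter_true_of_mem fun σ _ => this σ, Finset.card_univ, Fintype.card_perm]
  simp

theorem involutionCount_succ (n : ℕ) :
    involutionCount (n + 1) = involutionCount n + n * involutionCount (n - 1) := by
  cases n with
  | zero => simp [involutionCount_zero, involutionCount_one]
  | succ m => exact involutionCount_rec m

theorem rookModelDim_rec (k : ℕ) :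
    rookModelDim (k + 1) = 2 * rookModelDim k + k * rookModelDim (k - 1) := by
  have key : ∑ i ∈ Finset.range (k + 1), Nat.choose k i * involutionCount (i + 1)
      = rookModelDim k + k * rookModelDim (k - 1) := by
    have h1 : ∀ i, Nat.choose k i * involutionCount (i + 1)
        = Nat.choose k i * involutionCount i + Nat.choose k i * (i * involutionCount (i - 1)) := by
      intro i
      rw [involutionCount_succ i, Nat.mul_add]
    rw [Finset.sum_congr rfl fun i _ => h1 i, Finset.sum_add_distrib]
    congr 1
    rw [Finset.sum_range_succ']
    simp only [Nat.zero_sub, Nat.mul_zero, Nat.zero_mul, add_zero, mul_zero, zero_mul,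
      Nat.add_sub_cancel]
    have h2 : ∀ i, Nat.choose k (i + 1) * ((i + 1) * involutionCount i)
        = k * (Nat.choose (k - 1) i * involutionCount i) := by
      intro i
      rw [← mul_assoc, ← mul_assoc]
      congr 1
      cases k with
      | zero => simp
      | succ m =>
        rw [Nat.succ_sub_one, Nat.add_one_mul_choose_eq, mul_comm]
    rw [Finset.sum_congr rfl fun i _ => h2 i, ← Finset.mul_sum]
    cases k with
    | zero => simp
    | succ m =>
      rw [Nat.succ_sub_one]
      rfl
  rw [rookModelDim]
  rw [Finset.sum_range_succ']
  simp only [Nat.choose_zero_right, one_mul]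
  have h3 : ∀ i, Nat.choose (k + 1) (i + 1) = Nat.choose k i + Nat.choose k (i + 1) :=
    fun i => Nat.choose_succ_succ k i
  calc (∑ i ∈ Finset.range (k + 1), Nat.choose (k + 1) (i + 1) * involutionCount (i + 1))
        + involutionCount 0
      = (∑ i ∈ Finset.range (k + 1), (Nat.choose k i * involutionCount (i + 1)
          + Nat.choose k (i + 1) * involutionCount (i + 1))) + involutionCount 0 := by
        rw [Finset.sum_congr rfl fun i _ => by rw [h3 i, Nat.add_mul]]
    _ = (∑ i ∈ Finset.range (k + 1), Nat.choose k i * involutionCount (i + 1))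
        + ((∑ i ∈ Finset.range (k + 1), Nat.choose k (i + 1) * involutionCount (i + 1))
          + involutionCount 0) := by rw [Finset.sum_add_distrib]; ring
    _ = (rookModelDim k + k * rookModelDim (k - 1)) + rookModelDim k := by
        rw [key]
        congr 1
        have hL : ∑ i ∈ Finset.range (k + 1), Nat.choose k (i + 1) * involutionCount (i + 1)
            = ∑ i ∈ Finset.range k, Nat.choose k (i + 1) * involutionCount (i + 1) := by
          rw [Finset.sum_range_succ]
          simp [Nat.choose_succ_self]
        rw [hL, rookModelDim, Finset.sum_range_succ' _ k, Nat.choose_zero_right, one_mul]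
    _ = 2 * rookModelDim k + k * rookModelDim (k - 1) := by ring

theorem rookModelDim_zero : rookModelDim 0 = 1 := by
  simp [rookModelDim, involutionCount_zero]

theorem rookModelDim_one : rookModelDim 1 = 2 := by
  simp [rookModelDim, Finset.sum_range_succ, involutionCount_zero, involutionCount_one]

end Combinatorics

section SeriesPart

private noncomputable def G : PowerSeries ℚ :=
  PowerSeries.C (1 / 2) * PowerSeries.X ^ 2 + 2 * PowerSeries.X

private lemma two_eq : (2 : PowerSeries ℚ) = PowerSeries.C 2 := by
  simp [map_ofNat]

private lemma coeff_G_pow_eq_zero {b m : ℕ} (h : b < m) :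
    PowerSeries.coeff b (G ^ m) = 0 := by
  have : G = PowerSeries.X * (PowerSeries.C (1 / 2) * PowerSeries.X + 2) := by rw [G]; ring
  rw [this, mul_pow, PowerSeries.coeff_X_pow_mul' _ m b, if_neg (by omega)]

private lemma deriv_G : PowerSeries.derivativeFun G = PowerSeries.X + 2 := by
  ext n
  rw [show G.derivativeFun = PowerSeries.derivative ℚ G from rfl, PowerSeries.coeff_derivative]
  rcases n with _ | _ | n
  · simp [G, two_eq, PowerSeries.coeff_X_pow, PowerSeries.coeff_C]
  · simp [G, two_eq, PowerSeries.coeff_X_pow, PowerSeries.coeff_C]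
    norm_num
  · simp [G, two_eq, PowerSeries.coeff_X_pow, PowerSeries.coeff_C, PowerSeries.coeff_X]

/-- The derivative of `G ^ m` coefficientwise. -/
private lemma key1 (m n : ℕ) :
    ((n : ℚ) + 1) * PowerSeries.coeff (n + 1) (G ^ m)
      = m * PowerSeries.coeff n (G ^ (m - 1) * (PowerSeries.X + 2)) := by
  have hD : PowerSeries.derivative ℚ (G ^ m)
      = (m : ℕ) • (G ^ (m - 1) • PowerSeries.derivative ℚ G) :=
    Derivation.leibniz_pow (D := PowerSeries.derivative ℚ) (a := G) m
  have hdG : PowerSeries.derivative ℚ G = PowerSeries.X + 2 := deriv_G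
  have h := PowerSeries.coeff_derivative (G ^ m) n
  rw [hD, hdG, smul_eq_mul, map_nsmul, nsmul_eq_mul] at h
  rw [mul_comm ((n : ℚ) + 1), ← h]

lemma coeff_two_mul (n : ℕ) (f : PowerSeries ℚ) :
    PowerSeries.coeff n (2 * f) = 2 * PowerSeries.coeff n f := by
  rw [two_eq, PowerSeries.coeff_C_mul]

lemma coeff_add_two_mul (n : ℕ) (f : PowerSeries ℚ) :
    PowerSeries.coeff n ((PowerSeries.X + 2) * f)
      = PowerSeries.coeff n (PowerSeries.X * f) + 2 * PowerSeries.coeff n f := by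
  rw [add_mul, map_add, coeff_two_mul]

lemma derivF (n : ℕ) :
    ((n : ℚ) + 1) * PowerSeries.coeff (n + 1) (expComp G)
      = PowerSeries.coeff n ((PowerSeries.X + 2) * expComp G) := by
  have lhs : ((n : ℚ) + 1) * PowerSeries.coeff (n + 1) (expComp G)
      = ∑ i ∈ Finset.range (n + 1),
          PowerSeries.coeff n (G ^ i * (PowerSeries.X + 2)) / (i.factorial : ℚ) := by
    rw [expComp, PowerSeries.coeff_mk, Finset.mul_sum, Finset.sum_range_succ']
    have h0 : ((n : ℚ) + 1) * (PowerSeries.coeff (n + 1) (G ^ 0) / (Nat.factorial 0 : ℚ))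
        = 0 := by
      simp [PowerSeries.coeff_one]
    rw [h0, add_zero]
    refine Finset.sum_congr rfl fun i _ => ?_
    rw [div_eq_mul_inv, ← mul_assoc, key1 (i + 1) n, Nat.add_sub_cancel]
    rw [Nat.factorial_succ]
    push_cast
    rw [mul_inv]
    rw [div_eq_mul_inv]
    field_simp
  have claimX : PowerSeries.coeff n (PowerSeries.X * expComp G)
      = ∑ i ∈ Finset.range (n + 1),
          PowerSeries.coeff n (PowerSeries.X * G ^ i) / (i.factorial : ℚ) := by
    cases n with
    | zero =>
      have : ∀ f : PowerSeries ℚ, PowerSeries.coeff 0 (PowerSeries.X * f) = 0 := by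
        intro f
        rw [PowerSeries.coeff_zero_eq_constantCoeff, map_mul]
        simp
      rw [this]
      simp [this]
    | succ j =>
      rw [PowerSeries.coeff_succ_X_mul, expComp, PowerSeries.coeff_mk]
      have : ∀ i ∈ Finset.range (j + 2),
          PowerSeries.coeff (j + 1) (PowerSeries.X * G ^ i) / (i.factorial : ℚ)
            = PowerSeries.coeff j (G ^ i) / (i.factorial : ℚ) := by
        intro i _
        rw [PowerSeries.coeff_succ_X_mul]
      rw [Finset.sum_congr rfl this, Finset.sum_range_succ _ (j + 1),
        coeff_G_pow_eq_zero (by omega : j < j + 1), zero_div, add_zero]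
  have claim2 : PowerSeries.coeff n (expComp G)
      = ∑ i ∈ Finset.range (n + 1),
          PowerSeries.coeff n (G ^ i) / (i.factorial : ℚ) := by
    rw [expComp, PowerSeries.coeff_mk]
  rw [lhs, coeff_add_two_mul, claimX, claim2, Finset.mul_sum, ← Finset.sum_add_distrib]
  refine Finset.sum_congr rfl fun i _ => ?_
  rw [mul_comm (G ^ i), coeff_add_two_mul]
  ring

noncomputable def R : PowerSeries ℚ :=
  PowerSeries.mk fun k => (rookModelDim k : ℚ) / (k.factorial : ℚ)

lemma coeff_zero_X_mul (f : PowerSeries ℚ) :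
    PowerSeries.coeff 0 (PowerSeries.X * f) = 0 := by
  rw [PowerSeries.coeff_zero_eq_constantCoeff, map_mul]
  simp

lemma derivR (n : ℕ) :
    ((n : ℚ) + 1) * PowerSeries.coeff (n + 1) R
      = PowerSeries.coeff n ((PowerSeries.X + 2) * R) := by
  rw [coeff_add_two_mul]
  cases n with
  | zero =>
    rw [coeff_zero_X_mul, R, PowerSeries.coeff_mk, PowerSeries.coeff_mk,
      rookModelDim_zero, rookModelDim_one]
    norm_num
  | succ j =>
    rw [PowerSeries.coeff_succ_X_mul, R, PowerSeries.coeff_mk, PowerSeries.coeff_mk,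
      PowerSeries.coeff_mk]
    have hrec : (rookModelDim (j + 2) : ℚ)
        = 2 * (rookModelDim (j + 1) : ℚ) + ((j : ℚ) + 1) * (rookModelDim j : ℚ) := by
      have := rookModelDim_rec (j + 1)
      rw [Nat.succ_sub_one] at this
      exact_mod_cast this
    rw [show j + 1 + 1 = j + 2 from rfl, hrec, Nat.factorial_succ (j + 1), Nat.factorial_succ j]
    have h1 : ((j : ℚ) + 1) ≠ 0 := by positivity
    have h2 : ((j.factorial : ℚ)) ≠ 0 := Nat.cast_ne_zero.mpr j.factorial_ne_zero
    push_cast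
    field_simp
    ring

theorem main : expComp G = R := by
  ext k
  induction k using Nat.strong_induction_on with
  | _ k ih =>
    cases k with
    | zero =>
      rw [expComp, PowerSeries.coeff_mk, R, PowerSeries.coeff_mk, rookModelDim_zero]
      simp
    | succ j =>
      have h1 := derivF j
      have h2 := derivR j
      have hx : PowerSeries.coeff j (PowerSeries.X * expComp G)
          = PowerSeries.coeff j (PowerSeries.X * R) := by
        cases j with
        | zero => rw [coeff_zero_X_mul, coeff_zero_X_mul]
        | succ i =>
          rw [PowerSeries.coeff_succ_X_mul, PowerSeries.coeff_succ_X_mul, ih i (by omega)]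
      rw [coeff_add_two_mul, hx, ih j (by omega)] at h1
      rw [coeff_add_two_mul] at h2
      have := h1.trans h2.symm
      exact mul_left_cancel₀ (by positivity : ((j : ℚ) + 1) ≠ 0) this

end SeriesPart

/-- The exponential generating function identity
`exp(X²/2 + 2X) = Σ_{k≥0} r_k · X^k/k!`. -/
theorem symmetric_rook_egf :
    PowerSeries.constantCoeff (R := ℚ)
        (PowerSeries.C (1 / 2) * PowerSeries.X ^ 2 + 2 * PowerSeries.X) = 0 ∧
    expComp (PowerSeries.C (1 / 2) * PowerSeries.X ^ 2 + 2 * PowerSeries.X)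
      = PowerSeries.mk (fun k => (rookModelDim k : ℚ) / (k.factorial : ℚ)) := by
  constructor
  · simp
  · exact main
end

section
/- Fix k, r, ℓ ∈ ℕ with 2ℓ ≤ r ≤ k. The number of triples (σ, C, E), where σ is an involution of Fin k, C is a subset of the set of 2-cycles of σ such that σ has exactly ℓ + |C| two-element orbits, and E is a subset of the fixed-point set of σ such that the number of fixed points of σ not in E equals r − 2ℓ, equals Σ_{c=0}^{⌊(k−r)/2⌋} C(k, r)·C(k−r, 2c)·(2c−1)!!·C(r, 2ℓ)·(2ℓ−1)!!. (Such triples are in bijection with the vertically symmetric rook-Brauer diagrams on k vertices of rank r with ℓ transpositions, |C| contractions, r − 2ℓ fixed points, and |E| pairs of empty vertices.) -/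
open Finset

/-- The set of 2-cycles of a permutation `σ` of `Fin k`, encoded as ordered
pairs `(i, j)` with `i < j`, `σ i = j` and `σ j = i`. -/
def twoCycles {k : ℕ} (σ : Equiv.Perm (Fin k)) : Finset (Fin k × Fin k) :=
  Finset.univ.filter fun p => p.1 < p.2 ∧ σ p.1 = p.2 ∧ σ p.2 = p.1

/-- The set of fixed points of a permutation `σ` of `Fin k`. -/
def fixedPts {k : ℕ} (σ : Equiv.Perm (Fin k)) : Finset (Fin k) :=
  Finset.univ.filter fun i => σ i = i

variable {k : ℕ}

def isM {k : ℕ} (M : Finset (Fin k × Fin k)) : Prop :=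
  (∀ p ∈ M, p.1 < p.2) ∧
    ∀ p ∈ M, ∀ q ∈ M, p ≠ q → p.1 ≠ q.1 ∧ p.1 ≠ q.2 ∧ p.2 ≠ q.1 ∧ p.2 ≠ q.2

instance {k : ℕ} (M : Finset (Fin k × Fin k)) : Decidable (isM M) := by
  unfold isM; infer_instance

def msupp {k : ℕ} (M : Finset (Fin k × Fin k)) : Finset (Fin k) :=
  M.biUnion fun p => {p.1, p.2}

lemma mem_msupp {M : Finset (Fin k × Fin k)} {i : Fin k} :
    i ∈ msupp M ↔ ∃ p ∈ M, p.1 = i ∨ p.2 = i := by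
  simp [msupp, or_comm, eq_comm]

lemma card_msupp {M : Finset (Fin k × Fin k)} (h : isM M) :
    (msupp M).card = 2 * M.card := by
  rw [msupp, card_biUnion, Finset.sum_congr rfl (fun p hp => ?_), Finset.sum_const,
    smul_eq_mul, mul_comm]
  · rw [card_insert_of_notMem (by simp [(h.1 p hp).ne]), card_singleton]
  · intro p hp q hq hpq
    have := h.2 p hp q hq hpq
    simp only [disjoint_insert_left, disjoint_insert_right, mem_insert, mem_singleton,
      disjoint_singleton_right, disjoint_singleton_left]
    push_neg
    tauto

lemma isM_mono {M N : Finset (Fin k × Fin k)} (h : isM M) (hNM : N ⊆ M) : isM N :=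
  ⟨fun p hp => h.1 p (hNM hp), fun p hp q hq hpq => h.2 p (hNM hp) q (hNM hq) hpq⟩

lemma isM_eq_of_snd {M : Finset (Fin k × Fin k)} (h : isM M) {p q} (hp : p ∈ M) (hq : q ∈ M)
    (e : p.2 = q.2) : p = q := by
  by_contra hne; exact (h.2 p hp q hq hne).2.2.2 e

lemma isM_eq_of_fst {M : Finset (Fin k × Fin k)} (h : isM M) {p q} (hp : p ∈ M) (hq : q ∈ M)
    (e : p.1 = q.1) : p = q := by
  by_contra hne; exact (h.2 p hp q hq hne).1 e

lemma msupp_insert {M : Finset (Fin k × Fin k)} {p} :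
    msupp (insert p M) = {p.1, p.2} ∪ msupp M := by
  simp [msupp, Finset.biUnion_insert]

lemma msupp_erase {M : Finset (Fin k × Fin k)} (h : isM M) {p} (hp : p ∈ M) :
    msupp (M.erase p) = (msupp M) \ {p.1, p.2} := by
  ext i
  simp only [mem_msupp, Finset.mem_erase, Finset.mem_sdiff, mem_insert, mem_singleton]
  constructor
  · rintro ⟨q, ⟨hqp, hq⟩, hi⟩
    refine ⟨⟨q, hq, hi⟩, ?_⟩
    have := h.2 q hq p hp hqp
    rintro (rfl | rfl) <;> tauto
  · rintro ⟨⟨q, hq, hi⟩, hne⟩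
    refine ⟨q, ⟨?_, hq⟩, hi⟩
    rintro rfl
    tauto

/-- the partner of `x` in `M`. -/
noncomputable def ptn {k : ℕ} (M : Finset (Fin k × Fin k)) (x : Fin k) : Fin k :=
  if h : ∃ p ∈ M, p.2 = x then h.choose.1 else x

lemma ptn_mem {M : Finset (Fin k × Fin k)} (h : isM M) {x : Fin k} (hx : x ∈ msupp M)
    (hmax : ∀ i ∈ msupp M, i ≤ x) : (ptn M x, x) ∈ M ∧ ptn M x < x := by
  obtain ⟨p, hp, hor⟩ := mem_msupp.1 hx
  have hp2 : p.2 = x := by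
    rcases hor with h1 | h2
    · exfalso
      have hlt : x < p.2 := h1 ▸ h.1 p hp
      have h2m : p.2 ∈ msupp M := mem_msupp.2 ⟨p, hp, Or.inr rfl⟩
      exact absurd (lt_of_lt_of_le hlt (hmax p.2 h2m)) (lt_irrefl x)
    · exact h2
  have hex : ∃ q ∈ M, q.2 = x := ⟨p, hp, hp2⟩
  have hch := hex.choose_spec
  have hpe : hex.choose = p := isM_eq_of_snd h hch.1 hp (hch.2.trans hp2.symm)
  have hptn : ptn M x = p.1 := by rw [ptn, dif_pos hex, hpe]
  rw [hptn]
  have hlt := h.1 p hp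
  rw [hp2] at hlt
  refine ⟨?_, hlt⟩
  rw [← hp2]
  simpa using hp

lemma ptn_insert {N : Finset (Fin k × Fin k)} {y x : Fin k} (hx : x ∉ msupp N) :
    ptn (insert (y, x) N) x = y := by
  have hex : ∃ p ∈ insert (y, x) N, p.2 = x := ⟨(y, x), mem_insert_self _ _, rfl⟩
  have hch := hex.choose_spec
  have : hex.choose = (y, x) := by
    rcases mem_insert.1 hch.1 with h1 | h1
    · exact h1
    · exact absurd (mem_msupp.2 ⟨hex.choose, h1, Or.inr hch.2⟩) hx
  rw [ptn, dif_pos hex, this]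

lemma isM_insert {N : Finset (Fin k × Fin k)} {y x : Fin k} (hN : isM N) (hyx : y < x)
    (hxs : x ∉ msupp N) (hys : y ∉ msupp N) : isM (insert (y, x) N) := by
  have ep : ∀ q ∈ N, q.1 ≠ x ∧ q.1 ≠ y ∧ q.2 ≠ x ∧ q.2 ≠ y := fun q hq =>
    ⟨fun e => hxs (mem_msupp.2 ⟨q, hq, Or.inl e⟩), fun e => hys (mem_msupp.2 ⟨q, hq, Or.inl e⟩),
     fun e => hxs (mem_msupp.2 ⟨q, hq, Or.inr e⟩), fun e => hys (mem_msupp.2 ⟨q, hq, Or.inr e⟩)⟩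
  constructor
  · intro p hp
    rcases mem_insert.1 hp with rfl | hp
    · exact hyx
    · exact hN.1 p hp
  · intro p hp q hq hpq
    rcases mem_insert.1 hp with rfl | hp <;> rcases mem_insert.1 hq with rfl | hq
    · exact absurd rfl hpq
    · have := ep q hq; refine ⟨?_, ?_, ?_, ?_⟩ <;> simp <;> tauto
    · have := ep p hp; refine ⟨?_, ?_, ?_, ?_⟩ <;> simp <;> tauto
    · exact hN.2 p hp q hq hpq

lemma pm_card : ∀ (c : ℕ) (t : Finset (Fin k)), t.card = 2 * c →
    (univ.filter fun M : Finset (Fin k × Fin k) => isM M ∧ msupp M = t).card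
      = Nat.doubleFactorial (2 * c - 1) := by
  intro c
  induction c with
  | zero =>
    intro t ht
    have : t = ∅ := card_eq_zero.1 (by simpa using ht)
    subst this
    have he : (univ.filter fun M : Finset (Fin k × Fin k) => isM M ∧ msupp M = ∅) = {∅} := by
      ext M
      simp only [mem_filter, mem_univ, true_and, mem_singleton]
      constructor
      · rintro ⟨_, hs⟩
        refine Finset.eq_empty_iff_forall_notMem.2 fun p hp => ?_
        have := mem_msupp.2 ⟨p, hp, Or.inl rfl⟩
        rw [hs] at this
        exact absurd this (Finset.notMem_empty _)
      · rintro rfl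
        exact ⟨⟨by simp, by simp⟩, by simp [msupp]⟩
    rw [he]
    simp [Nat.doubleFactorial]
  | succ c ih =>
    intro t ht
    have htne : t.Nonempty := by rw [← card_pos, ht]; omega
    set x := t.max' htne with hxdef
    have hxt : x ∈ t := t.max'_mem htne
    have hmax : ∀ i ∈ t, i ≤ x := fun i hi => t.le_max' i hi
    set S := (univ.filter fun M : Finset (Fin k × Fin k) => isM M ∧ msupp M = t) with hSdef
    set T := (t.erase x).sigma (fun y =>
      univ.filter fun N : Finset (Fin k × Fin k) => isM N ∧ msupp N = (t.erase x).erase y)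
      with hTdef
    have hST : S.card = T.card := by
      refine Finset.card_bij' (fun M _ => ⟨ptn M x, M.erase (ptn M x, x)⟩)
        (fun p _ => insert (p.1, x) p.2) ?_ ?_ ?_ ?_
      · intro M hM
        obtain ⟨h1, h2⟩ := (mem_filter.1 hM).2
        have hxs : x ∈ msupp M := h2 ▸ hxt
        have hmax' : ∀ i ∈ msupp M, i ≤ x := fun i hi => hmax i (h2 ▸ hi)
        obtain ⟨hmem, hlt⟩ := ptn_mem h1 hxs hmax'
        have hyt : ptn M x ∈ t := h2 ▸ mem_msupp.2 ⟨(ptn M x, x), hmem, Or.inl rfl⟩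
        rw [mem_sigma]
        refine ⟨Finset.mem_erase.2 ⟨hlt.ne, hyt⟩, ?_⟩
        rw [mem_filter]
        refine ⟨mem_univ _, isM_mono h1 (Finset.erase_subset _ _), ?_⟩
        rw [msupp_erase h1 hmem, h2]
        ext i
        simp only [Finset.mem_sdiff, Finset.mem_erase, mem_insert, mem_singleton]
        tauto
      · rintro ⟨y, N⟩ hp
        rw [mem_sigma] at hp
        obtain ⟨hy, hN⟩ := hp
        obtain ⟨h1, h2⟩ := (mem_filter.1 hN).2
        have hyt : y ∈ t := Finset.mem_of_mem_erase hy
        have hyx : y < x := lt_of_le_of_ne (hmax y hyt) (Finset.ne_of_mem_erase hy)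
        have hxs : x ∉ msupp N := by
          rw [h2]
          intro hc
          exact absurd (Finset.mem_of_mem_erase hc) (Finset.notMem_erase _ _)
        have hys : y ∉ msupp N := by rw [h2]; exact Finset.notMem_erase _ _
        rw [mem_filter]
        refine ⟨mem_univ _, isM_insert h1 hyx hxs hys, ?_⟩
        rw [msupp_insert, h2]
        ext i
        simp only [Finset.mem_union, mem_insert, mem_singleton, Finset.mem_erase]
        constructor
        · rintro ((rfl | rfl) | ⟨hne1, hne2, hi⟩) <;> first | exact hyt | exact hxt | exact hi
        · intro hi
          by_cases h1' : i = y
          · exact Or.inl (Or.inl h1')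
          by_cases h2' : i = x
          · exact Or.inl (Or.inr h2')
          · exact Or.inr ⟨h1', h2', hi⟩
      · intro M hM
        obtain ⟨h1, h2⟩ := (mem_filter.1 hM).2
        have hxs : x ∈ msupp M := h2 ▸ hxt
        have hmax' : ∀ i ∈ msupp M, i ≤ x := fun i hi => hmax i (h2 ▸ hi)
        obtain ⟨hmem, _⟩ := ptn_mem h1 hxs hmax'
        exact Finset.insert_erase hmem
      · rintro ⟨y, N⟩ hp
        rw [mem_sigma] at hp
        obtain ⟨hy, hN⟩ := hp
        obtain ⟨h1, h2⟩ := (mem_filter.1 hN).2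
        have hxs : x ∉ msupp N := by
          rw [h2]
          intro hc
          exact absurd (Finset.mem_of_mem_erase hc) (Finset.notMem_erase _ _)
        have hnm : (y, x) ∉ N := fun hc => hxs (mem_msupp.2 ⟨(y, x), hc, Or.inr rfl⟩)
        have hptn : ptn (insert (y, x) N) x = y := ptn_insert hxs
        simp only [hptn]
        congr 1
        exact Finset.erase_insert hnm
    rw [hST, hTdef, Finset.card_sigma]
    have hterm : ∀ y ∈ t.erase x,
        (univ.filter fun N : Finset (Fin k × Fin k) =>
          isM N ∧ msupp N = (t.erase x).erase y).card = Nat.doubleFactorial (2 * c - 1) := by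
      intro y hy
      refine ih _ ?_
      rw [Finset.card_erase_of_mem hy, Finset.card_erase_of_mem hxt, ht]
      omega
    rw [Finset.sum_congr rfl hterm, Finset.sum_const, smul_eq_mul,
      Finset.card_erase_of_mem hxt, ht]
    have : 2 * (c + 1) - 1 = 2 * c + 1 := by omega
    rw [this, Nat.doubleFactorial_add_one]

lemma match_card (c : ℕ) :
    (univ.filter fun M : Finset (Fin k × Fin k) => isM M ∧ M.card = c).card
      = k.choose (2 * c) * Nat.doubleFactorial (2 * c - 1) := by
  have hsplit : (univ.filter fun M : Finset (Fin k × Fin k) => isM M ∧ M.card = c)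
      = ((univ : Finset (Fin k)).powersetCard (2 * c)).biUnion
          (fun t => univ.filter fun M => isM M ∧ msupp M = t) := by
    ext M
    simp only [mem_filter, mem_univ, true_and, mem_biUnion, Finset.mem_powersetCard]
    constructor
    · rintro ⟨h1, rfl⟩
      exact ⟨msupp M, ⟨subset_univ _, card_msupp h1⟩, h1, rfl⟩
    · rintro ⟨t, ⟨_, htc⟩, h1, rfl⟩
      refine ⟨h1, ?_⟩
      have := card_msupp h1
      omega
  rw [hsplit, card_biUnion]
  · rw [Finset.sum_congr rfl (fun t ht => pm_card c t (Finset.mem_powersetCard.1 ht).2),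
      Finset.sum_const, smul_eq_mul, Finset.card_powersetCard, card_univ, Fintype.card_fin]
  · intro t1 h1 t2 h2 hne
    rw [Function.onFun, Finset.disjoint_left]
    intro M hM1 hM2
    exact hne ((mem_filter.1 hM1).2.2 ▸ (mem_filter.1 hM2).2.2 ▸ rfl)

/-- the involution associated to a matching -/
noncomputable def mperm {k : ℕ} (M : Finset (Fin k × Fin k)) : Fin k → Fin k := fun i =>
  if h : ∃ p ∈ M, p.1 = i then h.choose.2 else if h2 : ∃ p ∈ M, p.2 = i then h2.choose.1 else i

lemma mperm_pair {M : Finset (Fin k × Fin k)} (h : isM M) {p} (hp : p ∈ M) :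
    mperm M p.1 = p.2 ∧ mperm M p.2 = p.1 := by
  constructor
  · have hex : ∃ q ∈ M, q.1 = p.1 := ⟨p, hp, rfl⟩
    have hch := hex.choose_spec
    have : hex.choose = p := isM_eq_of_fst h hch.1 hp hch.2
    rw [mperm, dif_pos hex, this]
  · have hne : ¬∃ q ∈ M, q.1 = p.2 := by
      rintro ⟨q, hq, hq1⟩
      have hqp : q ≠ p := by rintro rfl; exact (h.1 q hq).ne hq1
      exact (h.2 q hq p hp hqp).2.1 hq1
    have hex2 : ∃ q ∈ M, q.2 = p.2 := ⟨p, hp, rfl⟩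
    have hch := hex2.choose_spec
    have : hex2.choose = p := isM_eq_of_snd h hch.1 hp hch.2
    rw [mperm, dif_neg hne, dif_pos hex2, this]

lemma mperm_fix {M : Finset (Fin k × Fin k)} {i : Fin k} (hi : i ∉ msupp M) :
    mperm M i = i := by
  have h1 : ¬∃ p ∈ M, p.1 = i := fun ⟨p, hp, e⟩ => hi (mem_msupp.2 ⟨p, hp, Or.inl e⟩)
  have h2 : ¬∃ p ∈ M, p.2 = i := fun ⟨p, hp, e⟩ => hi (mem_msupp.2 ⟨p, hp, Or.inr e⟩)
  rw [mperm, dif_neg h1, dif_neg h2]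

lemma mperm_invol {M : Finset (Fin k × Fin k)} (h : isM M) :
    Function.Involutive (mperm M) := by
  intro i
  by_cases hi : i ∈ msupp M
  · obtain ⟨p, hp, hor⟩ := mem_msupp.1 hi
    rcases hor with rfl | rfl
    · rw [(mperm_pair h hp).1, (mperm_pair h hp).2]
    · rw [(mperm_pair h hp).2, (mperm_pair h hp).1]
  · rw [mperm_fix hi, mperm_fix hi]

lemma toPerm_sq {f : Fin k → Fin k} (hf : Function.Involutive f) : hf.toPerm ^ 2 = 1 := by
  ext i
  simp [sq, hf i]

lemma perm_sq_apply {σ : Equiv.Perm (Fin k)} (hσ : σ ^ 2 = 1) (i : Fin k) : σ (σ i) = i := by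
  have := congrArg (fun τ : Equiv.Perm (Fin k) => τ i) hσ
  simpa [sq] using this

lemma mem_twoCycles {σ : Equiv.Perm (Fin k)} {p : Fin k × Fin k} :
    p ∈ twoCycles σ ↔ p.1 < p.2 ∧ σ p.1 = p.2 ∧ σ p.2 = p.1 := by
  simp [twoCycles]

lemma isM_twoCycles {σ : Equiv.Perm (Fin k)} : isM (twoCycles σ) := by
  constructor
  · exact fun p hp => (mem_twoCycles.1 hp).1
  · intro p hp q hq hpq
    obtain ⟨hp1, hp2, hp3⟩ := mem_twoCycles.1 hp
    obtain ⟨hq1, hq2, hq3⟩ := mem_twoCycles.1 hq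
    refine ⟨fun e => hpq ?_, fun e => ?_, fun e => ?_, fun e => hpq ?_⟩
    · have : p.2 = q.2 := by rw [← hp2, ← hq2, e]
      exact Prod.ext e this
    · have h1 : p.2 = q.1 := by rw [← hp2, e, hq3]
      have := hp1
      rw [e, h1] at this
      exact absurd (hq1.trans this) (lt_irrefl _)
    · have h1 : p.1 = q.2 := by rw [← hp3, e, hq2]
      have := hq1
      rw [← e, ← h1] at this
      exact absurd (hp1.trans this) (lt_irrefl _)
    · have : p.1 = q.1 := by rw [← hp3, ← hq3, e]
      exact Prod.ext this e
  
lemma fixedPts_eq {σ : Equiv.Perm (Fin k)} (hσ : σ ^ 2 = 1) :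
    fixedPts σ = univ \ msupp (twoCycles σ) := by
  ext i
  simp only [fixedPts, mem_filter, mem_univ, true_and, Finset.mem_sdiff]
  constructor
  · intro hfix hc
    obtain ⟨p, hp, hor⟩ := mem_msupp.1 hc
    obtain ⟨hlt, h1, h2⟩ := mem_twoCycles.1 hp
    rcases hor with rfl | rfl
    · rw [hfix] at h1; exact hlt.ne h1
    · rw [hfix] at h2; exact hlt.ne h2.symm
  · intro hc
    by_contra hfix
    rcases lt_or_gt_of_ne (Ne.symm hfix) with hlt | hlt
    · exact hc (mem_msupp.2 ⟨(i, σ i), mem_twoCycles.2 ⟨hlt, rfl, perm_sq_apply hσ i⟩,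
        Or.inl rfl⟩)
    · exact hc (mem_msupp.2 ⟨(σ i, i), mem_twoCycles.2 ⟨hlt, perm_sq_apply hσ i, rfl⟩,
        Or.inr rfl⟩)

lemma mperm_twoCycles {σ : Equiv.Perm (Fin k)} (hσ : σ ^ 2 = 1) (i : Fin k) :
    mperm (twoCycles σ) i = σ i := by
  have hM : isM (twoCycles σ) := isM_twoCycles
  by_cases hfix : σ i = i
  · have hns : i ∉ msupp (twoCycles σ) := by
      have hmem : i ∈ univ \ msupp (twoCycles σ) := by
        rw [← fixedPts_eq hσ]
        simp [fixedPts, hfix]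
      exact (Finset.mem_sdiff.1 hmem).2
    rw [mperm_fix hns, hfix]
  · have hinv : σ (σ i) = i := perm_sq_apply hσ i
    rcases lt_or_gt_of_ne (fun e : i = σ i => hfix e.symm) with hlt | hlt
    · have hp : (i, σ i) ∈ twoCycles σ := mem_twoCycles.2 ⟨hlt, rfl, hinv⟩
      exact (mperm_pair hM hp).1
    · have hp : (σ i, i) ∈ twoCycles σ := mem_twoCycles.2 ⟨hlt, hinv, rfl⟩
      exact (mperm_pair hM hp).2

lemma twoCycles_mperm {M : Finset (Fin k × Fin k)} (h : isM M) :
    twoCycles (mperm_invol h).toPerm = M := by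
  ext p
  rw [mem_twoCycles]
  simp only [Function.Involutive.coe_toPerm]
  constructor
  · rintro ⟨hlt, h1, h2⟩
    have hne : mperm M p.1 ≠ p.1 := by rw [h1]; exact hlt.ne'
    have hsup : p.1 ∈ msupp M := by
      by_contra hc; exact hne (mperm_fix hc)
    obtain ⟨q, hq, hor⟩ := mem_msupp.1 hsup
    rcases hor with hqe | hqe
    · have hq2 := (mperm_pair h hq).1
      rw [hqe, h1] at hq2
      have : p = q := Prod.ext hqe.symm hq2
      rw [this]; exact hq
    · exfalso
      have h3 := (mperm_pair h hq).2
      rw [hqe, h1] at h3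
      have hqlt := h.1 q hq
      rw [hqe, ← h3] at hqlt
      exact absurd (hlt.trans hqlt) (lt_irrefl _)
  · intro hp
    exact ⟨h.1 p hp, (mperm_pair h hp).1, (mperm_pair h hp).2⟩

lemma dfac_key (n : ℕ) :
    2 ^ n * n.factorial * Nat.doubleFactorial (2 * n - 1) = (2 * n).factorial := by
  cases n with
  | zero => simp [Nat.doubleFactorial]
  | succ n =>
    have h1 : 2 * (n + 1) = (2 * n + 1) + 1 := by ring
    have h2 : 2 * (n + 1) - 1 = 2 * n + 1 := by omega
    rw [h2]
    calc 2 ^ (n + 1) * (n + 1).factorial * Nat.doubleFactorial (2 * n + 1)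
        = Nat.doubleFactorial (2 * (n + 1)) * Nat.doubleFactorial (2 * n + 1) := by
          rw [Nat.doubleFactorial_two_mul]
      _ = Nat.doubleFactorial ((2 * n + 1) + 1) * Nat.doubleFactorial (2 * n + 1) := by rw [h1]
      _ = ((2 * n + 1) + 1).factorial := (Nat.factorial_eq_mul_doubleFactorial _).symm
      _ = (2 * (n + 1)).factorial := by rw [← h1]

lemma dfac_cast (n : ℕ) :
    (Nat.doubleFactorial (2 * n - 1) : ℚ) = (2 * n).factorial / (2 ^ n * n.factorial) := by
  have h : ((2 ^ n * n.factorial * Nat.doubleFactorial (2 * n - 1) : ℕ) : ℚ)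
      = ((2 * n).factorial : ℚ) := by exact_mod_cast congrArg (Nat.cast (R := ℚ)) (dfac_key n)
  push_cast at h
  rw [eq_div_iff (by positivity)]
  linarith [h]

lemma term_eq (kk r ℓ c : ℕ) (hℓ : 2 * ℓ ≤ r) (hr : r ≤ kk) (hc : 2 * c ≤ kk - r) :
    kk.choose (2 * (ℓ + c)) * Nat.doubleFactorial (2 * (ℓ + c) - 1) * (ℓ + c).choose ℓ
        * (kk - 2 * (ℓ + c)).choose (r - 2 * ℓ)
      = kk.choose r * (kk - r).choose (2 * c) * Nat.doubleFactorial (2 * c - 1)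
        * r.choose (2 * ℓ) * Nat.doubleFactorial (2 * ℓ - 1) := by
  obtain ⟨a, rfl⟩ : ∃ a, r = 2 * ℓ + a := ⟨r - 2 * ℓ, by omega⟩
  obtain ⟨d, rfl⟩ : ∃ d, kk = 2 * ℓ + a + 2 * c + d := ⟨kk - (2 * ℓ + a) - 2 * c, by omega⟩
  rw [show 2 * ℓ + a + 2 * c + d - 2 * (ℓ + c) = a + d from by omega,
    show 2 * ℓ + a - 2 * ℓ = a from by omega,
    show 2 * ℓ + a + 2 * c + d - (2 * ℓ + a) = 2 * c + d from by omega]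
  apply @Nat.cast_injective ℚ _ _
  push_cast
  rw [Nat.cast_choose ℚ (show 2 * (ℓ + c) ≤ 2 * ℓ + a + 2 * c + d by omega),
    Nat.cast_choose ℚ (show ℓ ≤ ℓ + c by omega),
    Nat.cast_choose ℚ (show a ≤ a + d by omega),
    Nat.cast_choose ℚ (show 2 * ℓ + a ≤ 2 * ℓ + a + 2 * c + d by omega),
    Nat.cast_choose ℚ (show 2 * c ≤ 2 * c + d by omega),
    Nat.cast_choose ℚ (show 2 * ℓ ≤ 2 * ℓ + a by omega),
    dfac_cast (ℓ + c), dfac_cast c, dfac_cast ℓ,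
    show 2 * ℓ + a + 2 * c + d - 2 * (ℓ + c) = a + d from by omega,
    show ℓ + c - ℓ = c from by omega,
    show a + d - a = d from by omega,
    show 2 * ℓ + a + 2 * c + d - (2 * ℓ + a) = 2 * c + d from by omega,
    show 2 * c + d - 2 * c = d from by omega,
    show 2 * ℓ + a - 2 * ℓ = a from by omega,
    show 2 * (ℓ + c) = 2 * ℓ + 2 * c from by ring]
  field_simp
  ring


/-- The number of triples `(σ, C, E)`, where `σ` is an involution of `Fin k`,
`C` is a subset of the 2-cycles of `σ` such that `σ` has exactly `ℓ + |C|`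
2-cycles, and `E` is a subset of the fixed points of `σ` such that exactly
`r - 2ℓ` fixed points lie outside `E`, equals
`Σ_{c=0}^{⌊(k-r)/2⌋} C(k,r)·C(k-r,2c)·(2c-1)!!·C(r,2ℓ)·(2ℓ-1)!!`.
These triples are in bijection with the vertically symmetric rook-Brauer
diagrams on `k` vertices of rank `r` with `ℓ` transpositions. -/
theorem symmetric_rook_brauer_diagram_count (k r ℓ : ℕ)
    (hℓ : 2 * ℓ ≤ r) (hr : r ≤ k) :
    (Finset.univ.filter
        (fun x : Equiv.Perm (Fin k) × Finset (Fin k × Fin k) × Finset (Fin k) =>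
          x.1 ^ 2 = 1 ∧ x.2.1 ⊆ twoCycles x.1 ∧
          (twoCycles x.1).card = ℓ + x.2.1.card ∧
          x.2.2 ⊆ fixedPts x.1 ∧ (fixedPts x.1 \ x.2.2).card = r - 2 * ℓ)).card
    = ∑ c ∈ Finset.range ((k - r) / 2 + 1),
        Nat.choose k r * Nat.choose (k - r) (2 * c) *
          Nat.doubleFactorial (2 * c - 1) * Nat.choose r (2 * ℓ) *
          Nat.doubleFactorial (2 * ℓ - 1) := by
  classical
  set T := (univ.filter
    (fun y : Finset (Fin k × Fin k) × Finset (Fin k × Fin k) × Finset (Fin k) =>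
      isM y.1 ∧ y.2.1 ⊆ y.1 ∧ y.1.card = ℓ + y.2.1.card ∧
      y.2.2 ⊆ univ \ msupp y.1 ∧ ((univ \ msupp y.1) \ y.2.2).card = r - 2 * ℓ)) with hT
  have hTmem : ∀ y, y ∈ T ↔ isM y.1 ∧ y.2.1 ⊆ y.1 ∧ y.1.card = ℓ + y.2.1.card ∧
      y.2.2 ⊆ univ \ msupp y.1 ∧ ((univ \ msupp y.1) \ y.2.2).card = r - 2 * ℓ := by
    intro y; rw [hT, mem_filter]; simp
  have step1 : (Finset.univ.filter
      (fun x : Equiv.Perm (Fin k) × Finset (Fin k × Fin k) × Finset (Fin k) =>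
        x.1 ^ 2 = 1 ∧ x.2.1 ⊆ twoCycles x.1 ∧
        (twoCycles x.1).card = ℓ + x.2.1.card ∧
        x.2.2 ⊆ fixedPts x.1 ∧ (fixedPts x.1 \ x.2.2).card = r - 2 * ℓ)).card = T.card := by
    refine Finset.card_bij' (fun x _ => (twoCycles x.1, x.2.1, x.2.2))
      (fun y hy => ((mperm_invol ((hTmem y).1 hy).1).toPerm, y.2.1, y.2.2)) ?_ ?_ ?_ ?_
    · intro x hx
      obtain ⟨hσ, h2, h3, h4, h5⟩ := (mem_filter.1 hx).2
      rw [hTmem]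
      exact ⟨isM_twoCycles, h2, h3, by rw [← fixedPts_eq hσ]; exact h4,
        by rw [← fixedPts_eq hσ]; exact h5⟩
    · intro y hy
      obtain ⟨h1, h2, h3, h4, h5⟩ := (hTmem y).1 hy
      rw [mem_filter]
      have hsq := toPerm_sq (mperm_invol h1)
      have htc := twoCycles_mperm h1
      have hfp := fixedPts_eq hsq
      rw [htc] at hfp
      exact ⟨mem_univ _, hsq, by rw [htc]; exact h2, by rw [htc]; exact h3,
        by rw [hfp]; exact h4, by rw [hfp]; exact h5⟩
    · intro x hx
      obtain ⟨hσ, _⟩ := (mem_filter.1 hx).2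
      refine Prod.ext ?_ rfl
      ext i
      simp only [Function.Involutive.coe_toPerm]
      exact congrArg Fin.val (mperm_twoCycles hσ i)
    · intro y hy
      obtain ⟨h1, _⟩ := (hTmem y).1 hy
      exact Prod.ext (twoCycles_mperm h1) rfl
  rw [step1]
  -- fiber count over the matching
  have fiber : ∀ M : Finset (Fin k × Fin k), isM M →
      (T.filter fun y => y.1 = M).card
        = M.card.choose ℓ * (k - 2 * M.card).choose (r - 2 * ℓ) := by
    intro M hM
    have hprod : T.filter (fun y => y.1 = M) = {M} ×ˢ
        ((M.powerset.filter fun C => M.card = ℓ + C.card) ×ˢ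
         ((univ \ msupp M).powerset.filter fun E =>
            ((univ \ msupp M) \ E).card = r - 2 * ℓ)) := by
      ext ⟨m, C, E⟩
      rw [mem_filter, hTmem]
      simp only [Finset.mem_product, mem_singleton, Finset.mem_powerset, mem_filter]
      constructor
      · rintro ⟨⟨h1, h2, h3, h4, h5⟩, rfl⟩
        exact ⟨rfl, ⟨h2, h3⟩, h4, h5⟩
      · rintro ⟨rfl, ⟨h2, h3⟩, h4, h5⟩
        exact ⟨⟨hM, h2, h3, h4, h5⟩, rfl⟩
    rw [hprod, Finset.card_product, Finset.card_product, Finset.card_singleton, one_mul]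
    congr 1
    · by_cases hcase : ℓ ≤ M.card
      · have he : M.powerset.filter (fun C => M.card = ℓ + C.card)
            = M.powersetCard (M.card - ℓ) := by
          rw [Finset.powersetCard_eq_filter]
          refine Finset.filter_congr fun C hC => ?_
          have := Finset.card_le_card (Finset.mem_powerset.1 hC)
          constructor <;> intro h <;> omega
        rw [he, Finset.card_powersetCard, Nat.choose_symm hcase]
      · rw [Finset.filter_eq_empty_iff.2 (fun C hC => by
          have := Finset.card_le_card (Finset.mem_powerset.1 hC); omega),
          Finset.card_empty, eq_comm]
        exact Nat.choose_eq_zero_of_lt (by omega)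
    · have hu : (univ \ msupp M).card = k - 2 * M.card := by
        rw [Finset.card_sdiff_of_subset (subset_univ _), card_univ, Fintype.card_fin, card_msupp hM]
      by_cases hcase : r - 2 * ℓ ≤ (univ \ msupp M).card
      · have he : (univ \ msupp M).powerset.filter
            (fun E => ((univ \ msupp M) \ E).card = r - 2 * ℓ)
            = (univ \ msupp M).powersetCard ((univ \ msupp M).card - (r - 2 * ℓ)) := by
          rw [Finset.powersetCard_eq_filter]
          refine Finset.filter_congr fun E hE => ?_
          have h1 := Finset.card_le_card (Finset.mem_powerset.1 hE)
          rw [Finset.card_sdiff_of_subset (Finset.mem_powerset.1 hE)]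
          constructor <;> intro h <;> omega
        rw [he, Finset.card_powersetCard, Nat.choose_symm hcase, hu]
      · rw [Finset.filter_eq_empty_iff.2 (fun E hE => by
          have := Finset.card_le_card (Finset.sdiff_subset (s := univ \ msupp M) (t := E))
          omega), Finset.card_empty, eq_comm]
        exact Nat.choose_eq_zero_of_lt (by omega)
  have step2 : T.card = ∑ m ∈ Finset.range (k + 1),
      k.choose (2 * m) * Nat.doubleFactorial (2 * m - 1) *
        (m.choose ℓ * (k - 2 * m).choose (r - 2 * ℓ)) := by
    have hmaps : ∀ y ∈ T, y.1 ∈ (univ.filter fun M : Finset (Fin k × Fin k) => isM M) := by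
      intro y hy
      rw [mem_filter]
      exact ⟨mem_univ _, ((hTmem y).1 hy).1⟩
    rw [Finset.card_eq_sum_card_fiberwise hmaps]
    have hsum : ∑ M ∈ (univ.filter fun M : Finset (Fin k × Fin k) => isM M),
        (T.filter fun y => y.1 = M).card
        = ∑ M ∈ (univ.filter fun M : Finset (Fin k × Fin k) => isM M),
          (M.card.choose ℓ * (k - 2 * M.card).choose (r - 2 * ℓ)) :=
      Finset.sum_congr rfl fun M hM => fiber M (mem_filter.1 hM).2
    rw [hsum]
    have hmaps2 : ∀ M ∈ (univ.filter fun M : Finset (Fin k × Fin k) => isM M),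
        M.card ∈ Finset.range (k + 1) := by
      intro M hM
      have h1 := card_msupp (mem_filter.1 hM).2
      have h2 : (msupp M).card ≤ k := by
        simpa using Finset.card_le_univ (msupp M)
      rw [Finset.mem_range]
      omega
    rw [← Finset.sum_fiberwise_of_maps_to hmaps2]
    refine Finset.sum_congr rfl fun m _ => ?_
    rw [Finset.sum_congr rfl (fun M hM => by
        rw [(mem_filter.1 hM).2]),
      Finset.sum_const, smul_eq_mul, Finset.filter_filter]
    rw [match_card m]
  rw [step2]
  -- reindex the sum
  have hsub : (Finset.range ((k - r) / 2 + 1)).image (fun c => ℓ + c)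
      ⊆ Finset.range (k + 1) := by
    intro m hm
    obtain ⟨c, hc, rfl⟩ := Finset.mem_image.1 hm
    rw [Finset.mem_range] at *
    omega
  have hzero : ∀ m ∈ Finset.range (k + 1),
      m ∉ (Finset.range ((k - r) / 2 + 1)).image (fun c => ℓ + c) →
      k.choose (2 * m) * Nat.doubleFactorial (2 * m - 1) *
        (m.choose ℓ * (k - 2 * m).choose (r - 2 * ℓ)) = 0 := by
    intro m _ hm
    rw [Finset.mem_image] at hm
    push_neg at hm
    by_cases h1 : m < ℓ
    · rw [Nat.choose_eq_zero_of_lt h1, zero_mul, mul_zero]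
    · push_neg at h1
      have hc : ¬ (m - ℓ ∈ Finset.range ((k - r) / 2 + 1)) := by
        intro hc; exact hm _ hc (by omega)
      rw [Finset.mem_range] at hc
      push_neg at hc
      by_cases h2 : k < 2 * m
      · rw [Nat.choose_eq_zero_of_lt h2, zero_mul, zero_mul]
      · push_neg at h2
        rw [Nat.choose_eq_zero_of_lt (show k - 2 * m < r - 2 * ℓ by omega), mul_zero, mul_zero]
  rw [← Finset.sum_subset hsub hzero,
    Finset.sum_image (fun a _ b _ h => by omega)]
  refine Finset.sum_congr rfl fun c hc => ?_
  rw [Finset.mem_range] at hc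
  have hc2 : 2 * c ≤ k - r := by omega
  rw [← term_eq k r ℓ c hℓ hr hc2]
  ring
end

section
/- Let b_i = Σ_{m=0}^{⌊i/2⌋} C(i, 2m)·(2m)!/m! and let rb_k = Σ_{i=0}^{k} C(k, i)·b_i (the number of vertically symmetric rook-Brauer diagrams on k vertices). Then, as formal power series over ℚ, exp(X² + 2X) = Σ_{k≥0} rb_k · X^k/k!, where exp denotes the formal exponential (substitution of the power series X² + 2X, which has zero constant term, into the formal exponential series Σ_n X^n/n!). -/
open Finset PowerSeries

/-- `b_i`, the number of vertically symmetric Brauer diagrams on `i` strands. -/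
def brauerModelDim (i : ℕ) : ℕ :=
  ∑ m ∈ Finset.range (i / 2 + 1),
    Nat.choose i (2 * m) * ((2 * m).factorial / m.factorial)

/-- `rb_k = Σ_{i=0}^{k} C(k,i)·b_i`, the number of vertically symmetric
rook-Brauer diagrams on `k` vertices. -/
def rookBrauerModelDim (k : ℕ) : ℕ :=
  ∑ i ∈ Finset.range (k + 1), Nat.choose k i * brauerModelDim i

lemma mySumChooseMul (n k : ℕ) (hk : k ≤ n) :
    ∑ i ∈ Finset.range (n+1), n.choose i * i.choose k = n.choose k * 2^(n-k) := by
  rw [Finset.range_eq_Ico, ← Finset.sum_Ico_consecutive _ (Nat.zero_le k) (by omega : k ≤ n+1)]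
  have h1 : ∑ i ∈ Finset.Ico 0 k, n.choose i * i.choose k = 0 := by
    apply Finset.sum_eq_zero; intro i hi
    simp only [Finset.mem_Ico] at hi
    rw [Nat.choose_eq_zero_of_lt hi.2, Nat.mul_zero]
  rw [h1, zero_add]
  have h2 : ∀ i ∈ Finset.Ico k (n+1), n.choose i * i.choose k
      = n.choose k * (n-k).choose (i-k) := by
    intro i hi; simp only [Finset.mem_Ico] at hi
    exact Nat.choose_mul hi.1
  rw [Finset.sum_congr rfl h2, ← Finset.mul_sum]
  congr 1
  rw [show Finset.Ico k (n+1) = Finset.Ico k (k + (n-k+1)) by congr 1; omega,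
    Finset.sum_Ico_eq_sum_range]
  simp only [Nat.add_sub_cancel_left]
  exact Nat.sum_range_choose (n-k)

lemma myRbEq (n : ℕ) : rookBrauerModelDim n
    = ∑ a ∈ Finset.range (n/2+1),
        n.choose (2*a) * ((2*a).factorial / a.factorial) * 2^(n-2*a) := by
  unfold rookBrauerModelDim brauerModelDim
  have step : ∀ i ∈ Finset.range (n+1),
      n.choose i * ∑ a ∈ Finset.range (i/2+1), i.choose (2*a) * ((2*a).factorial/a.factorial)
      = ∑ a ∈ Finset.range (n/2+1),
          n.choose i * (i.choose (2*a) * ((2*a).factorial/a.factorial)) := by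
    intro i hi
    simp only [Finset.mem_range] at hi
    rw [Finset.mul_sum]
    refine Finset.sum_subset (fun a ha => ?_) (fun a ha hna => ?_)
    · simp only [Finset.mem_range] at ha ⊢; omega
    · simp only [Finset.mem_range] at ha hna
      rw [Nat.choose_eq_zero_of_lt (show i < 2*a by omega)]; ring
  rw [Finset.sum_congr rfl step, Finset.sum_comm]
  apply Finset.sum_congr rfl
  intro a ha
  simp only [Finset.mem_range] at ha
  have key := mySumChooseMul n (2*a) (by omega)
  calc ∑ i ∈ Finset.range (n+1), n.choose i * (i.choose (2*a) * ((2*a).factorial/a.factorial))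
      = (∑ i ∈ Finset.range (n+1), n.choose i * i.choose (2*a))
          * ((2*a).factorial/a.factorial) := by
        rw [Finset.sum_mul]; apply Finset.sum_congr rfl; intros; ring
    _ = _ := by rw [key]; ring

lemma myCoeffGPow (n m : ℕ) (h : m ≤ n) :
    PowerSeries.coeff n (((PowerSeries.X : PowerSeries ℚ)^2 + 2*PowerSeries.X)^m) =
    (m.choose (n - m) : ℚ) * 2 ^ (m - (n - m)) := by
  have hg : ((PowerSeries.X : PowerSeries ℚ)^2 + 2*PowerSeries.X)
      = PowerSeries.X * ((Polynomial.X + Polynomial.C (2:ℚ) : Polynomial ℚ) : PowerSeries ℚ) := by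
    rw [Polynomial.coe_add, Polynomial.coe_X, Polynomial.coe_C, map_ofNat]
    ring
  rw [hg, mul_pow, ← Polynomial.coe_pow, PowerSeries.coeff_X_pow_mul' _ m n, if_pos h,
    Polynomial.coeff_coe, Polynomial.coeff_X_add_C_pow]
  ring

/-- The exponential generating function identity
`exp(X² + 2X) = Σ_{k≥0} rb_k · X^k/k!`. -/
theorem symmetric_rook_brauer_egf :
    PowerSeries.constantCoeff
        ((PowerSeries.X : PowerSeries ℚ) ^ 2 + 2 * PowerSeries.X) = 0 ∧
    expComp ((PowerSeries.X : PowerSeries ℚ) ^ 2 + 2 * PowerSeries.X)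
      = PowerSeries.mk (fun k => (rookBrauerModelDim k : ℚ) / (k.factorial : ℚ)) := by
  constructor
  · simp
  · ext n
    rw [expComp, PowerSeries.coeff_mk, PowerSeries.coeff_mk]
    have h1 : ∀ m ∈ Finset.range (n+1),
        (PowerSeries.coeff n (((PowerSeries.X : PowerSeries ℚ)^2 + 2*PowerSeries.X)^m))
          / (m.factorial : ℚ)
        = (m.choose (n-m) : ℚ) * 2 ^ (m - (n-m)) / (m.factorial : ℚ) := by
      intro m hm; simp only [Finset.mem_range] at hm
      rw [myCoeffGPow n m (by omega)]
    rw [Finset.sum_congr rfl h1]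
    have h2 : ∑ m ∈ Finset.range (n+1),
        (m.choose (n-m) : ℚ) * 2 ^ (m - (n-m)) / (m.factorial : ℚ)
        = ∑ a ∈ Finset.range (n+1),
        ((n-a).choose a : ℚ) * 2 ^ (n - 2*a) / (((n-a).factorial : ℚ)) := by
      rw [← Finset.sum_range_reflect]
      refine Finset.sum_congr rfl fun a ha => ?_
      simp only [Finset.mem_range] at ha
      rw [show n + 1 - 1 - a = n - a by omega, show n - (n - a) = a by omega,
        show (n - a) - a = n - 2*a by omega]
    rw [h2]
    have h3 : ∑ a ∈ Finset.range (n+1),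
        ((n-a).choose a : ℚ) * 2 ^ (n - 2*a) / (((n-a).factorial : ℚ))
        = ∑ a ∈ Finset.range (n/2+1),
        ((n-a).choose a : ℚ) * 2 ^ (n - 2*a) / (((n-a).factorial : ℚ)) := by
      rw [eq_comm]
      refine Finset.sum_subset (fun a ha => ?_) (fun a ha hna => ?_)
      · simp only [Finset.mem_range] at ha ⊢; omega
      · simp only [Finset.mem_range] at ha hna
        rw [Nat.choose_eq_zero_of_lt (show n - a < a by omega)]
        simp
    rw [h3, myRbEq]
    have hfact : (n.factorial : ℚ) ≠ 0 := Nat.cast_ne_zero.2 (Nat.factorial_ne_zero n)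
    rw [eq_div_iff hfact, Finset.sum_mul, Nat.cast_sum]
    apply Finset.sum_congr rfl
    intro a ha; simp only [Finset.mem_range] at ha
    have ha2 : 2*a ≤ n := by omega
    have hdvd : a.factorial ∣ (2*a).factorial := Nat.factorial_dvd_factorial (by omega)
    have hnat : (n-a).choose a * n.factorial * a.factorial
        = n.choose (2*a) * (2*a).factorial * (n-a).factorial := by
      have key : n.choose (2*a) * (2*a).choose a = n.choose a * (n-a).choose a := by
        have h := Nat.choose_mul (n := n) (k := 2*a) (s := a) (by omega)
        rw [h]; congr 2; omega
      have f1 : (2*a).choose a * a.factorial * a.factorial = (2*a).factorial := by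
        have h := Nat.choose_mul_factorial_mul_factorial (n := 2*a) (k := a) (by omega)
        rw [show 2*a - a = a by omega] at h; exact h
      have f2 : n.choose a * a.factorial * (n-a).factorial = n.factorial :=
        Nat.choose_mul_factorial_mul_factorial (by omega)
      calc (n-a).choose a * n.factorial * a.factorial
          = (n-a).choose a * (n.choose a * a.factorial * (n-a).factorial) * a.factorial := by
            rw [f2]
        _ = n.choose a * (n-a).choose a * a.factorial * a.factorial * (n-a).factorial := by ring
        _ = n.choose (2*a) * (2*a).choose a * a.factorial * a.factorial * (n-a).factorial := by
            rw [key]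
        _ = n.choose (2*a) * ((2*a).choose a * a.factorial * a.factorial) * (n-a).factorial := by
            ring
        _ = _ := by rw [f1]
    have hcastdiv : (((2*a).factorial / a.factorial : ℕ) : ℚ)
        = ((2*a).factorial : ℚ) / (a.factorial : ℚ) :=
      Nat.cast_div hdvd (Nat.cast_ne_zero.2 (Nat.factorial_ne_zero a))
    push_cast [hcastdiv]
    have hna : ((n-a).factorial : ℚ) ≠ 0 := Nat.cast_ne_zero.2 (Nat.factorial_ne_zero _)
    have hfa : ((a).factorial : ℚ) ≠ 0 := Nat.cast_ne_zero.2 (Nat.factorial_ne_zero _)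
    have hQ := congrArg (fun x : ℕ => (x : ℚ)) hnat
    push_cast at hQ
    field_simp
    linear_combination hQ
end

section
/- Fix k, ℓ ∈ ℕ with 2ℓ ≤ k. The number of cup diagrams on Fin k having exactly ℓ arcs equals C(k, ℓ) − C(k, ℓ−1), where by convention C(k, −1) = 0 (so in particular the count, which equals the number of vertically symmetric Temperley–Lieb diagrams on k strands of rank k − 2ℓ, is C(k,ℓ) − C(k,ℓ−1) as an integer). -/
open Finset

/-- A cup diagram on `Fin k`: a set of arcs `(a, b)` with `a < b` that are
pairwise disjoint, noncrossing, and such that no unmatched element lies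
strictly between the endpoints of an arc. -/
def IsCupDiagram {k : ℕ} (M : Finset (Fin k × Fin k)) : Prop :=
  (∀ p ∈ M, p.1 < p.2) ∧
  (∀ p ∈ M, ∀ q ∈ M, p ≠ q →
    p.1 ≠ q.1 ∧ p.1 ≠ q.2 ∧ p.2 ≠ q.1 ∧ p.2 ≠ q.2) ∧
  (∀ p ∈ M, ∀ q ∈ M, ¬(p.1 < q.1 ∧ q.1 < p.2 ∧ p.2 < q.2)) ∧
  (∀ x : Fin k, (∀ p ∈ M, x ≠ p.1 ∧ x ≠ p.2) →
    ∀ p ∈ M, ¬(p.1 < x ∧ x < p.2))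

noncomputable instance {k : ℕ} : DecidablePred (IsCupDiagram (k := k)) :=
  fun _ => Classical.dec _

namespace CupAux

def ends {k : ℕ} (M : Finset (Fin k × Fin k)) : Finset (Fin k) :=
  M.biUnion fun p => {p.1, p.2}

lemma mem_ends {k : ℕ} {M : Finset (Fin k × Fin k)} {x : Fin k} :
    x ∈ ends M ↔ ∃ p ∈ M, x = p.1 ∨ x = p.2 := by
  simp [ends]

lemma card_ends {k : ℕ} {M : Finset (Fin k × Fin k)} (hM : IsCupDiagram M) :
    (ends M).card = 2 * M.card := by
  rw [ends, card_biUnion]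
  · rw [Finset.sum_congr rfl (fun p hp => ?_), Finset.sum_const, smul_eq_mul, mul_comm]
    rw [card_insert_of_notMem (by simp [(hM.1 p hp).ne]), card_singleton]
  · intro p hp q hq hne
    have h := hM.2.1 p hp q hq hne
    simp only [disjoint_insert_left, disjoint_insert_right, disjoint_singleton, mem_insert,
      mem_singleton]
    push_neg
    tauto

lemma two_mul_card_le {k : ℕ} {M : Finset (Fin k × Fin k)} (hM : IsCupDiagram M) :
    2 * M.card ≤ k := by
  calc 2 * M.card = (ends M).card := (card_ends hM).symm
    _ ≤ (univ : Finset (Fin k)).card := card_le_card (subset_univ _)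
    _ = k := by simp



def pemb (n : ℕ) : Fin n × Fin n ↪ Fin (n+1) × Fin (n+1) :=
  ⟨fun p => (p.1.castSucc, p.2.castSucc), fun p q h => by
    simp only [Prod.ext_iff, Fin.castSucc_inj] at h
    exact Prod.ext h.1 h.2⟩

@[simp] lemma pemb_apply (n : ℕ) (p : Fin n × Fin n) :
    pemb n p = (p.1.castSucc, p.2.castSucc) := rfl

lemma mem_map_pemb {n : ℕ} {N : Finset (Fin n × Fin n)} {p : Fin (n+1) × Fin (n+1)} :
    p ∈ N.map (pemb n) ↔ ∃ q ∈ N, q.1.castSucc = p.1 ∧ q.2.castSucc = p.2 := by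
  simp [pemb_apply, Finset.mem_map, Prod.ext_iff]

lemma snd_ne_last {n : ℕ} {N : Finset (Fin n × Fin n)} {p : Fin (n+1) × Fin (n+1)}
    (hp : p ∈ N.map (pemb n)) : p.1 ≠ Fin.last n ∧ p.2 ≠ Fin.last n := by
  rw [mem_map_pemb] at hp
  obtain ⟨q, _, h1, h2⟩ := hp
  exact ⟨h1 ▸ (Fin.castSucc_lt_last q.1).ne, h2 ▸ (Fin.castSucc_lt_last q.2).ne⟩

lemma isCup_map_iff {n : ℕ} {N : Finset (Fin n × Fin n)} :
    IsCupDiagram (N.map (pemb n)) ↔ IsCupDiagram N := by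
  constructor
  · rintro ⟨h1, h2, h3, h4⟩
    have mem : ∀ q ∈ N, pemb n q ∈ N.map (pemb n) := fun q hq => Finset.mem_map_of_mem _ hq
    refine ⟨?_, ?_, ?_, ?_⟩
    · intro q hq
      have := h1 _ (mem q hq)
      simpa [pemb_apply, Fin.castSucc_lt_castSucc_iff] using this
    · intro p hp q hq hne
      have := h2 _ (mem p hp) _ (mem q hq) (fun hc => hne ((pemb n).injective hc))
      simpa [pemb_apply, Fin.castSucc_inj] using this
    · intro p hp q hq
      have := h3 _ (mem p hp) _ (mem q hq)
      simpa [pemb_apply, Fin.castSucc_lt_castSucc_iff] using this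
    · intro y hy q hq
      have hy' : ∀ p ∈ N.map (pemb n), y.castSucc ≠ p.1 ∧ y.castSucc ≠ p.2 := by
        intro p hp
        rw [mem_map_pemb] at hp
        obtain ⟨r, hr, e1, e2⟩ := hp
        have := hy r hr
        constructor
        · rw [← e1]; simp [Fin.castSucc_inj]; exact this.1
        · rw [← e2]; simp [Fin.castSucc_inj]; exact this.2
      have := h4 y.castSucc hy' _ (mem q hq)
      simpa [pemb_apply, Fin.castSucc_lt_castSucc_iff] using this
  · rintro ⟨h1, h2, h3, h4⟩
    refine ⟨?_, ?_, ?_, ?_⟩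
    · intro p hp
      rw [mem_map_pemb] at hp
      obtain ⟨q, hq, e1, e2⟩ := hp
      rw [← e1, ← e2, Fin.castSucc_lt_castSucc_iff]
      exact h1 q hq
    · intro p hp q hq hne
      rw [mem_map_pemb] at hp hq
      obtain ⟨p', hp', e1, e2⟩ := hp
      obtain ⟨q', hq', f1, f2⟩ := hq
      have hne' : p' ≠ q' := by
        rintro rfl
        exact hne (Prod.ext (e1.symm.trans f1) (e2.symm.trans f2))
      have := h2 p' hp' q' hq' hne'
      rw [← e1, ← e2, ← f1, ← f2]
      simp only [ne_eq, Fin.castSucc_inj]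
      exact this
    · intro p hp q hq
      rw [mem_map_pemb] at hp hq
      obtain ⟨p', hp', e1, e2⟩ := hp
      obtain ⟨q', hq', f1, f2⟩ := hq
      rw [← e1, ← e2, ← f1, ← f2]
      simp only [Fin.castSucc_lt_castSucc_iff]
      exact h3 p' hp' q' hq'
    · intro x hx p hp
      rw [mem_map_pemb] at hp
      obtain ⟨p', hp', e1, e2⟩ := hp
      rcases eq_or_ne x (Fin.last n) with rfl | hxl
      · rw [← e2]
        rintro ⟨-, hc⟩
        exact absurd hc (Fin.castSucc_lt_last p'.2).asymm
      · obtain ⟨y, rfl⟩ := Fin.exists_castSucc_eq.mpr hxl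
        have hy : ∀ q ∈ N, y ≠ q.1 ∧ y ≠ q.2 := by
          intro q hq
          have := hx _ (Finset.mem_map_of_mem (pemb n) hq)
          simp only [pemb_apply, Function.Embedding.coeFn_mk, ne_eq, Fin.castSucc_inj] at this
          exact this
        have := h4 y hy p' hp'
        rw [← e1, ← e2]
        simpa [Fin.castSucc_lt_castSucc_iff] using this
lemma card_bij1 (n ℓ : ℕ) :
    (univ.filter fun N : Finset (Fin n × Fin n) => IsCupDiagram N ∧ N.card = ℓ).card =
    (univ.filter fun M : Finset (Fin (n+1) × Fin (n+1)) =>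
      (IsCupDiagram M ∧ M.card = ℓ) ∧ ∀ p ∈ M, p.2 ≠ Fin.last n).card := by
  classical
  apply Finset.card_bij (fun N _ => N.map (pemb n))
  · intro N hN
    simp only [mem_filter, mem_univ, true_and] at hN ⊢
    exact ⟨⟨isCup_map_iff.mpr hN.1, by simp [hN.2]⟩, fun p hp => (snd_ne_last hp).2⟩
  · intro N₁ _ N₂ _ h
    exact Finset.map_injective _ h
  · intro M hM
    simp only [mem_filter, mem_univ, true_and] at hM
    obtain ⟨⟨hcup, hcard⟩, hlast⟩ := hM
    have hrange : ∀ p ∈ M, p ∈ Set.range (pemb n) := by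
      intro p hp
      obtain ⟨y2, e2⟩ := Fin.exists_castSucc_eq.mpr (hlast p hp)
      have h1l : p.1 ≠ Fin.last n := by
        intro hc
        have := hcup.1 p hp
        rw [hc] at this
        exact absurd (this.trans_le (Fin.le_last _)) (lt_irrefl _)
      obtain ⟨y1, e1⟩ := Fin.exists_castSucc_eq.mpr h1l
      exact ⟨(y1, y2), Prod.ext e1 e2⟩
    have hinj : Set.InjOn (pemb n) ((pemb n) ⁻¹' ↑M) := (pemb n).injective.injOn
    refine ⟨M.preimage (pemb n) hinj, ?_, ?_⟩
    · have hmapeq : (M.preimage (pemb n) hinj).map (pemb n) = M := by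
        rw [Finset.map_eq_image, Finset.image_preimage]
        exact Finset.filter_true_of_mem hrange
      simp only [mem_filter, mem_univ, true_and]
      constructor
      · rw [← isCup_map_iff, hmapeq]; exact hcup
      · have := congrArg Finset.card hmapeq
        rw [Finset.card_map] at this
        rw [this, hcard]
    · rw [Finset.map_eq_image, Finset.image_preimage]
      exact Finset.filter_true_of_mem hrange
lemma not_mem_ends_iff {k : ℕ} {N : Finset (Fin k × Fin k)} {x : Fin k} :
    x ∉ ends N ↔ ∀ p ∈ N, x ≠ p.1 ∧ x ≠ p.2 := by
  rw [mem_ends]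
  push_neg
  constructor
  · intro h p hp
    have := h p hp
    tauto
  · intro h p hp
    have := h p hp
    tauto

lemma unm_ne (n m : ℕ) (h2 : 2 * m < n) {N : Finset (Fin n × Fin n)}
    (hN : N ∈ univ.filter fun N : Finset (Fin n × Fin n) => IsCupDiagram N ∧ N.card = m) :
    (univ \ ends N).Nonempty := by
  rw [Finset.mem_filter] at hN
  rw [← Finset.card_pos, Finset.card_sdiff_of_subset (Finset.subset_univ _), card_ends hN.2.1,
    hN.2.2, Finset.card_univ, Fintype.card_fin]
  omega

lemma last_not_in_map {n : ℕ} {N : Finset (Fin n × Fin n)} {x : Fin (n+1)} :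
    (x, Fin.last n) ∉ N.map (pemb n) := by
  intro hc
  exact (snd_ne_last hc).2 rfl

lemma card_bij2 (n m : ℕ) (h2 : 2 * m < n) :
    (univ.filter fun N : Finset (Fin n × Fin n) => IsCupDiagram N ∧ N.card = m).card =
    (univ.filter fun M : Finset (Fin (n+1) × Fin (n+1)) =>
      (IsCupDiagram M ∧ M.card = m + 1) ∧ ¬ ∀ p ∈ M, p.2 ≠ Fin.last n).card := by
  classical
  apply Finset.card_bij (fun N hN =>
    insert (((univ \ ends N).max' (unm_ne n m h2 hN)).castSucc, Fin.last n) (N.map (pemb n)))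
  · -- maps into target
    intro N hN
    set a := (univ \ ends N).max' (unm_ne n m h2 hN) with ha_def
    have haU : a ∈ univ \ ends N := Finset.max'_mem _ _
    have haunm : ∀ p ∈ N, a ≠ p.1 ∧ a ≠ p.2 :=
      not_mem_ends_iff.mp (Finset.mem_sdiff.mp haU).2
    have hamax : ∀ y : Fin n, y ∉ ends N → y ≤ a :=
      fun y hy => Finset.le_max' _ y (Finset.mem_sdiff.mpr ⟨Finset.mem_univ _, hy⟩)
    rw [Finset.mem_filter] at hN
    obtain ⟨-, hcup, hcard⟩ := hN
    obtain ⟨h1, h2', h3, h4⟩ := hcup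
    have hmem : ∀ p ∈ insert (a.castSucc, Fin.last n) (N.map (pemb n)),
        p = (a.castSucc, Fin.last n) ∨ ∃ q ∈ N, (q.1.castSucc, q.2.castSucc) = p := by
      intro p hp
      rcases Finset.mem_insert.mp hp with hp | hp
      · exact Or.inl hp
      · right
        rw [mem_map_pemb] at hp
        obtain ⟨q, hq, e1, e2⟩ := hp
        exact ⟨q, hq, Prod.ext e1 e2⟩
    simp only [Finset.mem_filter, Finset.mem_univ, true_and]
    refine ⟨⟨⟨?_, ?_, ?_, ?_⟩, ?_⟩, ?_⟩
    · -- cond 1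
      intro p hp
      rcases hmem p hp with rfl | ⟨q, hq, rfl⟩
      · exact Fin.castSucc_lt_last a
      · exact Fin.castSucc_lt_castSucc_iff.mpr (h1 q hq)
    · -- cond 2
      intro p hp q hq hne
      rcases hmem p hp with rfl | ⟨p', hp', rfl⟩ <;>
        rcases hmem q hq with rfl | ⟨q', hq', rfl⟩
      · exact absurd rfl hne
      · have := haunm q' hq'
        refine ⟨?_, ?_, ?_, ?_⟩ <;> simp only [ne_eq, Fin.castSucc_inj]
        · exact this.1
        · exact this.2
        · exact fun hc => absurd hc.symm (Fin.castSucc_lt_last q'.1).ne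
        · exact fun hc => absurd hc.symm (Fin.castSucc_lt_last q'.2).ne
      · have := haunm p' hp'
        refine ⟨?_, ?_, ?_, ?_⟩ <;> simp only [ne_eq, Fin.castSucc_inj]
        · exact fun hc => this.1 hc.symm
        · exact (Fin.castSucc_lt_last p'.1).ne
        · exact fun hc => this.2 hc.symm
        · exact (Fin.castSucc_lt_last p'.2).ne
      · have hne' : p' ≠ q' := by
          rintro rfl; exact hne rfl
        have := h2' p' hp' q' hq' hne'
        refine ⟨?_, ?_, ?_, ?_⟩ <;> simp only [ne_eq, Fin.castSucc_inj] <;> tauto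
    · -- cond 3
      intro p hp q hq
      rcases hmem p hp with rfl | ⟨p', hp', rfl⟩ <;>
        rcases hmem q hq with rfl | ⟨q', hq', rfl⟩
      · rintro ⟨hc, -⟩; exact absurd hc (lt_irrefl _)
      · rintro ⟨-, -, hc⟩; exact absurd hc (Fin.castSucc_lt_last q'.2).asymm
      · rintro ⟨hc1, hc2, -⟩
        rw [Fin.castSucc_lt_castSucc_iff] at hc1 hc2
        exact h4 a (haunm) p' hp' ⟨hc1, hc2⟩
      · simp only [Fin.castSucc_lt_castSucc_iff]
        exact h3 p' hp' q' hq'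
    · -- cond 4
      intro x hx p hp
      have hxA := hx _ (Finset.mem_insert_self _ _)
      have hxl : x ≠ Fin.last n := hxA.2
      obtain ⟨y, rfl⟩ := Fin.exists_castSucc_eq.mpr hxl
      have hyunm : ∀ q ∈ N, y ≠ q.1 ∧ y ≠ q.2 := by
        intro q hq
        have := hx _ (Finset.mem_insert_of_mem (Finset.mem_map_of_mem (pemb n) hq))
        simp only [pemb_apply, Function.Embedding.coeFn_mk, ne_eq, Fin.castSucc_inj] at this
        exact this
      have hya : y ≤ a := hamax y (not_mem_ends_iff.mpr hyunm)
      rcases hmem p hp with rfl | ⟨q, hq, rfl⟩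
      · rintro ⟨hc, -⟩
        rw [Fin.castSucc_lt_castSucc_iff] at hc
        exact absurd hya (not_le.mpr hc)
      · simp only [Fin.castSucc_lt_castSucc_iff]
        exact h4 y hyunm q hq
    · -- card
      rw [Finset.card_insert_of_notMem last_not_in_map, Finset.card_map, hcard]
    · -- last is matched
      push_neg
      exact ⟨_, Finset.mem_insert_self _ _, rfl⟩
  · -- injective
    intro N₁ h₁ N₂ h₂ heq
    set a₁ := (univ \ ends N₁).max' (unm_ne n m h2 h₁)
    set a₂ := (univ \ ends N₂).max' (unm_ne n m h2 h₂)
    have hA : a₁.castSucc = a₂.castSucc := by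
      have hmem : (a₁.castSucc, Fin.last n) ∈
          insert (a₂.castSucc, Fin.last n) (N₂.map (pemb n)) := by
        rw [← heq]; exact Finset.mem_insert_self _ _
      rcases Finset.mem_insert.mp hmem with hc | hc
      · exact congrArg Prod.fst hc
      · exact absurd hc last_not_in_map
    apply Finset.map_injective (pemb n)
    have e1 : N₁.map (pemb n) =
        (insert (a₁.castSucc, Fin.last n) (N₁.map (pemb n))).erase (a₁.castSucc, Fin.last n) :=
      (Finset.erase_insert last_not_in_map).symm
    have e2 : N₂.map (pemb n) =
        (insert (a₂.castSucc, Fin.last n) (N₂.map (pemb n))).erase (a₂.castSucc, Fin.last n) :=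
      (Finset.erase_insert last_not_in_map).symm
    rw [e1, e2, heq, hA]
  · -- surjective
    intro M hM
    rw [Finset.mem_filter] at hM
    obtain ⟨-, ⟨hcup, hcard⟩, hlast⟩ := hM
    push_neg at hlast
    obtain ⟨p₀, hp₀, hp₀2⟩ := hlast
    obtain ⟨h1, h2', h3, h4⟩ := hcup
    -- every other arc avoids `last`
    have hother : ∀ q ∈ M.erase p₀, q.1 ≠ Fin.last n ∧ q.2 ≠ Fin.last n := by
      intro q hq
      have hqM := Finset.mem_of_mem_erase hq
      have hqne : q ≠ p₀ := Finset.ne_of_mem_erase hq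
      have hd := h2' q hqM p₀ hp₀ hqne
      have hq2 : q.2 ≠ Fin.last n := by rw [← hp₀2]; exact hd.2.2.2
      refine ⟨?_, hq2⟩
      intro hc
      have := h1 q hqM
      rw [hc] at this
      exact absurd (this.trans_le (Fin.le_last _)) (lt_irrefl _)
    have hrange : ∀ q ∈ M.erase p₀, q ∈ Set.range (pemb n) := by
      intro q hq
      obtain ⟨y1, e1⟩ := Fin.exists_castSucc_eq.mpr (hother q hq).1
      obtain ⟨y2, e2⟩ := Fin.exists_castSucc_eq.mpr (hother q hq).2
      exact ⟨(y1, y2), Prod.ext e1 e2⟩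
    have hinj : Set.InjOn (pemb n) ((pemb n) ⁻¹' ↑(M.erase p₀)) := (pemb n).injective.injOn
    set N := (M.erase p₀).preimage (pemb n) hinj with hN_def
    have hmapeq : N.map (pemb n) = M.erase p₀ := by
      rw [Finset.map_eq_image, Finset.image_preimage]
      exact Finset.filter_true_of_mem hrange
    have hcardN : N.card = m := by
      have := congrArg Finset.card hmapeq
      rw [Finset.card_map, Finset.card_erase_of_mem hp₀, hcard] at this
      simpa using this
    -- p₀.1 = castSucc b
    have hp₀1l : p₀.1 ≠ Fin.last n := by
      intro hc
      have := h1 p₀ hp₀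
      rw [hc] at this
      exact absurd (this.trans_le (Fin.le_last _)) (lt_irrefl _)
    obtain ⟨b, hb⟩ := Fin.exists_castSucc_eq.mpr hp₀1l
    -- membership in N in terms of M
    have hmemN : ∀ q : Fin n × Fin n, q ∈ N ↔ (q.1.castSucc, q.2.castSucc) ∈ M.erase p₀ := by
      intro q
      rw [hN_def, Finset.mem_preimage]
      rfl
    -- N is a cup diagram
    have hcupM' : IsCupDiagram (M.erase p₀) := by
      refine ⟨fun q hq => h1 q (Finset.mem_of_mem_erase hq),
        fun p hp q hq hne => h2' p (Finset.mem_of_mem_erase hp) q (Finset.mem_of_mem_erase hq) hne,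
        fun p hp q hq => h3 p (Finset.mem_of_mem_erase hp) q (Finset.mem_of_mem_erase hq),
        ?_⟩
      intro x hx q hq
      have hqM := Finset.mem_of_mem_erase hq
      rcases eq_or_ne x p₀.1 with rfl | hx1
      · -- x = p₀.1 : would cross p₀
        rintro ⟨hc1, hc2⟩
        have hq2lt : q.2 < p₀.2 := by
          rw [hp₀2]
          rcases lt_or_eq_of_le (Fin.le_last q.2) with h | h
          · exact h
          · exact absurd h (hother q hq).2
        exact h3 q hqM p₀ hp₀ ⟨hc1, hc2, hq2lt⟩
      · rcases eq_or_ne x p₀.2 with rfl | hx2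
        · rintro ⟨-, hc2⟩
          rw [hp₀2] at hc2
          exact absurd (hc2.trans_le (Fin.le_last _)) (lt_irrefl _)
        · -- x unmatched in M
          have hxM : ∀ p ∈ M, x ≠ p.1 ∧ x ≠ p.2 := by
            intro p hp
            rcases eq_or_ne p p₀ with rfl | hne
            · exact ⟨hx1, hx2⟩
            · exact hx p (Finset.mem_erase.mpr ⟨hne, hp⟩)
          exact h4 x hxM q hqM
    have hcupN : IsCupDiagram N := by
      rw [← isCup_map_iff, hmapeq]
      exact hcupM'
    have hNmem : N ∈ univ.filter fun N : Finset (Fin n × Fin n) =>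
        IsCupDiagram N ∧ N.card = m :=
      Finset.mem_filter.mpr ⟨Finset.mem_univ _, hcupN, hcardN⟩
    refine ⟨N, hNmem, ?_⟩
    -- show max' (univ \ ends N) = b
    have hbU : b ∉ ends N := by
      rw [not_mem_ends_iff]
      intro q hq
      have hqM' := (hmemN q).mp hq
      have hqM := Finset.mem_of_mem_erase hqM'
      have hqne : q.1.castSucc ≠ p₀.1 ∧ q.1.castSucc ≠ p₀.2 ∧
          q.2.castSucc ≠ p₀.1 ∧ q.2.castSucc ≠ p₀.2 := by
        have hd := h2' (q.1.castSucc, q.2.castSucc) hqM p₀ hp₀ (Finset.ne_of_mem_erase hqM')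
        exact hd
      constructor
      · intro hc
        exact hqne.1 (by rw [← hb, hc])
      · intro hc
        exact hqne.2.2.1 (by rw [← hb, hc])
    have hbmax : ∀ y : Fin n, y ∉ ends N → y ≤ b := by
      intro y hy
      by_contra hc
      push_neg at hc
      -- castSucc y unmatched in M but strictly inside p₀
      have hyunmM : ∀ p ∈ M, y.castSucc ≠ p.1 ∧ y.castSucc ≠ p.2 := by
        intro p hp
        rcases eq_or_ne p p₀ with rfl | hne
        · constructor
          · rw [← hb]
            simp only [ne_eq, Fin.castSucc_inj]
            exact ne_of_gt hc
          · rw [hp₀2]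
            exact (Fin.castSucc_lt_last y).ne
        · have hpM' : p ∈ M.erase p₀ := Finset.mem_erase.mpr ⟨hne, hp⟩
          obtain ⟨q, hq⟩ := hrange p hpM'
          have hqN : q ∈ N := (hmemN q).mpr (by
            have : (q.1.castSucc, q.2.castSucc) = p := hq
            rw [this]; exact hpM')
          have := not_mem_ends_iff.mp hy q hqN
          rw [← hq]
          constructor
          · simp only [pemb_apply, Function.Embedding.coeFn_mk, ne_eq, Fin.castSucc_inj]
            exact this.1
          · simp only [pemb_apply, Function.Embedding.coeFn_mk, ne_eq, Fin.castSucc_inj]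
            exact this.2
      apply h4 _ hyunmM p₀ hp₀
      constructor
      · rw [← hb, Fin.castSucc_lt_castSucc_iff]
        exact hc
      · rw [hp₀2]
        exact Fin.castSucc_lt_last y
    have hmax : (univ \ ends N).max' (unm_ne n m h2 hNmem) = b := by
      apply le_antisymm
      · apply Finset.max'_le
        intro y hy
        exact hbmax y (Finset.mem_sdiff.mp hy).2
      · exact Finset.le_max' _ b (Finset.mem_sdiff.mpr ⟨Finset.mem_univ _, hbU⟩)
    rw [hmax, hmapeq, hb]
    have : (p₀.1, Fin.last n) = p₀ := by
      rw [← hp₀2]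
    rw [this]
    exact Finset.insert_erase hp₀
lemma count_zero_of_gt (k ℓ : ℕ) (h : k < 2 * ℓ) :
    (univ.filter fun M : Finset (Fin k × Fin k) =>
      IsCupDiagram M ∧ M.card = ℓ).card = 0 := by
  rw [Finset.card_eq_zero, Finset.filter_eq_empty_iff]
  rintro M - ⟨hcup, hcard⟩
  have := two_mul_card_le hcup
  omega

lemma count_of_ell_zero (k : ℕ) :
    (univ.filter fun M : Finset (Fin k × Fin k) =>
      IsCupDiagram M ∧ M.card = 0).card = 1 := by
  have : (univ.filter fun M : Finset (Fin k × Fin k) =>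
      IsCupDiagram M ∧ M.card = 0) = {∅} := by
    ext M
    simp only [Finset.mem_filter, Finset.mem_univ, true_and, Finset.mem_singleton,
      Finset.card_eq_zero]
    constructor
    · rintro ⟨-, rfl⟩; rfl
    · rintro rfl
      exact ⟨⟨by simp, by simp, by simp, by simp⟩, rfl⟩
  rw [this, Finset.card_singleton]

lemma count_rec (n m : ℕ) (h2 : 2 * m < n) :
    (univ.filter fun M : Finset (Fin (n+1) × Fin (n+1)) =>
      IsCupDiagram M ∧ M.card = m + 1).card =
    (univ.filter fun N : Finset (Fin n × Fin n) =>
      IsCupDiagram N ∧ N.card = m + 1).card +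
    (univ.filter fun N : Finset (Fin n × Fin n) =>
      IsCupDiagram N ∧ N.card = m).card := by
  classical
  have hsplit := Finset.card_filter_add_card_filter_not
    (s := univ.filter fun M : Finset (Fin (n+1) × Fin (n+1)) =>
      IsCupDiagram M ∧ M.card = m + 1)
    (p := fun M => ∀ p ∈ M, p.2 ≠ Fin.last n)
  rw [Finset.filter_filter, Finset.filter_filter] at hsplit
  rw [← hsplit, card_bij1 n (m+1), card_bij2 n m h2]
end CupAux
/-- The number of cup diagrams on `Fin k` with exactly `ℓ` arcs is
`C(k, ℓ) − C(k, ℓ−1)` (with the convention `C(k, −1) = 0`). -/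
theorem cup_diagram_count (k ℓ : ℕ) (h : 2 * ℓ ≤ k) :
    ((Finset.univ.filter fun M : Finset (Fin k × Fin k) =>
        IsCupDiagram M ∧ M.card = ℓ).card : ℤ)
      = Nat.choose k ℓ - (if ℓ = 0 then 0 else Nat.choose k (ℓ - 1)) := by
  induction k generalizing ℓ with
  | zero =>
    have : ℓ = 0 := by omega
    subst this
    rw [CupAux.count_of_ell_zero]
    simp
  | succ n ih =>
    cases ℓ with
    | zero =>
      rw [CupAux.count_of_ell_zero]
      simp
    | succ m =>
      have h2 : 2 * m < n := by omega
      rw [CupAux.count_rec n m h2]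
      simp only [Nat.succ_ne_zero, if_false, Nat.add_sub_cancel]
      have pas1 : (((n+1).choose (m+1) : ℕ) : ℤ) = n.choose m + n.choose (m+1) := by
        exact_mod_cast Nat.choose_succ_succ n m
      rcases le_or_gt (2 * (m + 1)) n with hle | hgt
      · have e1 := ih (m+1) hle
        have e2 := ih m (by omega)
        simp only [Nat.succ_ne_zero, if_false, Nat.add_sub_cancel] at e1
        cases m with
        | zero =>
          simp only [if_pos rfl] at e2
          have pas2 : (((n+1).choose 0 : ℕ) : ℤ) = n.choose 0 := by
            simp
          push_cast
          push_cast at e1 e2 pas1 pas2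
          linarith
        | succ m' =>
          simp only [Nat.succ_ne_zero, if_false, Nat.add_sub_cancel] at e2
          have pas2 : (((n+1).choose (m'+1) : ℕ) : ℤ) = n.choose m' + n.choose (m'+1) := by
            exact_mod_cast Nat.choose_succ_succ n m'
          push_cast
          push_cast at e1 e2 pas1 pas2
          linarith
      · have hn : n = 2 * m + 1 := by omega
        rw [CupAux.count_zero_of_gt n (m+1) (by omega)]
        have e2 := ih m (by omega)
        have sym : ((n.choose (m+1) : ℕ) : ℤ) = n.choose m := by
          subst hn
          have := Nat.choose_symm (n := 2*m+1) (k := m+1) (by omega)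
          have h' : 2*m+1 - (m+1) = m := by omega
          rw [h'] at this
          exact_mod_cast this.symm
        cases m with
        | zero =>
          simp only [if_pos rfl] at e2
          have pas2 : (((n+1).choose 0 : ℕ) : ℤ) = n.choose 0 := by simp
          push_cast
          push_cast at e2 pas1 pas2 sym
          linarith
        | succ m' =>
          simp only [Nat.succ_ne_zero, if_false, Nat.add_sub_cancel] at e2
          have pas2 : (((n+1).choose (m'+1) : ℕ) : ℤ) = n.choose m' + n.choose (m'+1) := by
            exact_mod_cast Nat.choose_succ_succ n m'
          push_cast
          push_cast at e2 pas1 pas2 sym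
          linarith
end
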